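/- arXiv:math/0111087 — 8 statements merged into one kernel-verified Lean document; each statement's English description precedes it below -/
import Mathlib

section
/- If a metric space X satisfies: for every d > 0 there exist n+1 uniformly bounded families U^0, ..., U^n of d-disjoint subsets of X whose union covers X, then for every d > 0 there exists a uniformly bounded cover V of X such that every ball of radius d meets at most n+1 members of V (i.e., V has d-multiplicity at most n+1), and conversely. -/
open Metric Set

/-- A family of subsets of a metric space is uniformly bounded if there is a uniform
bound on the diameters of its members. -/
def UnifBounded {X : Type*} [MetricSpace X] (𝔘 : Set (Set X)) : Prop :=
  ∃ R : ℝ, ∀ U ∈ 𝔘, ∀ x ∈ U, ∀ y ∈ U, dist x y ≤ R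

/-- A family of subsets is `d`-disjoint if any two distinct members are at distance at
least `d` from each other. -/
def DDisjoint {X : Type*} [MetricSpace X] (d : ℝ) (𝔘 : Set (Set X)) : Prop :=
  ∀ U ∈ 𝔘, ∀ V ∈ 𝔘, U ≠ V → ∀ x ∈ U, ∀ y ∈ V, d ≤ dist x y

/-- A family of subsets covers `X`. -/
def IsCover {X : Type*} [MetricSpace X] (𝔘 : Set (Set X)) : Prop :=
  ∀ x : X, ∃ U ∈ 𝔘, x ∈ U

/-- A cover has `d`-multiplicity at most `m` if every ball of radius `d` meets at most
`m` members of the cover. -/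
def DMultLE {X : Type*} [MetricSpace X] (d : ℝ) (m : ℕ) (𝔘 : Set (Set X)) : Prop :=
  ∀ x : X, {U | U ∈ 𝔘 ∧ (U ∩ Metric.ball x d).Nonempty}.encard ≤ (m : ℕ∞)

/-- Pigeonhole: a monotone `ℕ`-valued sequence starting at value `≥ 1` and with
`f (n+1) ≤ n+1` must stabilize at some step `i ≤ n`. -/
lemma exists_stab (f : ℕ → ℕ) (n : ℕ) (hmono : ∀ i, f i ≤ f (i + 1))
    (h0 : 1 ≤ f 0) (htop : f (n + 1) ≤ n + 1) : ∃ i ≤ n, f i = f (i + 1) := by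
  by_contra hc
  push_neg at hc
  have key : ∀ k, k ≤ n + 1 → k + 1 ≤ f k := by
    intro k
    induction k with
    | zero => intro _; simpa using h0
    | succ m ih =>
      intro hm
      have h1 : m + 1 ≤ f m := ih (by omega)
      have h2 : f m < f (m + 1) := lt_of_le_of_ne (hmono m) (hc m (by omega))
      omega
  have := key (n + 1) le_rfl
  omega

/-- Gromov's first definition of `asdim X ≤ n` (via `n+1` uniformly bounded `d`-disjoint
families covering `X`) is equivalent to Gromov's second definition (via uniformly bounded
covers of `d`-multiplicity at most `n+1`). -/
theorem asdim_families_iff_dmultiplicity (X : Type*) [MetricSpace X] (n : ℕ) :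
    (∀ d : ℝ, 0 < d → ∃ 𝔘 : Fin (n + 1) → Set (Set X),
        (∀ i, UnifBounded (𝔘 i) ∧ DDisjoint d (𝔘 i)) ∧ IsCover (⋃ i, 𝔘 i)) ↔
    (∀ d : ℝ, 0 < d → ∃ 𝔙 : Set (Set X),
        UnifBounded 𝔙 ∧ IsCover 𝔙 ∧ DMultLE d (n + 1) 𝔙) := by
  constructor
  · -- forward: families ⇒ multiplicity
    intro h d hd
    obtain ⟨𝔘, h𝔘, hcov⟩ := h (2 * d) (by linarith)
    choose R hR using fun i => (h𝔘 i).1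
    refine ⟨⋃ i, 𝔘 i, ⟨Finset.univ.sup' ⟨0, Finset.mem_univ _⟩ R, ?_⟩, hcov, ?_⟩
    · intro U hU x hx y hy
      obtain ⟨i, hi⟩ := mem_iUnion.1 hU
      exact le_trans (hR i U hi x hx y hy) (Finset.le_sup' R (Finset.mem_univ i))
    · intro x
      set S : Set (Set X) := {U | U ∈ ⋃ i, 𝔘 i ∧ (U ∩ Metric.ball x d).Nonempty} with hS
      classical
      have hidx : ∀ U : Set X, ∃ i : Fin (n + 1), U ∈ S → U ∈ 𝔘 i := by
        intro U
        by_cases hU : U ∈ S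
        · obtain ⟨i, hi⟩ := mem_iUnion.1 hU.1
          exact ⟨i, fun _ => hi⟩
        · exact ⟨⟨0, by omega⟩, fun hc => absurd hc hU⟩
      choose g hg using hidx
      have hinj : S.InjOn g := by
        intro U hU V hV hgUV
        by_contra hne
        have hU' := hg U hU
        have hV' := hg V hV
        rw [hgUV] at hU'
        obtain ⟨p, hpU, hpx⟩ := hU.2
        obtain ⟨q, hqV, hqx⟩ := hV.2
        have hfar := (h𝔘 (g V)).2 U hU' V hV' hne p hpU q hqV
        have h1 : dist p x < d := mem_ball.1 hpx
        have h2 : dist q x < d := mem_ball.1 hqx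
        have h3 : dist p q ≤ dist p x + dist x q := dist_triangle p x q
        rw [dist_comm x q] at h3
        linarith
      calc S.encard = (g '' S).encard := (hinj.encard_image).symm
        _ ≤ (univ : Set (Fin (n + 1))).encard := Set.encard_mono (subset_univ _)
        _ = ((n + 1 : ℕ) : ℕ∞) := by simp [Set.encard_univ]
  · -- backward: multiplicity ⇒ families
    intro h d hd
    obtain ⟨𝒱, ⟨R, hR⟩, hcov, hmult⟩ := h ((2 * ((n : ℝ) + 1) + 1) * d) (by positivity)
    set N : ℕ → X → Set (Set X) :=
      fun i x => {V | V ∈ 𝒱 ∧ (V ∩ Metric.ball x ((2 * (i : ℝ) + 1) * d)).Nonempty}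
      with hNdef
    -- monotonicity in the scale
    have hNsub : ∀ i j : ℕ, i ≤ j → ∀ x, N i x ⊆ N j x := by
      intro i j hij x V hV
      refine ⟨hV.1, hV.2.mono (inter_subset_inter_right _ (ball_subset_ball ?_))⟩
      have : (i : ℝ) ≤ (j : ℝ) := by exact_mod_cast hij
      nlinarith
    -- the top level is controlled by the multiplicity hypothesis
    have hNtop : ∀ x, (N (n + 1) x).encard ≤ ((n + 1 : ℕ) : ℕ∞) := by
      intro x
      have hsub : N (n + 1) x ⊆
          {U | U ∈ 𝒱 ∧ (U ∩ Metric.ball x ((2 * ((n : ℝ) + 1) + 1) * d)).Nonempty} := by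
        intro V hV
        refine ⟨hV.1, hV.2.mono (inter_subset_inter_right _ (ball_subset_ball ?_))⟩
        exact le_of_eq (by push_cast; ring)
      exact le_trans (Set.encard_mono hsub) (hmult x)
    have hNfin : ∀ x, (N (n + 1) x).Finite := by
      intro x
      have := hNtop x
      rw [Set.encard_le_coe_iff] at this
      exact this.1
    have hNfin' : ∀ i ≤ n + 1, ∀ x, (N i x).Finite :=
      fun i hi x => (hNfin x).subset (hNsub i (n + 1) hi x)
    have hNcard : ∀ x, (N (n + 1) x).ncard ≤ n + 1 := by
      intro x
      have := hNtop x
      rw [Set.encard_le_coe_iff] at this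
      obtain ⟨hfin, n₀, he, hle⟩ := this
      rw [Set.ncard_def, he, ENat.toNat_coe]
      exact hle
    have hNne : ∀ i : ℕ, ∀ x, (N i x).Nonempty := by
      intro i x
      obtain ⟨V, hV, hxV⟩ := hcov x
      exact ⟨V, hV, x, hxV, by
        simp only [mem_ball, dist_self]
        positivity⟩
    -- the families
    set 𝔘 : Fin (n + 1) → Set (Set X) := fun i =>
      {U | ∃ σ : Set (Set X), U = {y | N (i : ℕ) y = σ ∧ N ((i : ℕ) + 1) y = σ}}
      with h𝔘def
    refine ⟨𝔘, fun i => ⟨⟨R + 2 * ((2 * (n : ℝ) + 1) * d), ?_⟩, ?_⟩, ?_⟩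
    · -- uniformly bounded
      rintro U ⟨σ, rfl⟩ x hx y hy
      rcases eq_or_ne (N (i : ℕ) x) σ with hσ | hσ
      · obtain ⟨V, hV⟩ := hNne (i : ℕ) x
        have hVy : V ∈ N (i : ℕ) y := by
          rw [hy.1, ← hσ]
          exact hV
        obtain ⟨p, hpV, hpx⟩ := hV.2
        obtain ⟨q, hqV, hqy⟩ := hVy.2
        have hpq : dist p q ≤ R := hR V hV.1 p hpV q hqV
        have h1 : dist x p < (2 * (i : ℝ) + 1) * d := by
          rw [dist_comm]; exact mem_ball.1 hpx
        have h2 : dist q y < (2 * (i : ℝ) + 1) * d := mem_ball.1 hqy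
        have hin : (i : ℝ) ≤ n := by exact_mod_cast Nat.lt_succ_iff.1 i.isLt
        calc dist x y ≤ dist x p + dist p q + dist q y := dist_triangle4 x p q y
          _ ≤ R + 2 * ((2 * (n : ℝ) + 1) * d) := by nlinarith
      · exact absurd hx.1 hσ
    · -- d-disjoint
      rintro U₁ ⟨σ, rfl⟩ U₂ ⟨τ, rfl⟩ hne x hx y hy
      have hστ : σ ≠ τ := by rintro rfl; exact hne rfl
      by_contra hlt
      push_neg at hlt
      have step : ∀ a b : X, dist a b < d → N (i : ℕ) a ⊆ N ((i : ℕ) + 1) b := by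
        intro a b hab V hV
        obtain ⟨p, hpV, hpa⟩ := hV.2
        refine ⟨hV.1, p, hpV, ?_⟩
        have h1 : dist p a < (2 * (i : ℝ) + 1) * d := mem_ball.1 hpa
        have : dist p b ≤ dist p a + dist a b := dist_triangle p a b
        simp only [mem_ball]
        push_cast
        nlinarith
      have hxy : N (i : ℕ) x ⊆ N ((i : ℕ) + 1) y := step x y hlt
      have hyx : N (i : ℕ) y ⊆ N ((i : ℕ) + 1) x := step y x (by rwa [dist_comm])
      have h1 : σ ⊆ τ := by rw [← hx.1, ← hy.2]; exact hxy
      have h2 : τ ⊆ σ := by rw [← hy.1, ← hx.2]; exact hyx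
      exact hστ (h1.antisymm h2)
    · -- covering
      intro x
      have hm1 : ∀ i, (N (min i (n + 1)) x).ncard ≤ (N (min (i + 1) (n + 1)) x).ncard :=
        fun i => Set.ncard_le_ncard (hNsub _ _ (min_le_min (Nat.le_succ i) le_rfl) x)
          (hNfin' _ (min_le_right _ _) x)
      have hm2 : 1 ≤ (N (min 0 (n + 1)) x).ncard := by
        have e : min 0 (n + 1) = 0 := by omega
        rw [e]
        exact (Set.ncard_pos (hNfin' 0 (by omega) x)).2 (hNne 0 x)
      have hm3 : (N (min (n + 1) (n + 1)) x).ncard ≤ n + 1 := by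
        have e : min (n + 1) (n + 1) = n + 1 := by omega
        rw [e]
        exact hNcard x
      obtain ⟨i, hin, hcard0⟩ := exists_stab (fun i => (N (min i (n + 1)) x).ncard) n hm1 hm2 hm3
      have hcard : (N (min i (n + 1)) x).ncard = (N (min (i + 1) (n + 1)) x).ncard := hcard0
      have e1 : min i (n + 1) = i := by omega
      have e2 : min (i + 1) (n + 1) = i + 1 := by omega
      rw [e1, e2] at hcard
      have heq : N i x = N (i + 1) x :=
        Set.eq_of_subset_of_ncard_le (hNsub i (i + 1) (Nat.le_succ i) x) hcard.ge
          (hNfin' (i + 1) (by omega) x)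
      refine ⟨{y | N i y = N i x ∧ N (i + 1) y = N i x}, ?_, ?_⟩
      · exact mem_iUnion.2 ⟨⟨i, by omega⟩, N i x, rfl⟩
      · exact ⟨rfl, heq.symm⟩
end

section
/- For a metric space X, the following are equivalent: (1) for every d > 0 there is a uniformly bounded cover V of X with d-multiplicity at most n+1; (2) for every d > 0 there is a uniformly bounded cover U of X with multiplicity at most n+1 and Lebesgue number greater than d. -/
open Metric Set

/-- A cover has multiplicity (order) at most `m` if every point lies in at most `m`
members of the cover. -/
def MultLE {X : Type*} [MetricSpace X] (m : ℕ) (𝔘 : Set (Set X)) : Prop :=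
  ∀ x : X, {U | U ∈ 𝔘 ∧ x ∈ U}.encard ≤ (m : ℕ∞)

/-- A cover has Lebesgue number greater than (or equal to) `d`: every ball of radius `d`
is contained in some member of the cover. -/
def LebesgueGT {X : Type*} [MetricSpace X] (d : ℝ) (𝔘 : Set (Set X)) : Prop :=
  ∀ x : X, ∃ U ∈ 𝔘, Metric.ball x d ⊆ U

/-- For a metric space `X`, the following are equivalent: (1) for every `d > 0` there is a
uniformly bounded cover of `X` with `d`-multiplicity at most `n+1`; (2) for every `d > 0`
there is a uniformly bounded cover of `X` with multiplicity at most `n+1` and Lebesgue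
number greater than `d`. -/
theorem dmultiplicity_iff_multiplicity_and_lebesgue (X : Type*) [MetricSpace X] (n : ℕ) :
    (∀ d : ℝ, 0 < d → ∃ 𝔙 : Set (Set X),
        UnifBounded 𝔙 ∧ IsCover 𝔙 ∧ DMultLE d (n + 1) 𝔙) ↔
    (∀ d : ℝ, 0 < d → ∃ 𝔘 : Set (Set X),
        UnifBounded 𝔘 ∧ IsCover 𝔘 ∧ MultLE (n + 1) 𝔘 ∧ LebesgueGT d 𝔘) := by
  constructor
  · -- (1) → (2): thicken each member of the d-multiplicity cover by d
    intro h d hd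
    obtain ⟨𝔙, ⟨R, hR⟩, hcov, hmult⟩ := h d hd
    set g : Set X → Set X := fun V => {y | ∃ v ∈ V, dist y v < d} with hg
    refine ⟨g '' 𝔙, ⟨R + d + d, ?_⟩, ?_, ?_, ?_⟩
    · rintro U ⟨V, hV, rfl⟩ x ⟨vx, hvx, hdx⟩ y ⟨vy, hvy, hdy⟩
      calc dist x y ≤ dist x vx + dist vx vy + dist vy y := dist_triangle4 x vx vy y
        _ ≤ d + R + d := by
            have := hR V hV vx hvx vy hvy
            have : dist vy y ≤ d := by rw [dist_comm]; linarith [hdy]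
            linarith [hdx, hR V hV vx hvx vy hvy]
        _ = R + d + d := by ring
    · intro x
      obtain ⟨V, hV, hx⟩ := hcov x
      exact ⟨g V, ⟨V, hV, rfl⟩, ⟨x, hx, by simpa using hd⟩⟩
    · intro x
      have hsub : {U | U ∈ g '' 𝔙 ∧ x ∈ U} ⊆
          g '' {V | V ∈ 𝔙 ∧ (V ∩ Metric.ball x d).Nonempty} := by
        rintro U ⟨⟨V, hV, rfl⟩, v, hv, hdv⟩
        exact ⟨V, ⟨hV, ⟨v, hv, by rwa [mem_ball, dist_comm]⟩⟩, rfl⟩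
      calc {U | U ∈ g '' 𝔙 ∧ x ∈ U}.encard
          ≤ (g '' {V | V ∈ 𝔙 ∧ (V ∩ Metric.ball x d).Nonempty}).encard :=
            Set.encard_mono hsub
        _ ≤ {V | V ∈ 𝔙 ∧ (V ∩ Metric.ball x d).Nonempty}.encard :=
            Set.encard_image_le _ _
        _ ≤ ((n + 1 : ℕ) : ℕ∞) := hmult x
    · intro x
      obtain ⟨V, hV, hx⟩ := hcov x
      exact ⟨g V, ⟨V, hV, rfl⟩, fun y hy => ⟨x, hx, hy⟩⟩
  · -- (2) → (1): shrink each member of the Lebesgue cover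
    intro h d hd
    obtain ⟨𝔘, ⟨R, hR⟩, hcov, hmult, hleb⟩ := h d hd
    set f : Set X → Set X := fun U => {y | Metric.ball y d ⊆ U} with hf
    refine ⟨f '' 𝔘, ⟨R, ?_⟩, ?_, ?_⟩
    · rintro V ⟨U, hU, rfl⟩ x hx y hy
      exact hR U hU x (hx (mem_ball_self hd)) y (hy (mem_ball_self hd))
    · intro x
      obtain ⟨U, hU, hx⟩ := hleb x
      exact ⟨f U, ⟨U, hU, rfl⟩, hx⟩
    · intro x
      have hsub : {V | V ∈ f '' 𝔘 ∧ (V ∩ Metric.ball x d).Nonempty} ⊆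
          f '' {U | U ∈ 𝔘 ∧ x ∈ U} := by
        rintro V ⟨⟨U, hU, rfl⟩, y, hy, hyx⟩
        exact ⟨U, ⟨hU, hy (by rwa [mem_ball, dist_comm, ← mem_ball] at hyx)⟩, rfl⟩
      calc {V | V ∈ f '' 𝔘 ∧ (V ∩ Metric.ball x d).Nonempty}.encard
          ≤ (f '' {U | U ∈ 𝔘 ∧ x ∈ U}).encard := Set.encard_mono hsub
        _ ≤ {U | U ∈ 𝔘 ∧ x ∈ U}.encard := Set.encard_image_le _ _
        _ ≤ ((n + 1 : ℕ) : ℕ∞) := hmult x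
end

section
/- If a metric space X is a union A ∪ B of two subspaces, then asdim(A ∪ B) ≤ max{asdim A, asdim B}. -/
open Metric Set

/-- `asdim X ≤ n`: for every `d > 0` there exist `n+1` uniformly bounded `d`-disjoint
families of subsets of `X` whose union covers `X`. -/
def ASDimLE (X : Type*) [MetricSpace X] (n : ℕ) : Prop :=
  ∀ d : ℝ, 0 < d → ∃ 𝔘 : Fin (n + 1) → Set (Set X),
    (∀ i, UnifBounded (𝔘 i) ∧ DDisjoint d (𝔘 i)) ∧
    ∀ x : X, ∃ i, ∃ U ∈ 𝔘 i, x ∈ U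

lemma asdimLE_mono {X : Type*} [MetricSpace X] {m n : ℕ} (h : m ≤ n)
    (hm : ASDimLE X m) : ASDimLE X n := by
  intro d hd
  obtain ⟨𝔘, h1, h2⟩ := hm d hd
  refine ⟨fun i => if hi : (i : ℕ) < m + 1 then 𝔘 ⟨i, hi⟩ else ∅, fun i => ?_, fun x => ?_⟩
  · by_cases hi : (i : ℕ) < m + 1
    · simpa [hi] using h1 ⟨i, hi⟩
    · simp only [hi, dif_neg, not_false_iff]
      exact ⟨⟨0, by simp⟩, by intro U hU; simp at hU⟩
  · obtain ⟨i, U, hU, hx⟩ := h2 x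
    have hlt : ((Fin.castLE (by omega) i : Fin (n + 1)) : ℕ) < m + 1 := by
      exact i.isLt
    refine ⟨Fin.castLE (by omega) i, U, ?_, hx⟩
    simp only [hlt, dif_pos]
    exact hU

lemma push_disjoint {X : Type*} [MetricSpace X] {A : Set X} {𝔘 : Set (Set ↥A)} {d : ℝ}
    (h : DDisjoint d 𝔘) :
    DDisjoint d ((Set.image (Subtype.val : ↥A → X)) '' 𝔘) := by
  rintro _ ⟨S, hS, rfl⟩ _ ⟨T, hT, rfl⟩ hne x hx y hy
  obtain ⟨a, ha, rfl⟩ := hx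
  obtain ⟨b, hb, rfl⟩ := hy
  have hST : S ≠ T := fun h' => hne (by rw [h'])
  have := h S hS T hT hST a ha b hb
  rwa [Subtype.dist_eq] at this

/-- Finite Union Theorem: if a metric space is the union `A ∪ B` of two subspaces, then
`asdim (A ∪ B) ≤ max (asdim A) (asdim B)`. -/
theorem asdim_union_le_max (X : Type*) [MetricSpace X] (A B : Set X)
    (hAB : A ∪ B = Set.univ) (m n : ℕ)
    (hA : ASDimLE A m) (hB : ASDimLE B n) :
    ASDimLE X (max m n) := by
  set N := max m n with hN
  have hA' : ASDimLE A N := asdimLE_mono (le_max_left m n) hA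
  have hB' : ASDimLE B N := asdimLE_mono (le_max_right m n) hB
  intro d hd
  -- families on B at scale d
  obtain ⟨𝔙, h𝔙, h𝔙cov⟩ := hB' d hd
  -- a uniform bound R for all the B-families
  obtain ⟨R, hR0, hRb⟩ : ∃ R : ℝ, 0 ≤ R ∧
      ∀ i, ∀ V ∈ 𝔙 i, ∀ x ∈ V, ∀ y ∈ V, dist x y ≤ R := by
    choose Rf hRf using fun i => (h𝔙 i).1
    refine ⟨∑ j, max (Rf j) 0,
      Finset.sum_nonneg fun j _ => le_trans (le_max_right _ _) (le_refl _), fun i V hV x hx y hy => ?_⟩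
    calc dist x y ≤ Rf i := hRf i V hV x hx y hy
      _ ≤ max (Rf i) 0 := le_max_left _ _
      _ ≤ ∑ j, max (Rf j) 0 :=
          Finset.single_le_sum (f := fun j => max (Rf j) 0) (fun j _ => le_max_right _ _) (Finset.mem_univ i)
  -- families on A at scale 3d + 2R
  have hscale : (0 : ℝ) < 3 * d + 2 * R := by linarith
  obtain ⟨𝔘, h𝔘, h𝔘cov⟩ := hA' (3 * d + 2 * R) hscale
  -- push to X
  set UX : Fin (N + 1) → Set (Set X) :=
    fun i => (Set.image (Subtype.val : ↥A → X)) '' 𝔘 i with hUX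
  set VX : Fin (N + 1) → Set (Set X) :=
    fun i => (Set.image (Subtype.val : ↥B → X)) '' 𝔙 i with hVX
  have hVXb : ∀ i, ∀ V ∈ VX i, ∀ x ∈ V, ∀ y ∈ V, dist x y ≤ R := by
    rintro i _ ⟨S, hS, rfl⟩ x ⟨a, ha, rfl⟩ y ⟨b, hb, rfl⟩
    have := hRb i S hS a ha b hb
    rwa [Subtype.dist_eq] at this
  have hVXd : ∀ i, DDisjoint d (VX i) := fun i => push_disjoint (h𝔙 i).2
  have hUXd : ∀ i, DDisjoint (3 * d + 2 * R) (UX i) := fun i => push_disjoint (h𝔘 i).2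
  have hUXb : ∀ i, ∃ D : ℝ, 0 ≤ D ∧ ∀ U ∈ UX i, ∀ x ∈ U, ∀ y ∈ U, dist x y ≤ D := by
    intro i
    obtain ⟨D, hD⟩ := (h𝔘 i).1
    refine ⟨max D 0, le_max_right _ _, ?_⟩
    rintro _ ⟨S, hS, rfl⟩ x ⟨a, ha, rfl⟩ y ⟨b, hb, rfl⟩
    have := hD S hS a ha b hb
    rw [Subtype.dist_eq] at this
    exact le_trans this (le_max_left _ _)
  -- the "closeness" relation and saturated sets
  classical
  let close : Set X → Set X → Prop := fun V U => ∃ v ∈ V, ∃ u ∈ U, dist v u ≤ d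
  let sat : Fin (N + 1) → Set X → Set X :=
    fun i U => U ∪ ⋃₀ {V | V ∈ VX i ∧ close V U}
  let W : Fin (N + 1) → Set (Set X) :=
    fun i => {S | ∃ U ∈ UX i, S = sat i U} ∪
      {V | V ∈ VX i ∧ ∀ U ∈ UX i, ¬ close V U}
  -- if x ∈ sat i U then there is u ∈ U with dist x u ≤ R + d (provided U nonempty when x ∈ U)
  have hnear : ∀ i U, U ∈ UX i → ∀ x ∈ sat i U, ∃ u ∈ U, dist x u ≤ R + d := by
    intro i U hU x hx
    rcases hx with hx | hx
    · exact ⟨x, hx, by simp [dist_self]; linarith⟩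
    · obtain ⟨V, ⟨hV, v, hv, u, hu, hvu⟩, hxV⟩ := hx
      refine ⟨u, hu, ?_⟩
      calc dist x u ≤ dist x v + dist v u := dist_triangle _ _ _
        _ ≤ R + d := add_le_add (hVXb i V hV x hxV v hv) hvu
  refine ⟨W, fun i => ⟨?_, ?_⟩, fun x => ?_⟩
  · -- uniform boundedness of W i
    obtain ⟨D, hD0, hD⟩ := hUXb i
    refine ⟨D + 2 * R + 2 * d, ?_⟩
    rintro S hS x hx y hy
    rcases hS with ⟨U, hU, rfl⟩ | ⟨hSV, -⟩
    · obtain ⟨u, hu, hxu⟩ := hnear i U hU x hx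
      obtain ⟨u', hu', hyu'⟩ := hnear i U hU y hy
      calc dist x y ≤ dist x u + dist u u' + dist u' y := dist_triangle4 _ _ _ _
        _ ≤ (R + d) + D + (R + d) := by
            refine add_le_add (add_le_add hxu (hD U hU u hu u' hu')) ?_
            rw [dist_comm]; exact hyu'
        _ = D + 2 * R + 2 * d := by ring
    · have := hVXb i S hSV x hx y hy
      linarith
  · -- d-disjointness of W i
    rintro S hS T hT hne x hx y hy
    rcases hS with ⟨U, hU, rfl⟩ | ⟨hSV, hSlo⟩ <;>
      rcases hT with ⟨U', hU', rfl⟩ | ⟨hTV, hTlo⟩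
    · -- both saturated
      have hUU' : U ≠ U' := by rintro rfl; exact hne rfl
      obtain ⟨u, hu, hxu⟩ := hnear i U hU x hx
      obtain ⟨u', hu', hyu'⟩ := hnear i U' hU' y hy
      have huu' : 3 * d + 2 * R ≤ dist u u' := hUXd i U hU U' hU' hUU' u hu u' hu'
      have : dist u u' ≤ dist u x + dist x y + dist y u' := dist_triangle4 _ _ _ _
      rw [dist_comm u x] at this
      linarith
    · -- S saturated, T leftover
      rcases hx with hx | hx
      · -- x ∈ U, y ∈ T leftover
        by_contra hc
        push_neg at hc
        exact hTlo U hU ⟨y, hy, x, hx, by rw [dist_comm] at hc; linarith⟩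
      · obtain ⟨V, ⟨hV, hVc⟩, hxV⟩ := hx
        by_cases hVT : V = T
        · subst hVT; exact absurd hVc (hTlo U hU)
        · exact hVXd i V hV T hTV hVT x hxV y hy
    · -- S leftover, T saturated
      rcases hy with hy | hy
      · by_contra hc
        push_neg at hc
        exact hSlo U' hU' ⟨x, hx, y, hy, le_of_lt hc⟩
      · obtain ⟨V, ⟨hV, hVc⟩, hyV⟩ := hy
        by_cases hVS : S = V
        · exact absurd (hVS ▸ hVc) (hSlo U' hU')
        · exact hVXd i S hSV V hV hVS x hx y hyV
    · -- both leftover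
      have hST : S ≠ T := hne
      exact hVXd i S hSV T hTV hST x hx y hy
  · -- covering
    have hx : x ∈ A ∪ B := hAB ▸ mem_univ x
    rcases hx with hxA | hxB
    · obtain ⟨i, S, hS, hxS⟩ := h𝔘cov ⟨x, hxA⟩
      refine ⟨i, sat i (Subtype.val '' S), Or.inl ⟨Subtype.val '' S, ⟨S, hS, rfl⟩, rfl⟩, ?_⟩
      exact Or.inl ⟨⟨x, hxA⟩, hxS, rfl⟩
    · obtain ⟨i, S, hS, hxS⟩ := h𝔙cov ⟨x, hxB⟩
      have hVmem : (Subtype.val '' S : Set X) ∈ VX i := ⟨S, hS, rfl⟩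
      have hxV : x ∈ (Subtype.val '' S : Set X) := ⟨⟨x, hxB⟩, hxS, rfl⟩
      by_cases hcl : ∃ U ∈ UX i, close (Subtype.val '' S) U
      · obtain ⟨U, hU, hcU⟩ := hcl
        refine ⟨i, sat i U, Or.inl ⟨U, hU, rfl⟩, ?_⟩
        exact Or.inr ⟨Subtype.val '' S, ⟨hVmem, hcU⟩, hxV⟩
      · push_neg at hcl
        exact ⟨i, Subtype.val '' S, Or.inr ⟨hVmem, hcl⟩, hxV⟩
end

section
/- Let X = ∪_α F_α be a metric space with asdim F_α ≤ n uniformly, and suppose for every r > 0 there exists a subset Y_r ⊂ X with asdim Y_r ≤ n such that the family {F_α \ Y_r} is r-disjoint. Then asdim X ≤ n. -/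
open Metric Set

/-- `W` comes within distance `< c` of `V`. -/
def CloseTo {X : Type*} [MetricSpace X] (c : ℝ) (W V : Set X) : Prop :=
  ∃ x ∈ W, ∃ v ∈ V, dist x v < c

/-- Saturation of `V` by the members of `𝔚` that are `c`-close to it. -/
def satSet {X : Type*} [MetricSpace X] (c : ℝ) (𝔚 : Set (Set X)) (V : Set X) : Set X :=
  V ∪ {x | ∃ W ∈ 𝔚, CloseTo c W V ∧ x ∈ W}

/-- The family of sets `U \ Y` where `U` ranges over the family attached to a chosen
representative of each class `F α \ Y`. -/
def WFam {X : Type*} {ι : Type*} (F : ι → Set X) (Y : Set X)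
    (G : ι → Set (Set X)) : Set (Set X) :=
  {W | ∃ (S : Set X) (hS : ∃ β, F β \ Y = S), ∃ U ∈ G hS.choose, W = U \ Y}

/-- Infinite Union Theorem: let `X = ⋃ F α` with `asdim F α ≤ n` uniformly (for every
`d > 0` there is a common bound `R` and, for each `α`, `n+1` families of `R`-bounded
`d`-disjoint subsets of `F α` covering `F α`). Suppose for every `r > 0` there is
`Y_r ⊆ X` with `asdim Y_r ≤ n` such that the family `{F α \ Y_r}` is `r`-disjoint.
Then `asdim X ≤ n`. -/
theorem asdim_infinite_union (X : Type*) [MetricSpace X] {ι : Type*} (F : ι → Set X)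
    (n : ℕ) (hcov : (⋃ α, F α) = Set.univ)
    (hunif : ∀ d : ℝ, 0 < d → ∃ R : ℝ, ∀ α : ι, ∃ 𝔘 : Fin (n + 1) → Set (Set X),
      (∀ i, ∀ U ∈ 𝔘 i, U ⊆ F α ∧ ∀ x ∈ U, ∀ y ∈ U, dist x y ≤ R) ∧
      (∀ i, DDisjoint d (𝔘 i)) ∧
      ∀ x ∈ F α, ∃ i, ∃ U ∈ 𝔘 i, x ∈ U)
    (hY : ∀ r : ℝ, 0 < r → ∃ Y : Set X, ASDimLE Y n ∧
      ∀ α β : ι, F α \ Y ≠ F β \ Y →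
        ∀ x ∈ F α \ Y, ∀ y ∈ F β \ Y, r ≤ dist x y) :
    ASDimLE X n := by
  classical
  intro d hd
  obtain ⟨R0, hR0⟩ := hunif d hd
  choose 𝔘 h1 h2 h3 using hR0
  set R : ℝ := max R0 0 with hRdef
  have hR : 0 ≤ R := le_max_right _ _
  have hR0R : R0 ≤ R := le_max_left _ _
  -- the separating set Y at scale R + 2d + 1
  obtain ⟨Y, hYdim, hYdisj⟩ := hY (R + 2 * d + 1) (by linarith)
  set s : ℝ := 3 * R + 5 * d with hsdef
  obtain ⟨𝔙, h𝔙, h𝔙cov⟩ := hYdim s (by simp only [hsdef]; linarith)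
  choose R1 hR1 using fun i => (h𝔙 i).1
  set c : ℝ := R + 2 * d with hcdef
  have hdc : d ≤ c := by simp only [hcdef]; linarith
  -- the pushed-forward families on Y, as subsets of X
  set Vx : Fin (n + 1) → Set (Set X) :=
    fun i => (fun V => Subtype.val '' V) '' 𝔙 i with hVxdef
  -- the families on the complement of Y
  set Wf : Fin (n + 1) → Set (Set X) :=
    fun i => WFam F Y (fun α => 𝔘 α i) with hWfdef
  -- basic properties of Wf
  have hWbound : ∀ i, ∀ W ∈ Wf i, ∀ x ∈ W, ∀ y ∈ W, dist x y ≤ R := by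
    rintro i W ⟨S, hS, U, hU, rfl⟩ x hx y hy
    exact le_trans ((h1 _ i U hU).2 x hx.1 y hy.1) hR0R
  have hWdisj : ∀ i, DDisjoint d (Wf i) := by
    rintro i W ⟨S, hS, U, hU, rfl⟩ W' ⟨S', hS', U', hU', rfl⟩ hne x hx y hy
    by_cases hSS : S = S'
    · subst hSS
      have hUU : U ≠ U' := fun h => hne (by rw [h])
      exact h2 _ i U hU U' hU' hUU x hx.1 y hy.1
    · have hxS : x ∈ F hS.choose \ Y := ⟨(h1 _ i U hU).1 hx.1, hx.2⟩
      have hyS : y ∈ F hS'.choose \ Y := ⟨(h1 _ i U' hU').1 hy.1, hy.2⟩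
      have hne' : F hS.choose \ Y ≠ F hS'.choose \ Y := by
        rw [hS.choose_spec, hS'.choose_spec]; exact hSS
      have := hYdisj _ _ hne' x hxS y hyS
      linarith
  have hWcov : ∀ x : X, x ∉ Y → ∃ i, ∃ W ∈ Wf i, x ∈ W := by
    intro x hx
    have hxu : x ∈ ⋃ α, F α := by rw [hcov]; exact mem_univ x
    obtain ⟨α, hα⟩ := mem_iUnion.mp hxu
    have hS : ∃ β, F β \ Y = F α \ Y := ⟨α, rfl⟩
    have hx' : x ∈ F hS.choose := by
      have hspec := hS.choose_spec
      have : x ∈ F hS.choose \ Y := by rw [hspec]; exact ⟨hα, hx⟩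
      exact this.1
    obtain ⟨i, U, hU, hxU⟩ := h3 hS.choose x hx'
    exact ⟨i, U \ Y, ⟨F α \ Y, hS, U, hU, rfl⟩, hxU, hx⟩
  -- basic properties of Vx
  have hVbound : ∀ i, ∀ V ∈ Vx i, ∀ x ∈ V, ∀ y ∈ V, dist x y ≤ R1 i := by
    rintro i V ⟨V0, hV0, rfl⟩ x ⟨a, ha, rfl⟩ y ⟨b, hb, rfl⟩
    have := hR1 i V0 hV0 a ha b hb
    rwa [Subtype.dist_eq] at this
  have hVdisj : ∀ i, ∀ V ∈ Vx i, ∀ V' ∈ Vx i, V ≠ V' → ∀ x ∈ V, ∀ y ∈ V', s ≤ dist x y := by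
    rintro i V ⟨V0, hV0, rfl⟩ V' ⟨V0', hV0', rfl⟩ hne x ⟨a, ha, rfl⟩ y ⟨b, hb, rfl⟩
    have hne' : V0 ≠ V0' := fun h => hne (by rw [h])
    have := (h𝔙 i).2 V0 hV0 V0' hV0' hne' a ha b hb
    rwa [Subtype.dist_eq] at this
  have hVcov : ∀ x : X, x ∈ Y → ∃ i, ∃ V ∈ Vx i, x ∈ V := by
    intro x hx
    obtain ⟨i, V0, hV0, hxV⟩ := h𝔙cov ⟨x, hx⟩
    exact ⟨i, Subtype.val '' V0, ⟨V0, hV0, rfl⟩, ⟨⟨x, hx⟩, hxV, rfl⟩⟩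
  -- each W is close to at most one V
  have huniq : ∀ i, ∀ V ∈ Vx i, ∀ V' ∈ Vx i, ∀ W ∈ Wf i,
      CloseTo c W V → CloseTo c W V' → V = V' := by
    rintro i V hV V' hV' W hW ⟨x, hx, v, hv, hd1⟩ ⟨x', hx', v', hv', hd2⟩
    by_contra hne
    have hsep := hVdisj i V hV V' hV' hne v hv v' hv'
    have hxx := hWbound i W hW x hx x' hx'
    have h4 : dist v v' ≤ dist v x + dist x x' + dist x' v' := dist_triangle4 v x x' v'
    have hvx : dist v x = dist x v := dist_comm v x
    simp only [hsdef, hcdef] at *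
    linarith
  -- points of the saturation are not far from V
  have hsat_near : ∀ i, ∀ V : Set X, ∀ a ∈ satSet c (Wf i) V, ∃ v ∈ V, dist a v ≤ R + c := by
    rintro i V a (ha | ⟨W, hW, ⟨x, hx, v, hv, hxv⟩, haW⟩)
    · exact ⟨a, ha, by rw [dist_self]; simp only [hcdef]; linarith⟩
    · refine ⟨v, hv, ?_⟩
      have h1' := hWbound i W hW a haW x hx
      calc dist a v ≤ dist a x + dist x v := dist_triangle a x v
        _ ≤ R + c := by linarith [le_of_lt hxv]
  -- the final families
  refine ⟨fun i => (satSet c (Wf i)) '' (Vx i) ∪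
    {W | W ∈ Wf i ∧ ∀ V ∈ Vx i, ¬ CloseTo c W V}, ?_, ?_⟩
  · intro i
    constructor
    · -- uniform boundedness
      refine ⟨max (R1 i) 0 + 4 * R + 4 * d, ?_⟩
      rintro U (⟨V, hV, rfl⟩ | ⟨hW, -⟩)
      · intro x hx y hy
        obtain ⟨v, hv, hxv⟩ := hsat_near i V x hx
        obtain ⟨w, hw, hyw⟩ := hsat_near i V y hy
        have hvw : dist v w ≤ R1 i := hVbound i V hV v hv w hw
        have hR1' : R1 i ≤ max (R1 i) 0 := le_max_left _ _
        calc dist x y ≤ dist x v + dist v w + dist w y := dist_triangle4 x v w y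
          _ ≤ (R + c) + R1 i + (R + c) := by
              have : dist w y = dist y w := dist_comm w y
              linarith
          _ ≤ max (R1 i) 0 + 4 * R + 4 * d := by simp only [hcdef]; linarith
      · intro x hx y hy
        have := hWbound i U hW x hx y hy
        have h0 : (0:ℝ) ≤ max (R1 i) 0 := le_max_right _ _
        linarith
    · -- d-disjointness
      rintro A (⟨V, hV, rfl⟩ | ⟨hA, hAfar⟩) B hB hne x hx y hy
      · rcases hB with ⟨V', hV', rfl⟩ | ⟨hB, hBfar⟩
        · -- sat vs sat
          have hVV' : V ≠ V' := fun h => hne (by rw [h])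
          by_contra hlt
          push_neg at hlt
          rcases hx with hx | ⟨W, hW, hWc, hxW⟩
          · rcases hy with hy | ⟨W', hW', hWc', hyW⟩
            · have := hVdisj i V hV V' hV' hVV' x hx y hy
              simp only [hsdef] at this; linarith
            · -- y ∈ W' close to V'; W' is also close to V
              have : CloseTo c W' V := ⟨y, hyW, x, hx, by rw [dist_comm]; linarith⟩
              exact hVV' (huniq i V hV V' hV' W' hW' this hWc')
          · rcases hy with hy | ⟨W', hW', hWc', hyW⟩
            · have : CloseTo c W V' := ⟨x, hxW, y, hy, by linarith⟩
              exact hVV' (huniq i V hV V' hV' W hW hWc this)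
            · by_cases hWW : W = W'
              · subst hWW
                exact hVV' (huniq i V hV V' hV' W hW hWc hWc')
              · have := hWdisj i W hW W' hW' hWW x hxW y hyW
                linarith
        · -- sat vs far W
          by_contra hlt
          push_neg at hlt
          rcases hx with hx | ⟨W'', hW'', hWc'', hxW⟩
          · exact hBfar V hV ⟨y, hy, x, hx, by rw [dist_comm]; linarith⟩
          · by_cases hWW : W'' = B
            · subst hWW
              exact hBfar V hV hWc''
            · have := hWdisj i W'' hW'' B hB hWW x hxW y hy
              linarith
      · rcases hB with ⟨V', hV', rfl⟩ | ⟨hB, hBfar⟩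
        · -- far W vs sat
          by_contra hlt
          push_neg at hlt
          rcases hy with hy | ⟨W'', hW'', hWc'', hyW⟩
          · exact hAfar V' hV' ⟨x, hx, y, hy, by linarith⟩
          · by_cases hWW : W'' = A
            · subst hWW
              exact hAfar V' hV' hWc''
            · have := hWdisj i W'' hW'' A hA hWW y hyW x hx
              rw [dist_comm] at this
              linarith
        · -- far W vs far W
          exact hWdisj i A hA B hB hne x hx y hy
  · -- coverage
    intro x
    by_cases hx : x ∈ Y
    · obtain ⟨i, V, hV, hxV⟩ := hVcov x hx
      exact ⟨i, satSet c (Wf i) V, Or.inl ⟨V, hV, rfl⟩, Or.inl hxV⟩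
    · obtain ⟨i, W, hW, hxW⟩ := hWcov x hx
      by_cases hclose : ∃ V ∈ Vx i, CloseTo c W V
      · obtain ⟨V, hV, hWc⟩ := hclose
        exact ⟨i, satSet c (Wf i) V, Or.inl ⟨V, hV, rfl⟩, Or.inr ⟨W, hW, hWc, hxW⟩⟩
      · push_neg at hclose
        exact ⟨i, W, Or.inr ⟨hW, hclose⟩, hxW⟩
end

section
/- For every n there is a constant c_n such that for every simplicial map g : X → Y from an oriented n-dimensional simplicial complex X, the quotient map q : X × [0,1] → M_g from the product (X with the uniform metric, product metric on X × [0,1]) onto the mapping cylinder M_g with its uniform metric is c_n-Lipschitz. -/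
open Set

/-- An abstract simplicial complex on the vertex set `V`. -/
structure AbsSC (V : Type*) where
  faces : Set (Finset V)
  down_closed : ∀ σ ∈ faces, ∀ τ ⊆ σ, τ ∈ faces

/-- `g` is a simplicial map from `K` to `L`. -/
def IsSimplicialMap {V W : Type*} [DecidableEq W] (K : AbsSC V) (L : AbsSC W)
    (g : V → W) : Prop :=
  ∀ σ ∈ K.faces, σ.image g ∈ L.faces

/-- The triangulation of the prism `|K| × [0,1]` determined by an orientation (linear
order) on the vertices of `K`: its simplices are the chains in the product order on
`V × Fin 2` projecting to simplices of `K`. -/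
def PrismFaces {V : Type*} [LinearOrder V] (K : AbsSC V) : Set (Finset (V × Fin 2)) :=
  {τ | τ.image Prod.fst ∈ K.faces ∧ IsChain (· ≤ ·) (τ : Set (V × Fin 2))}

/-- `b` is a point of the realization of the triangulated prism, in barycentric
coordinates. -/
def InPrism {V : Type*} [LinearOrder V] (K : AbsSC V) (b : V × Fin 2 → ℝ) : Prop :=
  (∀ p, 0 ≤ b p) ∧ ∃ τ ∈ PrismFaces K, (∀ p, b p ≠ 0 → p ∈ τ) ∧ ∑ p ∈ τ, b p = 1

/-- The quotient map from the triangulated prism onto the mapping cylinder `M_g`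
(vertex set `V ⊕ W`), in barycentric coordinates: the bottom copy `(v,0)` goes to the
vertex `inl v` of `X` and the top copy `(v,1)` goes to the vertex `inr (g v)` of `Y`. -/
noncomputable def cylProj {V W : Type*} (g : V → W) (b : V × Fin 2 → ℝ) :
    V ⊕ W → ℝ :=
  fun z => match z with
  | Sum.inl v => b (v, 0)
  | Sum.inr w => ∑' v : {v : V // g v = w}, b ((v : V), 1)

lemma key_min {V : Type} [LinearOrder V] (τ : Finset (V × Fin 2))
    (hchain : IsChain (· ≤ ·) (τ : Set (V × Fin 2)))
    (b : V × Fin 2 → ℝ) (hpos : ∀ p, 0 ≤ b p) (hsupp : ∀ p, b p ≠ 0 → p ∈ τ)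
    (F : Finset V)
    (P : V → Prop) [DecidablePred P] (hP : ∀ ⦃u u'⦄, u ≤ u' → P u → P u') :
    min (∑ u ∈ F, b (u, 1)) (∑ u ∈ F.filter P, (b (u, 0) + b (u, 1)))
      = ∑ u ∈ F.filter P, b (u, 1) := by
  have ht : ∑ u ∈ F, b (u,1)
      = ∑ u ∈ F.filter P, b (u,1) + ∑ u ∈ F.filter (fun u => ¬ P u), b (u,1) :=
    (Finset.sum_filter_add_sum_filter_not F P _).symm
  have hT : ∑ u ∈ F.filter P, (b (u,0) + b (u,1))
      = ∑ u ∈ F.filter P, b (u,1) + ∑ u ∈ F.filter P, b (u,0) := by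
    rw [← Finset.sum_add_distrib]; apply Finset.sum_congr rfl; intros; ring
  rw [ht, hT, min_add_add_left]
  have h0 : min (∑ u ∈ F.filter (fun u => ¬ P u), b (u,1)) (∑ u ∈ F.filter P, b (u,0)) = 0 := by
    have h1 : 0 ≤ ∑ u ∈ F.filter (fun u => ¬ P u), b (u,1) :=
      Finset.sum_nonneg fun _ _ => hpos _
    have h2 : 0 ≤ ∑ u ∈ F.filter P, b (u,0) := Finset.sum_nonneg fun _ _ => hpos _
    have hor : (∑ u ∈ F.filter (fun u => ¬ P u), b (u,1)) = 0
        ∨ (∑ u ∈ F.filter P, b (u,0)) = 0 := by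
      by_contra h
      push_neg at h
      obtain ⟨u₁, hu₁F, hu₁⟩ := Finset.exists_ne_zero_of_sum_ne_zero h.1
      obtain ⟨u₂, hu₂F, hu₂⟩ := Finset.exists_ne_zero_of_sum_ne_zero h.2
      have hP1 : ¬ P u₁ := (Finset.mem_filter.mp hu₁F).2
      have hP2 : P u₂ := (Finset.mem_filter.mp hu₂F).2
      have m1 : ((u₁, (1 : Fin 2)) : V × Fin 2) ∈ τ := hsupp _ hu₁
      have m2 : ((u₂, (0 : Fin 2)) : V × Fin 2) ∈ τ := hsupp _ hu₂
      have hne : ((u₁, (1 : Fin 2)) : V × Fin 2) ≠ (u₂, 0) := by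
        simp [Prod.ext_iff]
      rcases hchain (Finset.mem_coe.2 m1) (Finset.mem_coe.2 m2) hne with h | h
      · have : (1 : Fin 2) ≤ 0 := (Prod.mk_le_mk.mp h).2
        exact absurd this (by decide)
      · exact hP1 (hP ((Prod.mk_le_mk.mp h).1) hP2)
    rcases hor with h | h
    · rw [h]; exact min_eq_left h2
    · rw [h]; exact min_eq_right h1
  rw [h0, add_zero]

lemma filter_le_sum {V : Type} [LinearOrder V] (F : Finset V) (v : V) (f : V → ℝ)
    (h0 : v ∉ F → f v = 0) :
    ∑ u ∈ F.filter (fun u => v ≤ u), f u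
      = f v + ∑ u ∈ F.filter (fun u => v < u), f u := by
  classical
  have hsplit : F.filter (fun u => v ≤ u)
      = F.filter (fun u => u = v) ∪ F.filter (fun u => v < u) := by
    ext u
    simp only [Finset.mem_filter, Finset.mem_union]
    constructor
    · rintro ⟨hu, hle⟩
      rcases eq_or_lt_of_le hle with h | h
      · exact Or.inl ⟨hu, h.symm⟩
      · exact Or.inr ⟨hu, h⟩
    · rintro (⟨hu, h⟩ | ⟨hu, h⟩)
      exacts [⟨hu, h.ge⟩, ⟨hu, h.le⟩]
  have hdisj : Disjoint (F.filter (fun u => u = v)) (F.filter (fun u => v < u)) := by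
    rw [Finset.disjoint_left]
    intro a ha ha'
    have h1 : a = v := (Finset.mem_filter.mp ha).2
    have h2 : v < a := (Finset.mem_filter.mp ha').2
    exact absurd h1 (ne_of_gt h2)
  rw [hsplit, Finset.sum_union hdisj, Finset.filter_eq']
  by_cases hv : v ∈ F
  · rw [if_pos hv, Finset.sum_singleton]
  · rw [if_neg hv, Finset.sum_empty, h0 hv]

lemma abs_min_sub_min' (a b c d : ℝ) : |min a b - min c d| ≤ |a - c| + |b - d| :=
  (abs_min_sub_min_le_max a b c d).trans
    (max_le (le_add_of_nonneg_right (abs_nonneg _)) (le_add_of_nonneg_left (abs_nonneg _)))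


set_option maxHeartbeats 2000000 in
/-- For every `n` there is a constant `c_n` such that for every simplicial map
`g : X → Y` from an oriented `n`-dimensional simplicial complex `X`, the quotient map
`q : |X| × [0,1] → M_g` is `c_n`-Lipschitz, where `M_g` carries the uniform (`ℓ²`) metric
and `|X| × [0,1]` the product metric. In barycentric coordinates: for points `b, b'` of
the triangulated prism, whose images in `|X| × [0,1]` have `X`-coordinates
`v ↦ b(v,0)+b(v,1)` and height `∑_v b(v,1)`, the squared `ℓ²`-distance of `q(b), q(b')`
is at most `c² ·` the squared product-metric distance. -/
theorem quotient_map_to_mapping_cylinder_lipschitz (n : ℕ) :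
    ∃ c : ℝ, 0 ≤ c ∧
      ∀ (V W : Type) [LinearOrder V] [DecidableEq W]
        (K : AbsSC V) (L : AbsSC W) (g : V → W),
        (∀ σ ∈ K.faces, σ.card ≤ n + 1) →
        IsSimplicialMap K L g →
        ∀ b b' : V × Fin 2 → ℝ, InPrism K b → InPrism K b' →
          ∑' z : V ⊕ W, (cylProj g b z - cylProj g b' z) ^ 2 ≤
            c ^ 2 *
              ((∑' v : V, ((b (v, 0) + b (v, 1)) - (b' (v, 0) + b' (v, 1))) ^ 2) +
                ((∑' v : V, b (v, 1)) - ∑' v : V, b' (v, 1)) ^ 2) := by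
  refine ⟨100 * ((n : ℝ) + 1) ^ 2, by positivity, ?_⟩
  intro V W _ _ K L g hdim hg b b' hb hb'
  classical
  obtain ⟨hb0, τ, ⟨hτK, hτc⟩, hbs, hbsum⟩ := hb
  obtain ⟨hb'0, τ', ⟨hτ'K, hτ'c⟩, hb's, hb'sum⟩ := hb'
  set F : Finset V := (τ ∪ τ').image Prod.fst with hFdef
  have hFb : ∀ p, b p ≠ 0 → p.1 ∈ F := fun p hp =>
    Finset.mem_image_of_mem _ (Finset.mem_union_left _ (hbs p hp))
  have hFb' : ∀ p, b' p ≠ 0 → p.1 ∈ F := fun p hp =>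
    Finset.mem_image_of_mem _ (Finset.mem_union_right _ (hb's p hp))
  -- vanishing outside F
  have hz : ∀ v ∉ F, b (v,0) = 0 ∧ b (v,1) = 0 ∧ b' (v,0) = 0 ∧ b' (v,1) = 0 := by
    intro v hv
    refine ⟨?_, ?_, ?_, ?_⟩ <;>
      { by_contra h
        first
        | exact hv (hFb _ h)
        | exact hv (hFb' _ h) }
  -- cardinality bound
  have hNn : (F.card : ℝ) ≤ 2 * (n : ℝ) + 2 := by
    have h1 : F ⊆ τ.image Prod.fst ∪ τ'.image Prod.fst := by
      rw [hFdef, Finset.image_union]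
    have h2 : F.card ≤ (τ.image Prod.fst).card + (τ'.image Prod.fst).card :=
      (Finset.card_le_card h1).trans (Finset.card_union_le _ _)
    have h3 := hdim _ hτK
    have h4 := hdim _ hτ'K
    have : F.card ≤ 2 * n + 2 := by omega
    exact_mod_cast this
  set N : ℝ := (F.card : ℝ) with hNdef
  have hN0 : 0 ≤ N := Nat.cast_nonneg _
  -- abbreviations
  set x : V → ℝ := fun v => b (v,0) + b (v,1) with hxdef
  set x' : V → ℝ := fun v => b' (v,0) + b' (v,1) with hx'def
  set t : ℝ := ∑ v ∈ F, b (v,1) with htdef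
  set t' : ℝ := ∑ v ∈ F, b' (v,1) with ht'def
  set A : ℝ := ∑ v ∈ F, |x v - x' v| with hAdef
  set D2 : ℝ := ∑ v ∈ F, (x v - x' v) ^ 2 with hD2def
  set E2 : ℝ := ∑ v ∈ F, (b (v,1) - b' (v,1)) ^ 2 with hE2def
  -- tsum reductions on the RHS
  have htsum1 : (∑' v : V, b (v,1)) = t := by
    refine tsum_eq_sum ?_
    intro v hv; exact (hz v hv).2.1
  have htsum1' : (∑' v : V, b' (v,1)) = t' := by
    refine tsum_eq_sum ?_
    intro v hv; exact (hz v hv).2.2.2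
  have htsumD : (∑' v : V, ((b (v,0) + b (v,1)) - (b' (v,0) + b' (v,1))) ^ 2) = D2 := by
    refine tsum_eq_sum ?_
    intro v hv
    obtain ⟨h1, h2, h3, h4⟩ := hz v hv
    simp [h1, h2, h3, h4]
  -- cylProj at inr as a finite sum
  have hq : ∀ (bb : V × Fin 2 → ℝ), (∀ p, bb p ≠ 0 → p.1 ∈ F) → ∀ w : W,
      (∑' v : {v : V // g v = w}, bb ((v : V), 1))
        = ∑ v ∈ F.filter (fun v => g v = w), bb (v, 1) := by
    intro bb hbb w
    rw [← Finset.sum_subtype_eq_sum_filter]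
    refine tsum_eq_sum ?_
    intro v hv
    by_contra h
    exact hv (Finset.mem_subtype.2 (hbb ((v : V), 1) h))
  -- LHS as a finite sum
  set S : Finset (V ⊕ W) := F.image Sum.inl ∪ (F.image g).image Sum.inr with hSdef
  have hLHS : (∑' z : V ⊕ W, (cylProj g b z - cylProj g b' z) ^ 2)
      = ∑ z ∈ S, (cylProj g b z - cylProj g b' z) ^ 2 := by
    refine tsum_eq_sum ?_
    intro z hz'
    cases z with
    | inl v =>
      have hv : v ∉ F := by
        intro hvF
        exact hz' (Finset.mem_union_left _ (Finset.mem_image_of_mem _ hvF))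
      obtain ⟨h1, _, h3, _⟩ := hz v hv
      show (b (v,0) - b' (v,0)) ^ 2 = 0
      rw [h1, h3]; ring
    | inr w =>
      have hw : w ∉ F.image g := by
        intro hwF
        exact hz' (Finset.mem_union_right _ (Finset.mem_image_of_mem _ hwF))
      have hzero : ∀ (bb : V × Fin 2 → ℝ), (∀ p, bb p ≠ 0 → p.1 ∈ F) →
          cylProj g bb (Sum.inr w) = 0 := by
        intro bb hbb
        show (∑' v : {v : V // g v = w}, bb ((v : V), 1)) = 0
        rw [hq bb hbb w]
        apply Finset.sum_eq_zero
        intro v hvm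
        exfalso
        obtain ⟨hvF, hgv⟩ := Finset.mem_filter.mp hvm
        exact hw (Finset.mem_image.2 ⟨v, hvF, hgv⟩)
      show (cylProj g b (Sum.inr w) - cylProj g b' (Sum.inr w)) ^ 2 = 0
      rw [hzero b hFb, hzero b' hFb']; ring
  -- split the finite sum
  have hdisjS : Disjoint (F.image Sum.inl) ((F.image g).image (Sum.inr : W → V ⊕ W)) := by
    rw [Finset.disjoint_left]
    intro a ha ha'
    obtain ⟨v, _, rfl⟩ := Finset.mem_image.mp ha
    obtain ⟨w, _, h⟩ := Finset.mem_image.mp ha'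
    cases h
  have hsplit : ∑ z ∈ S, (cylProj g b z - cylProj g b' z) ^ 2
      = (∑ v ∈ F, (b (v,0) - b' (v,0)) ^ 2)
        + ∑ w ∈ F.image g, ((∑ v ∈ F.filter (fun v => g v = w), b (v,1))
            - ∑ v ∈ F.filter (fun v => g v = w), b' (v,1)) ^ 2 := by
    have e1 : ∑ z ∈ F.image Sum.inl, (cylProj g b z - cylProj g b' z) ^ 2
        = ∑ v ∈ F, (cylProj g b (Sum.inl v) - cylProj g b' (Sum.inl v)) ^ 2 :=
      Finset.sum_image (fun a _ c _ h => Sum.inl_injective h)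
    have e2 : ∑ z ∈ (F.image g).image Sum.inr, (cylProj g b z - cylProj g b' z) ^ 2
        = ∑ w ∈ F.image g, (cylProj g b (Sum.inr w) - cylProj g b' (Sum.inr w)) ^ 2 :=
      Finset.sum_image (fun a _ c _ h => Sum.inr_injective h)
    rw [hSdef, Finset.sum_union hdisjS, e1, e2]
    congr 1
    apply Finset.sum_congr rfl
    intro w _
    have h1 : cylProj g b (Sum.inr w) = ∑ v ∈ F.filter (fun v => g v = w), b (v,1) := hq b hFb w
    have h2 : cylProj g b' (Sum.inr w) = ∑ v ∈ F.filter (fun v => g v = w), b' (v,1) := hq b' hFb' w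
    rw [h1, h2]
  -- pointwise bound on level-1 differences
  have hpt : ∀ v : V, |b (v,1) - b' (v,1)| ≤ 2 * |t - t'| + 2 * A := by
    intro v
    have hup_le : ∀ ⦃u u' : V⦄, u ≤ u' → v ≤ u → v ≤ u' := fun u u' h h' => h'.trans h
    have hup_lt : ∀ ⦃u u' : V⦄, u ≤ u' → v < u → v < u' := fun u u' h h' => h'.trans_le h
    have k1 := key_min τ hτc b hb0 hbs F (fun u => v ≤ u) hup_le
    have k2 := key_min τ hτc b hb0 hbs F (fun u => v < u) hup_lt
    have k1' := key_min τ' hτ'c b' hb'0 hb's F (fun u => v ≤ u) hup_le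
    have k2' := key_min τ' hτ'c b' hb'0 hb's F (fun u => v < u) hup_lt
    have hf := filter_le_sum F v (fun u => b (u,1)) (fun hv => (hz v hv).2.1)
    have hf' := filter_le_sum F v (fun u => b' (u,1)) (fun hv => (hz v hv).2.2.2)
    set Tle : ℝ := ∑ u ∈ F.filter (fun u => v ≤ u), x u with hTle
    set Tlt : ℝ := ∑ u ∈ F.filter (fun u => v < u), x u with hTlt
    set Tle' : ℝ := ∑ u ∈ F.filter (fun u => v ≤ u), x' u with hTle'
    set Tlt' : ℝ := ∑ u ∈ F.filter (fun u => v < u), x' u with hTlt'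
    have hbv : b (v,1) = min t Tle - min t Tlt := by
      rw [hTle, hTlt, hxdef]
      simp only []
      rw [k1, k2]
      linarith [hf]
    have hbv' : b' (v,1) = min t' Tle' - min t' Tlt' := by
      rw [hTle', hTlt', hx'def]
      simp only []
      rw [k1', k2']
      linarith [hf']
    have hTledif : |Tle - Tle'| ≤ A := by
      rw [hTle, hTle', ← Finset.sum_sub_distrib]
      refine (Finset.abs_sum_le_sum_abs _ _).trans ?_
      rw [hAdef]
      exact Finset.sum_le_sum_of_subset_of_nonneg (Finset.filter_subset _ _)
        (fun _ _ _ => abs_nonneg _)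
    have hTltdif : |Tlt - Tlt'| ≤ A := by
      rw [hTlt, hTlt', ← Finset.sum_sub_distrib]
      refine (Finset.abs_sum_le_sum_abs _ _).trans ?_
      rw [hAdef]
      exact Finset.sum_le_sum_of_subset_of_nonneg (Finset.filter_subset _ _)
        (fun _ _ _ => abs_nonneg _)
    have h1 : |min t Tle - min t' Tle'| ≤ |t - t'| + |Tle - Tle'| := abs_min_sub_min' _ _ _ _
    have h2 : |min t Tlt - min t' Tlt'| ≤ |t - t'| + |Tlt - Tlt'| := abs_min_sub_min' _ _ _ _
    have heq : b (v,1) - b' (v,1)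
        = (min t Tle - min t' Tle') - (min t Tlt - min t' Tlt') := by
      rw [hbv, hbv']; ring
    calc |b (v,1) - b' (v,1)|
        ≤ |min t Tle - min t' Tle'| + |min t Tlt - min t' Tlt'| := by
          rw [heq]; exact abs_sub _ _
      _ ≤ (|t - t'| + |Tle - Tle'|) + (|t - t'| + |Tlt - Tlt'|) := add_le_add h1 h2
      _ ≤ 2 * |t - t'| + 2 * A := by linarith
  -- derived bounds
  have hA2 : A ^ 2 ≤ N * D2 := by
    rw [hAdef, hD2def, hNdef]
    calc (∑ v ∈ F, |x v - x' v|) ^ 2 ≤ (F.card : ℝ) * ∑ v ∈ F, |x v - x' v| ^ 2 :=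
          sq_sum_le_card_mul_sum_sq
      _ = (F.card : ℝ) * ∑ v ∈ F, (x v - x' v) ^ 2 := by
          congr 1; exact Finset.sum_congr rfl fun v _ => sq_abs _
  have hE2b : E2 ≤ N * (8 * (t - t') ^ 2 + 8 * A ^ 2) := by
    rw [hE2def]
    have hbd : ∀ v ∈ F, (b (v,1) - b' (v,1)) ^ 2 ≤ 8 * (t - t') ^ 2 + 8 * A ^ 2 := by
      intro v _
      have h := hpt v
      have habs : 0 ≤ |t - t'| := abs_nonneg _
      have habs2 : 0 ≤ |b (v,1) - b' (v,1)| := abs_nonneg _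
      have hsq : (b (v,1) - b' (v,1)) ^ 2 = |b (v,1) - b' (v,1)| ^ 2 := (sq_abs _).symm
      have hsq2 : (t - t') ^ 2 = |t - t'| ^ 2 := (sq_abs _).symm
      have hA0 : 0 ≤ A := Finset.sum_nonneg fun _ _ => abs_nonneg _
      nlinarith [sq_nonneg (|t - t'| - A)]
    calc ∑ v ∈ F, (b (v,1) - b' (v,1)) ^ 2 ≤ ∑ _v ∈ F, (8 * (t - t') ^ 2 + 8 * A ^ 2) :=
          Finset.sum_le_sum hbd
      _ = N * (8 * (t - t') ^ 2 + 8 * A ^ 2) := by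
          rw [Finset.sum_const, nsmul_eq_mul, hNdef]
  have hD2nn : 0 ≤ D2 := Finset.sum_nonneg fun _ _ => sq_nonneg _
  have hE2nn : 0 ≤ E2 := Finset.sum_nonneg fun _ _ => sq_nonneg _
  -- bottom part
  have hbot : (∑ v ∈ F, (b (v,0) - b' (v,0)) ^ 2) ≤ 2 * D2 + 2 * E2 := by
    have hptw : ∀ v ∈ F, (b (v,0) - b' (v,0)) ^ 2
        ≤ 2 * (x v - x' v) ^ 2 + 2 * (b (v,1) - b' (v,1)) ^ 2 := by
      intro v _
      have hx1 : x v = b (v,0) + b (v,1) := rfl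
      have hx2 : x' v = b' (v,0) + b' (v,1) := rfl
      rw [hx1, hx2]
      nlinarith [sq_nonneg ((b (v,0) + b (v,1) - (b' (v,0) + b' (v,1))) + (b (v,1) - b' (v,1)))]
    calc (∑ v ∈ F, (b (v,0) - b' (v,0)) ^ 2)
        ≤ ∑ v ∈ F, (2 * (x v - x' v) ^ 2 + 2 * (b (v,1) - b' (v,1)) ^ 2) :=
          Finset.sum_le_sum hptw
      _ = 2 * D2 + 2 * E2 := by
          rw [Finset.sum_add_distrib, ← Finset.mul_sum, ← Finset.mul_sum, hD2def, hE2def]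
  -- top part
  have htop : (∑ w ∈ F.image g, ((∑ v ∈ F.filter (fun v => g v = w), b (v,1))
      - ∑ v ∈ F.filter (fun v => g v = w), b' (v,1)) ^ 2) ≤ N * E2 := by
    have hw : ∀ w ∈ F.image g, ((∑ v ∈ F.filter (fun v => g v = w), b (v,1))
        - ∑ v ∈ F.filter (fun v => g v = w), b' (v,1)) ^ 2
        ≤ N * ∑ v ∈ F.filter (fun v => g v = w), (b (v,1) - b' (v,1)) ^ 2 := by
      intro w _
      rw [← Finset.sum_sub_distrib]
      calc (∑ v ∈ F.filter (fun v => g v = w), (b (v,1) - b' (v,1))) ^ 2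
          ≤ ((F.filter (fun v => g v = w)).card : ℝ)
            * ∑ v ∈ F.filter (fun v => g v = w), (b (v,1) - b' (v,1)) ^ 2 :=
            sq_sum_le_card_mul_sum_sq
        _ ≤ N * ∑ v ∈ F.filter (fun v => g v = w), (b (v,1) - b' (v,1)) ^ 2 := by
            apply mul_le_mul_of_nonneg_right
            · rw [hNdef]
              exact_mod_cast Finset.card_le_card (Finset.filter_subset _ _)
            · exact Finset.sum_nonneg fun _ _ => sq_nonneg _
    calc (∑ w ∈ F.image g, ((∑ v ∈ F.filter (fun v => g v = w), b (v,1))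
        - ∑ v ∈ F.filter (fun v => g v = w), b' (v,1)) ^ 2)
        ≤ ∑ w ∈ F.image g, N * ∑ v ∈ F.filter (fun v => g v = w), (b (v,1) - b' (v,1)) ^ 2 :=
          Finset.sum_le_sum hw
      _ = N * ∑ w ∈ F.image g, ∑ v ∈ F.filter (fun v => g v = w), (b (v,1) - b' (v,1)) ^ 2 :=
          (Finset.mul_sum _ _ _).symm
      _ = N * E2 := by
          rw [Finset.sum_fiberwise_of_maps_to (fun v hv => Finset.mem_image_of_mem g hv), hE2def]
  -- final combination
  rw [hLHS, hsplit, htsumD, htsum1, htsum1']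
  have hmain : (∑ v ∈ F, (b (v,0) - b' (v,0)) ^ 2)
      + (∑ w ∈ F.image g, ((∑ v ∈ F.filter (fun v => g v = w), b (v,1))
          - ∑ v ∈ F.filter (fun v => g v = w), b' (v,1)) ^ 2)
      ≤ 2 * D2 + (2 + N) * E2 := by linarith
  clear_value N x x' t t' A D2 E2 F S
  have hdtnn : 0 ≤ (t - t') ^ 2 := sq_nonneg _
  have hm1 : (1 : ℝ) ≤ (n : ℝ) + 1 := by
    have : (0 : ℝ) ≤ (n : ℝ) := Nat.cast_nonneg _
    linarith
  set m : ℝ := (n : ℝ) + 1 with hmdef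
  have hNm : N ≤ 2 * m := by rw [hmdef]; linarith
  have hE2c : E2 ≤ 8 * N * (t - t') ^ 2 + 8 * N ^ 2 * D2 := by
    have step : N * (8 * (t - t') ^ 2 + 8 * A ^ 2) ≤ N * (8 * (t - t') ^ 2 + 8 * (N * D2)) :=
      mul_le_mul_of_nonneg_left (by linarith [hA2]) hN0
    calc E2 ≤ N * (8 * (t - t') ^ 2 + 8 * A ^ 2) := hE2b
      _ ≤ N * (8 * (t - t') ^ 2 + 8 * (N * D2)) := step
      _ = 8 * N * (t - t') ^ 2 + 8 * N ^ 2 * D2 := by ring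
  have hfinal : 2 * D2 + (2 + N) * E2
      ≤ (100 * m ^ 2) ^ 2 * (D2 + (t - t') ^ 2) := by
    have hm0 : (0:ℝ) ≤ m := by linarith
    have hm1m : (1:ℝ) ≤ m := by rw [hmdef]; exact hm1
    have hp4 : (1:ℝ) ≤ m ^ 4 := one_le_pow₀ hm1m
    have hp2 : m ^ 2 ≤ m ^ 4 := pow_le_pow_right₀ hm1m (by norm_num)
    have hp3 : m ^ 3 ≤ m ^ 4 := pow_le_pow_right₀ hm1m (by norm_num)
    have hN2 : N ^ 2 ≤ 4 * m ^ 2 := by nlinarith [hNm, hN0]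
    have a1 : N * (t - t') ^ 2 ≤ (2 * m) * (t - t') ^ 2 :=
      mul_le_mul_of_nonneg_right hNm hdtnn
    have a2 : N ^ 2 * D2 ≤ (4 * m ^ 2) * D2 := mul_le_mul_of_nonneg_right hN2 hD2nn
    have hE2d : E2 ≤ 16 * m * (t - t') ^ 2 + 32 * m ^ 2 * D2 := by
      calc E2 ≤ 8 * N * (t - t') ^ 2 + 8 * N ^ 2 * D2 := hE2c
        _ ≤ 8 * ((2 * m) * (t - t') ^ 2) + 8 * ((4 * m ^ 2) * D2) := by linarith
        _ = 16 * m * (t - t') ^ 2 + 32 * m ^ 2 * D2 := by ring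
    have h2N4m : (2 + N) ≤ 4 * m := by linarith
    have h5 : (2 + N) * E2 ≤ (4 * m) * (16 * m * (t - t') ^ 2 + 32 * m ^ 2 * D2) := by
      calc (2 + N) * E2 ≤ (4 * m) * E2 := mul_le_mul_of_nonneg_right h2N4m hE2nn
        _ ≤ (4 * m) * (16 * m * (t - t') ^ 2 + 32 * m ^ 2 * D2) :=
          mul_le_mul_of_nonneg_left hE2d (by linarith)
    have h6 : (4 * m) * (16 * m * (t - t') ^ 2 + 32 * m ^ 2 * D2)
        = 64 * (m ^ 2 * (t - t') ^ 2) + 128 * (m ^ 3 * D2) := by ring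
    have hb1 : m ^ 2 * (t - t') ^ 2 ≤ m ^ 4 * (t - t') ^ 2 :=
      mul_le_mul_of_nonneg_right hp2 hdtnn
    have hb2 : m ^ 3 * D2 ≤ m ^ 4 * D2 := mul_le_mul_of_nonneg_right hp3 hD2nn
    have hb3 : D2 ≤ m ^ 4 * D2 := by
      calc D2 = 1 * D2 := (one_mul _).symm
        _ ≤ m ^ 4 * D2 := mul_le_mul_of_nonneg_right hp4 hD2nn
    have hexp : (100 * m ^ 2) ^ 2 * (D2 + (t - t') ^ 2)
        = 10000 * (m ^ 4 * D2) + 10000 * (m ^ 4 * (t - t') ^ 2) := by ring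
    rw [hexp]
    have hnn1 : 0 ≤ m ^ 4 * D2 := mul_nonneg (by positivity) hD2nn
    have hnn2 : 0 ≤ m ^ 4 * (t - t') ^ 2 := mul_nonneg (by positivity) hdtnn
    linarith
  calc (∑ v ∈ F, (b (v,0) - b' (v,0)) ^ 2)
      + (∑ w ∈ F.image g, ((∑ v ∈ F.filter (fun v => g v = w), b (v,1))
          - ∑ v ∈ F.filter (fun v => g v = w), b' (v,1)) ^ 2)
      ≤ 2 * D2 + (2 + N) * E2 := hmain
    _ ≤ (100 * m ^ 2) ^ 2 * (D2 + (t - t') ^ 2) := hfinal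
    _ = (100 * ((n : ℝ) + 1) ^ 2) ^ 2 * (D2 + (t - t') ^ 2) := by rw [hmdef]
end

section
/- Every tree (with its geodesic path metric) has asymptotic dimension at most 1; in particular, for a group Γ acting by isometries on a tree X with base point x₀, the orbit Γ·x₀ satisfies asdim(Γ·x₀) ≤ 1. -/
open Set

/-- Asymptotic dimension `≤ n` of a set with a distance function `ρ`. -/
def ASDimLEdist {Z : Type*} (ρ : Z → Z → ℝ) (n : ℕ) : Prop :=
  ∀ d : ℝ, 0 < d → ∃ 𝔘 : Fin (n + 1) → Set (Set Z),
    (∀ i, (∃ R : ℝ, ∀ U ∈ 𝔘 i, ∀ x ∈ U, ∀ y ∈ U, ρ x y ≤ R) ∧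
      (∀ U ∈ 𝔘 i, ∀ V ∈ 𝔘 i, U ≠ V → ∀ x ∈ U, ∀ y ∈ V, d ≤ ρ x y)) ∧
    ∀ z : Z, ∃ i, ∃ U ∈ 𝔘 i, z ∈ U

section TreeGeometry

open SimpleGraph

variable {X : Type*} {T : SimpleGraph X}


/-- Along a shortest walk, distances between intermediate vertices are given by index
differences. -/
lemma getVert_dist (hc : T.Connected) :
    ∀ {u v : X} (p : T.Walk u v), p.length = T.dist u v →
      ∀ i s : ℕ, i ≤ s → s ≤ p.length →
        T.dist (p.getVert i) (p.getVert s) = s - i := by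
  intro u v p
  induction p with
  | nil =>
    intro _ i s his hs
    simp only [Walk.length_nil] at hs
    have hs0 : s = 0 := by omega
    have hi0 : i = 0 := by omega
    subst hs0; subst hi0; simp
  | @cons u y v h r ih =>
    intro hp i s his hs
    have hr : r.length = T.dist y v := by
      have h1 : T.dist y v ≤ r.length := T.dist_le r
      have h2 : T.dist u v ≤ T.dist u y + T.dist y v := hc.dist_triangle
      have h3 : T.dist u y ≤ 1 := by
        have := T.dist_le (Walk.cons h Walk.nil)
        simpa using this
      simp only [Walk.length_cons] at hp
      omega
    match i, s with
    | 0, 0 => simp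
    | 0, (t+1) =>
      simp only [Walk.getVert_zero, Walk.getVert_cons_succ]
      have h1 : T.dist y (r.getVert t) = t - 0 := by
        have := ih hr 0 t (by omega) (by simpa [Walk.length_cons] using hs)
        simpa [Walk.getVert_zero] using this
      have h2 : T.dist (r.getVert t) v = r.length - t := by
        have := ih hr t r.length (by simpa [Walk.length_cons] using hs) le_rfl
        simpa [Walk.getVert_length] using this
      have h3 : T.dist u (r.getVert t) ≤ T.dist u y + T.dist y (r.getVert t) := hc.dist_triangle
      have h4 : T.dist u v ≤ T.dist u (r.getVert t) + T.dist (r.getVert t) v := hc.dist_triangle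
      have h5 : T.dist u y ≤ 1 := by
        have := T.dist_le (Walk.cons h Walk.nil); simpa using this
      simp only [Walk.length_cons] at hp hs
      omega
    | (j+1), (t+1) =>
      simp only [Walk.getVert_cons_succ]
      have hr' := ih hr j t (by omega) (by simpa [Walk.length_cons] using hs)
      simpa using hr'

/-- uniqueness of the point at a given level on a geodesic, in a tree -/
lemma unique_geo (hT : T.IsTree) {x₀ v : X} (p : T.Walk x₀ v)
    (hp : p.length = T.dist x₀ v) (c : X) (i : ℕ) (hc1 : T.dist x₀ c = i)
    (hc2 : T.dist x₀ c + T.dist c v = T.dist x₀ v) : c = p.getVert i := by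
  have hc := hT.isConnected
  obtain ⟨q, hq⟩ := hc.exists_walk_length_eq_dist x₀ c
  obtain ⟨r, hr⟩ := hc.exists_walk_length_eq_dist c v
  have hW : (q.append r).length = T.dist x₀ v := by
    rw [Walk.length_append]; omega
  have hWp : (q.append r).IsPath := (q.append r).isPath_of_length_eq_dist hW
  have hpp : p.IsPath := p.isPath_of_length_eq_dist hp
  obtain ⟨P, _, hPuniq⟩ := hT.existsUnique_path x₀ v
  have heq : p = q.append r := by rw [hPuniq p hpp, hPuniq (q.append r) hWp]
  have hql : q.length = i := by omega
  rw [heq, Walk.getVert_append, if_neg (by omega), hql, Nat.sub_self, Walk.getVert_zero]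

/-- common prefixes of geodesics from the root -/
lemma prefix_eq (hT : T.IsTree) {x₀ v w : X} (p : T.Walk x₀ v) (q : T.Walk x₀ w)
    (hp : p.length = T.dist x₀ v) (hq : q.length = T.dist x₀ w) (s : ℕ)
    (hs1 : s ≤ p.length) (hs2 : s ≤ q.length) (hpq : p.getVert s = q.getVert s) :
    ∀ i ≤ s, p.getVert i = q.getVert i := by
  have hc := hT.isConnected
  intro i hi
  set u := p.getVert s with hu
  obtain ⟨pu, hpu⟩ := hc.exists_walk_length_eq_dist x₀ u
  have hxu : T.dist x₀ u = s := by
    have := getVert_dist hc p hp 0 s (by omega) hs1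
    simpa [Walk.getVert_zero] using this
  have h1 : p.getVert i = pu.getVert i := by
    apply unique_geo hT pu hpu
    · have := getVert_dist hc p hp 0 i (by omega) (by omega)
      simpa [Walk.getVert_zero] using this
    · have h2 := getVert_dist hc p hp 0 i (by omega) (by omega)
      have h3 := getVert_dist hc p hp i s hi hs1
      simp only [Walk.getVert_zero] at h2
      rw [h2, ← hu] at *
      omega
  have h2 : q.getVert i = pu.getVert i := by
    apply unique_geo hT pu hpu
    · have := getVert_dist hc q hq 0 i (by omega) (by omega)
      simpa [Walk.getVert_zero] using this
    · have h2 := getVert_dist hc q hq 0 i (by omega) (by omega)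
      have h3 := getVert_dist hc q hq i s hi hs2
      simp only [Walk.getVert_zero] at h2
      rw [hpq] at *
      rw [h2] at *
      omega
  rw [h1, h2]

/-- separation: if the geodesics from the root to `v` and `w` differ at level `m`,
then `v` and `w` are far apart. -/
lemma tree_sep (hT : T.IsTree) {x₀ v w : X} (p : T.Walk x₀ v) (q : T.Walk x₀ w)
    (hp : p.length = T.dist x₀ v) (hq : q.length = T.dist x₀ w) (m : ℕ)
    (hm1 : m ≤ p.length) (hm2 : m ≤ q.length) (hne : p.getVert m ≠ q.getVert m) :
    p.length + q.length + 2 ≤ T.dist v w + 2 * m := by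
  classical
  have hc := hT.isConnected
  set n1 := p.length with hn1
  set n2 := q.length with hn2
  set P : ℕ → Prop := fun j => j ≤ n1 ∧ j ≤ n2 ∧ p.getVert j = q.getVert j with hP
  have h0 : P 0 := ⟨Nat.zero_le _, Nat.zero_le _, by simp⟩
  set j := Nat.findGreatest P (min n1 n2) with hj
  have hjspec : P j := Nat.findGreatest_spec (Nat.zero_le _) h0
  obtain ⟨hj1, hj2, hjP⟩ := hjspec
  -- j < m
  have hjm : j < m := by
    by_contra hcon
    push_neg at hcon
    exact hne (prefix_eq hT p q hp hq j hj1 hj2 hjP m hcon)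
  set a := p.getVert j with ha
  have hxa : T.dist x₀ a = j := by
    have := getVert_dist hc p hp 0 j (Nat.zero_le _) hj1
    simpa using this
  have hav : T.dist a v = n1 - j := by
    have := getVert_dist hc p hp j n1 hj1 le_rfl
    simpa [hn1, Walk.getVert_length] using this
  have haw : T.dist a w = n2 - j := by
    have := getVert_dist hc q hq j n2 hj2 le_rfl
    simpa [hn2, Walk.getVert_length, ← hjP] using this
  obtain ⟨r1, hr1⟩ := hc.exists_walk_length_eq_dist a v
  obtain ⟨r2, hr2⟩ := hc.exists_walk_length_eq_dist a w
  have hr1p : r1.IsPath := r1.isPath_of_length_eq_dist hr1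
  have hr2p : r2.IsPath := r2.isPath_of_length_eq_dist hr2
  -- W is a path from v to w
  set W := r1.reverse.append r2 with hW
  have hWlen : W.length = (n1 - j) + (n2 - j) := by
    simp [hW, Walk.length_append, Walk.length_reverse, hr1, hr2, hav, haw]
  have key : ∀ u, u ∈ r1.support → u ∈ r2.support → u = a := by
    intro u hu1 hu2
    obtain ⟨s, hs, hsle⟩ := Walk.mem_support_iff_exists_getVert.mp hu1
    obtain ⟨t, ht, htle⟩ := Walk.mem_support_iff_exists_getVert.mp hu2
    rw [hr1, hav] at hsle
    rw [hr2, haw] at htle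
    have hau_s : T.dist a u = s := by
      have := getVert_dist hc r1 hr1 0 s (Nat.zero_le _) (by rw [hr1, hav]; exact hsle)
      simpa [hs] using this
    have hau_t : T.dist a u = t := by
      have := getVert_dist hc r2 hr2 0 t (Nat.zero_le _) (by rw [hr2, haw]; exact htle)
      simpa [ht] using this
    have hst : s = t := by omega
    have huv : T.dist u v = (n1 - j) - s := by
      have := getVert_dist hc r1 hr1 s (n1 - j) (by omega) (by rw [hr1, hav])
      rw [← hav, ← hr1, Walk.getVert_length, hs, hr1, hav] at this
      exact this
    have huw : T.dist u w = (n2 - j) - t := by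
      have := getVert_dist hc r2 hr2 t (n2 - j) (by omega) (by rw [hr2, haw])
      rw [← haw, ← hr2, Walk.getVert_length, ht, hr2, haw] at this
      exact this
    have hxu_le : T.dist x₀ u ≤ j + s := by
      calc T.dist x₀ u ≤ T.dist x₀ a + T.dist a u := hc.dist_triangle
        _ = j + s := by rw [hxa, hau_s]
    have hxu_ge : j + s ≤ T.dist x₀ u := by
      have h4 : T.dist x₀ v ≤ T.dist x₀ u + T.dist u v := hc.dist_triangle
      rw [← hp, huv] at h4
      omega
    have hxu : T.dist x₀ u = j + s := by omega
    have hu_p : u = p.getVert (j + s) := by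
      apply unique_geo hT p hp u (j + s) hxu
      rw [hxu, huv, ← hp]; omega
    have hu_q : u = q.getVert (j + s) := by
      apply unique_geo hT q hq u (j + s) hxu
      rw [hxu, huw, ← hq, hst]; omega
    have hPs : P (j + s) := ⟨by omega, by omega, by rw [← hu_p, ← hu_q]⟩
    have : j + s ≤ j := Nat.le_findGreatest (by omega) hPs
    have hs0 : s = 0 := by omega
    rw [hs0] at hs
    rw [← hs]; simp
  have hWp : W.IsPath := by
    rw [Walk.isPath_def _, hW, Walk.support_append, List.nodup_append]
    refine ⟨?_, ?_, ?_⟩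
    · rw [Walk.support_reverse]
      exact List.nodup_reverse.mpr ((Walk.isPath_def _).mp hr1p)
    · have := (Walk.isPath_def _).mp hr2p
      rw [r2.support_eq_cons] at this
      exact this.of_cons
    · intro u hu1 b hu2 hub; subst hub
      have hu1' : u ∈ r1.support := by
        rw [Walk.support_reverse, List.mem_reverse] at hu1; exact hu1
      have hu2' : u ∈ r2.support := by
        rw [r2.support_eq_cons]; exact List.mem_cons_of_mem _ hu2
      have hua := key u hu1' hu2'
      have := (Walk.isPath_def _).mp hr2p
      rw [r2.support_eq_cons] at this
      rw [List.nodup_cons] at this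
      exact this.1 (hua ▸ hu2)
  -- W equals the unique path, which is the shortest one
  obtain ⟨r, hrlen⟩ := hc.exists_walk_length_eq_dist v w
  have hrp : r.IsPath := r.isPath_of_length_eq_dist hrlen
  obtain ⟨Q, _, hQuniq⟩ := hT.existsUnique_path v w
  have : W = r := by rw [hQuniq W hWp, hQuniq r hrp]
  have hdvw : T.dist v w = (n1 - j) + (n2 - j) := by
    rw [← hrlen, ← this, hWlen]
  omega

lemma tree_asdim (hT : T.IsTree) (x₀ : X) :
    ASDimLEdist (fun u v : X => (T.dist u v : ℝ)) 1 := by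
  classical
  have hc := hT.isConnected
  intro d hd
  set D : ℕ := ⌈d⌉₊ with hDdef
  have hD1 : 1 ≤ D := Nat.one_le_iff_ne_zero.mpr (by
    simp [hDdef, Nat.ceil_eq_zero, not_le, hd])
  have hDd : d ≤ (D : ℝ) := Nat.le_ceil d
  set h : X → ℕ := fun v => T.dist x₀ v with hh
  set k : X → ℕ := fun v => h v / D with hk
  set m : X → ℕ := fun v => (k v - 1) * D with hm
  -- chosen shortest walks
  have pths : ∀ v : X, ∃ p : T.Walk x₀ v, p.length = T.dist x₀ v :=
    fun v => hc.exists_walk_length_eq_dist x₀ v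
  choose pth hpth using pths
  set proj : X → X := fun v => (pth v).getVert (m v) with hproj
  -- basic facts
  have hmk : ∀ v, m v ≤ k v * D := fun v => Nat.mul_le_mul_right D (Nat.sub_le _ _)
  have hkD : ∀ v, k v * D ≤ h v := fun v => Nat.div_mul_le_self _ _
  have hhub : ∀ v, h v < k v * D + D := by
    intro v
    have h1 := Nat.div_add_mod (h v) D
    rw [Nat.mul_comm] at h1
    have h2 : h v % D < D := Nat.mod_lt _ (by omega)
    simp only [hk]
    omega
  have hmh : ∀ v, m v ≤ h v := fun v => le_trans (hmk v) (hkD v)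
  have hdistproj : ∀ v, T.dist (proj v) v = h v - m v := by
    intro v
    have := getVert_dist hc (pth v) (hpth v) (m v) (pth v).length
      (by rw [hpth v]; exact hmh v) le_rfl
    rw [Walk.getVert_length, hpth v] at this
    exact this
  have hdistproj' : ∀ v, T.dist x₀ (proj v) = m v := by
    intro v
    have := getVert_dist hc (pth v) (hpth v) 0 (m v) (Nat.zero_le _)
      (by rw [hpth v]; exact hmh v)
    simpa using this
  -- clusters
  set C : X → Set X := fun v => {w | k w = k v ∧ proj w = proj v} with hC
  have hCmem : ∀ v, v ∈ C v := fun v => ⟨rfl, rfl⟩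
  have hCeq : ∀ v x, x ∈ C v → C x = C v := by
    intro v x hx
    ext w
    simp only [hC, Set.mem_setOf_eq] at hx ⊢
    constructor
    · rintro ⟨h1, h2⟩; exact ⟨h1.trans hx.1, h2.trans hx.2⟩
    · rintro ⟨h1, h2⟩; exact ⟨h1.trans hx.1.symm, h2.trans hx.2.symm⟩
  refine ⟨fun i => {A | ∃ v, A = C v ∧ k v % 2 = i.val}, fun i => ⟨⟨4 * D, ?_⟩, ?_⟩, ?_⟩
  · -- boundedness
    rintro U ⟨v, rfl, -⟩ x hx y hy
    have hxy : T.dist x y ≤ T.dist x (proj x) + T.dist (proj x) y := hc.dist_triangle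
    have h1 : T.dist x (proj x) = h x - m x := by rw [T.dist_comm]; exact hdistproj x
    have h2 : proj x = proj y := hx.2.trans hy.2.symm
    have h3 : T.dist (proj x) y = h y - m y := by rw [h2]; exact hdistproj y
    have hb : ∀ z : X, h z - m z < 2 * D := by
      intro z
      have := hhub z
      have := hmk z
      have : k z * D ≤ m z + D := by
        rcases Nat.eq_zero_or_pos (k z) with h0 | h0
        · simp [hm, h0]
        · have : m z = k z * D - D := by
            simp only [hm]
            rw [Nat.sub_mul, one_mul]
          omega
      have := hhub z
      omega
    have hbx := hb x
    have hby := hb y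
    have : T.dist x y ≤ 4 * D := by omega
    calc (T.dist x y : ℝ) ≤ ((4 * D : ℕ) : ℝ) := by exact_mod_cast this
      _ = 4 * D := by push_cast; ring
  · -- separation
    rintro U ⟨v, rfl, hv⟩ V ⟨w, rfl, hw⟩ hUV x hx y hy
    have hCx : C x = C v := hCeq v x hx
    have hCy : C y = C w := hCeq w y hy
    have hkx : k x % 2 = k y % 2 := by
      rw [hx.1, hy.1, hv, hw]
    have hCxy : C x ≠ C y := by rw [hCx, hCy]; exact hUV
    have hsufficient : (D : ℕ) + 1 ≤ T.dist x y ∨ 2 * D + 2 ≤ T.dist x y → d ≤ (T.dist x y : ℝ) := by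
      rintro (h1 | h1) <;>
      · refine hDd.trans ?_
        exact_mod_cast by omega
    apply hsufficient
    rcases eq_or_ne (k x) (k y) with hkeq | hkne
    · -- same annulus: projections differ
      right
      have hprojne : proj x ≠ proj y := by
        intro hcon
        exact hCxy (by ext w; simp only [hC, Set.mem_setOf_eq, hkeq, hcon])
      have hK : 1 ≤ k x := by
        by_contra hcon
        push_neg at hcon
        have hk0 : k x = 0 := by omega
        apply hprojne
        simp only [hproj, hm, hk0, ← hkeq, Nat.zero_sub, Nat.zero_mul]
        simp
      have hmm : m x = m y := by simp only [hm, hkeq]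
      have := tree_sep hT (pth x) (pth y) (hpth x) (hpth y) (m x)
        (by rw [hpth x]; exact hmh x) (by rw [hpth y, hmm]; exact hmh y)
        (by simp only [hproj] at hprojne; rw [← hmm] at hprojne; exact hprojne)
      rw [hpth x, hpth y] at this
      -- h x ≥ k x * D ≥ m x + D, similarly y
      have e1 : m x + D ≤ h x := by
        have : m x + D = k x * D := by
          obtain ⟨K, hK'⟩ := Nat.exists_eq_add_of_le hK
          simp only [hm, hK', Nat.add_sub_cancel_left]
          ring
        rw [this]; exact hkD x
      have e2 : m x + D ≤ h y := by
        have : m x + D = k y * D := by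
          rw [hmm]
          obtain ⟨K, hK'⟩ := Nat.exists_eq_add_of_le (hkeq ▸ hK)
          simp only [hm, hK', Nat.add_sub_cancel_left]
          ring
        rw [this]; exact hkD y
      simp only [hh] at this e1 e2 ⊢
      omega
    · -- different annuli, same parity: k differ by ≥ 2
      left
      have htri : h y ≤ h x + T.dist x y := by
        have := hc.dist_triangle (u := x₀) (v := x) (w := y)
        simpa [hh] using this
      have htri' : h x ≤ h y + T.dist x y := by
        have h1 := hc.dist_triangle (u := x₀) (v := y) (w := x)
        rw [SimpleGraph.dist_comm (G := T) (u := y) (v := x)] at h1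
        simpa [hh] using h1
      have hk2 : k x + 2 ≤ k y ∨ k y + 2 ≤ k x := by omega
      rcases hk2 with h2 | h2
      · have e1 : k x * D + 2 * D ≤ k y * D := by
          have := Nat.mul_le_mul_right D h2
          calc k x * D + 2 * D = (k x + 2) * D := by ring
            _ ≤ k y * D := this
        have e2 := hkD y
        have e3 := hhub x
        omega
      · have e1 : k y * D + 2 * D ≤ k x * D := by
          have := Nat.mul_le_mul_right D h2
          calc k y * D + 2 * D = (k y + 2) * D := by ring
            _ ≤ k x * D := this
        have e2 := hkD x
        have e3 := hhub y
        omega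
  · -- coverage
    intro z
    exact ⟨⟨k z % 2, by omega⟩, C z, ⟨z, rfl, rfl⟩, hCmem z⟩

end TreeGeometry

/-- asymptotic dimension bounds pass to subspaces -/
lemma ASDimLEdist.restrict {Z : Type*} {ρ : Z → Z → ℝ} {n : ℕ} (hZ : ASDimLEdist ρ n)
    (S : Set Z) : ASDimLEdist (fun a b : S => ρ a b) n := by
  intro d hd
  obtain ⟨𝔘, h𝔘⟩ := hZ d hd
  refine ⟨fun i => (fun U => (Subtype.val ⁻¹' U : Set S)) '' 𝔘 i, fun i => ⟨?_, ?_⟩, ?_⟩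
  · obtain ⟨R, hR⟩ := ((h𝔘.1) i).1
    exact ⟨R, by rintro U' ⟨U, hU, rfl⟩ x hx y hy; exact hR U hU x hx y hy⟩
  · rintro U' ⟨U, hU, rfl⟩ V' ⟨V, hV, rfl⟩ hne x hx y hy
    have hUV : U ≠ V := by rintro rfl; exact hne rfl
    exact ((h𝔘.1) i).2 U hU V hV hUV x hx y hy
  · intro z
    obtain ⟨i, U, hU, hz⟩ := h𝔘.2 (z : Z)
    exact ⟨i, Subtype.val ⁻¹' U, ⟨U, hU, rfl⟩, hz⟩

/-- Every tree (with its geodesic path metric) has asymptotic dimension at most 1; in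
particular, for a group `Γ` acting by isometries on a tree `X` with base point `x₀`, the
orbit `Γ • x₀` (with the restricted metric) satisfies `asdim (Γ • x₀) ≤ 1`. -/
theorem asdim_tree_le_one {X : Type*} (T : SimpleGraph X) (hT : T.IsTree)
    {Γ : Type*} [Group Γ] [MulAction Γ X]
    (hiso : ∀ (g : Γ) (u v : X), T.Adj u v ↔ T.Adj (g • u) (g • v))
    (x₀ : X) :
    ASDimLEdist (fun u v : X => (T.dist u v : ℝ)) 1 ∧
    ASDimLEdist
      (fun u v : ↥(MulAction.orbit Γ x₀) => (T.dist (u : X) (v : X) : ℝ)) 1 := by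
  have hX := tree_asdim hT x₀
  exact ⟨hX, hX.restrict (MulAction.orbit Γ x₀)⟩
end

section
/- Let a group Γ act on a tree with compact quotient and finitely generated vertex stabilizers Γ_x satisfying asdim Γ_x ≤ n for all vertices x. Then for every R > 0 and base vertex x₀, the R-stabilizer W_R(x₀) = {g ∈ Γ : d(g·x₀, x₀) ≤ R} satisfies asdim W_R(x₀) ≤ n. -/
open Set

/-- The word distance on a group associated with a (symmetric) generating set `S`. -/
noncomputable def wordDist {Γ : Type*} [Group Γ] (S : Set Γ) (g h : Γ) : ℕ :=
  sInf {n : ℕ | ∃ l : List Γ, l.length = n ∧ (∀ s ∈ l, s ∈ S) ∧ l.prod = g⁻¹ * h}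

namespace WDev

variable {Γ : Type*} [Group Γ] {S : Set Γ}

lemma exists_list (hgen : Subgroup.closure S = ⊤) (hsym : ∀ s ∈ S, s⁻¹ ∈ S) (g : Γ) :
    ∃ l : List Γ, (∀ s ∈ l, s ∈ S) ∧ l.prod = g := by
  have hg : g ∈ (Subgroup.closure S).toSubmonoid := by rw [hgen]; trivial
  rw [Subgroup.closure_toSubmonoid] at hg
  obtain ⟨l, hl, hp⟩ := Submonoid.exists_list_of_mem_closure hg
  refine ⟨l, fun s hs => ?_, hp⟩
  rcases hl s hs with h | h
  · exact h
  · simpa using hsym _ h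

variable (S) in
noncomputable def gN (g : Γ) : ℕ := wordDist S 1 g

lemma wordDist_eq_gN (g h : Γ) : wordDist S g h = gN S (g⁻¹ * h) := by
  unfold gN wordDist
  simp

section
variable (hgen : Subgroup.closure S = ⊤) (hsym : ∀ s ∈ S, s⁻¹ ∈ S)
include hgen hsym

lemma gN_spec (g : Γ) :
    ∃ l : List Γ, l.length = gN S g ∧ (∀ s ∈ l, s ∈ S) ∧ l.prod = g := by
  have hne : {n : ℕ | ∃ l : List Γ, l.length = n ∧ (∀ s ∈ l, s ∈ S) ∧ l.prod = (1:Γ)⁻¹ * g}.Nonempty := by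
    obtain ⟨l, hl, hp⟩ := exists_list hgen hsym g
    exact ⟨l.length, l, rfl, hl, by simp [hp]⟩
  have := Nat.sInf_mem hne
  obtain ⟨l, hl1, hl2, hl3⟩ := this
  exact ⟨l, hl1, hl2, by simpa using hl3⟩

end

lemma gN_le {g : Γ} {l : List Γ} (hl : ∀ s ∈ l, s ∈ S) (hp : l.prod = g) :
    gN S g ≤ l.length :=
  Nat.sInf_le ⟨l, rfl, hl, by simp [hp]⟩

lemma gN_one : gN S (1 : Γ) = 0 :=
  Nat.le_zero.mp (gN_le (l := []) (by simp) (by simp))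

section
variable (hgen : Subgroup.closure S = ⊤) (hsym : ∀ s ∈ S, s⁻¹ ∈ S)
include hgen hsym

lemma gN_mul_le (g h : Γ) : gN S (g * h) ≤ gN S g + gN S h := by
  obtain ⟨l1, h11, h12, h13⟩ := gN_spec hgen hsym g
  obtain ⟨l2, h21, h22, h23⟩ := gN_spec hgen hsym h
  calc gN S (g * h) ≤ (l1 ++ l2).length := gN_le (by
        intro s hs; rcases List.mem_append.mp hs with h | h
        exacts [h12 s h, h22 s h]) (by simp [h13, h23])
    _ = gN S g + gN S h := by simp [h11, h21]

lemma gN_inv (g : Γ) : gN S g⁻¹ ≤ gN S g := by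
  obtain ⟨l, h1, h2, h3⟩ := gN_spec hgen hsym g
  refine le_trans (gN_le (l := (l.map (fun x => x⁻¹)).reverse) ?_ ?_) ?_
  · intro s hs
    simp only [List.mem_reverse, List.mem_map] at hs
    obtain ⟨a, ha, rfl⟩ := hs
    exact hsym a (h2 a ha)
  · rw [← List.prod_inv_reverse, h3]
  · simp [h1]

lemma gN_inv_eq (g : Γ) : gN S g⁻¹ = gN S g := by
  refine le_antisymm (gN_inv hgen hsym g) ?_
  have := gN_inv hgen hsym g⁻¹
  simpa using this

lemma wordDist_comm (g h : Γ) : wordDist S g h = wordDist S h g := by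
  rw [wordDist_eq_gN, wordDist_eq_gN, ← gN_inv_eq hgen hsym]
  simp

lemma wordDist_triangle (a b c : Γ) : wordDist S a c ≤ wordDist S a b + wordDist S b c := by
  rw [wordDist_eq_gN, wordDist_eq_gN, wordDist_eq_gN]
  have : a⁻¹ * c = (a⁻¹ * b) * (b⁻¹ * c) := by group
  rw [this]
  exact gN_mul_le hgen hsym _ _

end

lemma wordDist_self (g : Γ) : wordDist S g g = 0 := by
  rw [wordDist_eq_gN]; simp [gN_one]

lemma wordDist_left (k a b : Γ) : wordDist S (k * a) (k * b) = wordDist S a b := by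
  rw [wordDist_eq_gN, wordDist_eq_gN]
  congr 1
  group

lemma gN_eq_wordDist (a b : Γ) : gN S (a⁻¹ * b) = wordDist S a b := (wordDist_eq_gN a b).symm

/-- finiteness of balls -/
lemma ball_finite (S' : Finset Γ) (hgen : Subgroup.closure (S':Set Γ) = ⊤)
    (hsym : ∀ s ∈ (S':Set Γ), s⁻¹ ∈ (S':Set Γ)) (N : ℕ) :
    {g : Γ | gN (S' : Set Γ) g ≤ N}.Finite := by
  classical
  -- P k : Finset of products of lists of length ≤ k
  let P : ℕ → Finset Γ := fun k => Nat.rec {1} (fun _ Pk => Pk ∪ (S' ×ˢ Pk).image (fun p => p.1 * p.2)) k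
  have hP0 : P 0 = {1} := rfl
  have hPsucc : ∀ k, P (k+1) = P k ∪ (S' ×ˢ P k).image (fun p => p.1 * p.2) := fun k => rfl
  have hmono : ∀ k, P k ⊆ P (k+1) := fun k => by rw [hPsucc]; exact Finset.subset_union_left
  have key : ∀ (l : List Γ), (∀ s ∈ l, s ∈ S') → l.prod ∈ P l.length := by
    intro l
    induction l with
    | nil => intro _; simp [hP0]
    | cons a t ih =>
      intro h
      simp only [List.length_cons]
      rw [hPsucc]
      apply Finset.mem_union_right
      apply Finset.mem_image.mpr
      exact ⟨(a, t.prod), Finset.mem_product.mpr ⟨h a (by simp), ih (fun s hs => h s (by simp [hs]))⟩, by simp⟩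
  have keyle : ∀ (k : ℕ), k ≤ N → ∀ (l : List Γ), l.length = k → (∀ s ∈ l, s ∈ S') → l.prod ∈ P N := by
    intro k hk
    induction N with
    | zero => intro l hl hm; have : k = 0 := Nat.le_zero.mp hk; subst this
              have := key l hm; rwa [hl] at this
    | succ m ih =>
      intro l hl hm
      rcases Nat.lt_or_ge k (m+1) with h | h
      · exact hmono m (ih (Nat.lt_succ_iff.mp h) l hl hm)
      · have : k = m + 1 := le_antisymm hk h
        subst this
        have := key l hm; rwa [hl] at this
  apply Set.Finite.subset (P N).finite_toSet
  intro g hg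
  simp only [Set.mem_setOf_eq] at hg
  obtain ⟨l, h1, h2, h3⟩ := gN_spec hgen hsym g
  have := keyle (gN (S':Set Γ) g) hg l h1 (fun s hs => h2 s hs)
  rwa [h3] at this

end WDev

namespace TDev
open SimpleGraph

variable {X : Type*} {T : SimpleGraph X}

lemma adj_dist_le_one {u v : X} (h : T.Adj u v) : T.dist u v ≤ 1 :=
  le_trans (dist_le (Walk.cons h Walk.nil)) (by simp)

lemma getVert_dist_bounds (hc : T.Connected) {u v : X} (w : T.Walk u v) :
    ∀ k, T.dist u (w.getVert k) ≤ k ∧ T.dist (w.getVert k) v ≤ w.length - k := by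
  induction w with
  | @nil a =>
    intro k
    have hv : (Walk.nil : T.Walk a a).getVert k = a := Walk.getVert_of_length_le _ (by simp)
    rw [hv]
    simp [SimpleGraph.dist_self]
  | @cons a b c h w' ih =>
    intro k
    cases k with
    | zero =>
      refine ⟨by simp, ?_⟩
      simpa using dist_le (Walk.cons h w')
    | succ j =>
      rw [Walk.getVert_cons_succ]
      refine ⟨?_, ?_⟩
      · calc T.dist a (w'.getVert j) ≤ T.dist a b + T.dist b (w'.getVert j) := hc.dist_triangle
          _ ≤ 1 + j := add_le_add (adj_dist_le_one h) (ih j).1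
          _ = j + 1 := by omega
      · have := (ih j).2
        simp only [Walk.length_cons]
        omega

lemma exists_mid (hc : T.Connected) (p q : X) {k : ℕ} (hk : k ≤ T.dist p q) :
    ∃ m : X, T.dist p m = k ∧ T.dist p m + T.dist m q = T.dist p q := by
  obtain ⟨w, hw⟩ := (hc p q).exists_walk_length_eq_dist
  obtain ⟨h1, h2⟩ := getVert_dist_bounds hc w k
  have htri : T.dist p q ≤ T.dist p (w.getVert k) + T.dist (w.getVert k) q := hc.dist_triangle
  exact ⟨w.getVert k, by omega, by omega⟩

lemma no_triangle (ha : T.IsAcyclic) {a b c : X} (hab : T.Adj a b) (hbc : T.Adj b c)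
    (hca : T.Adj c a) : False := by
  classical
  have heq := ha.path_unique
    (⟨Walk.cons hab Walk.nil, by simp [Walk.isPath_def, hab.ne]⟩ : T.Path a b)
    ⟨Walk.cons hca.symm (Walk.cons hbc.symm Walk.nil), by
      simp [Walk.isPath_def, hca.ne', hab.ne, hbc.ne']⟩
  have hlen := congrArg (fun p : T.Path a b => p.val.length) heq
  simp at hlen

lemma adj_of_dist_eq_one {u v : X} (h : T.dist u v = 1) : T.Adj u v := by
  have hr : T.Reachable u v := by
    by_contra hre
    rw [SimpleGraph.dist_eq_zero_iff_eq_or_not_reachable.mpr (Or.inr hre)] at h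
    omega
  obtain ⟨w, hw⟩ := hr.exists_walk_length_eq_dist
  rw [h] at hw
  cases w with
  | nil => simp at hw
  | cons h' w' =>
    have : w'.length = 0 := by simpa using hw
    exact (Walk.eq_of_length_eq_zero this) ▸ h'

lemma dist_eq_zero_iff (hc : T.Connected) {u v : X} : T.dist u v = 0 ↔ u = v := by
  rw [SimpleGraph.dist_eq_zero_iff_eq_or_not_reachable]
  simp [hc.preconnected u v]

lemma isPath_of_length_eq_dist {u v : X} (w : T.Walk u v) (h : w.length = T.dist u v) :
    w.IsPath := by
  classical
  induction w with
  | nil => exact Walk.IsPath.nil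
  | @cons a b c hadj w' ih =>
    have hd : w'.length + 1 = T.dist a c := by simpa using h
    have hbc_le : T.dist b c ≤ w'.length := dist_le w'
    obtain ⟨wbc, hwbc⟩ := (w'.reachable).exists_walk_length_eq_dist
    have hac_le : T.dist a c ≤ 1 + T.dist b c := by
      have := dist_le (Walk.cons hadj wbc)
      simpa [hwbc, Nat.add_comm] using this
    have hw'path : w'.IsPath := ih (by omega)
    apply hw'path.cons
    intro hmem
    have hsplit := w'.take_spec hmem
    have hlen2 : (w'.takeUntil a hmem).length + (w'.dropUntil a hmem).length = w'.length := by
      rw [← Walk.length_append, hsplit]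
    have htake : 1 ≤ (w'.takeUntil a hmem).length := by
      rcases Nat.eq_zero_or_pos (w'.takeUntil a hmem).length with h0 | h1
      · exact absurd (Walk.eq_of_length_eq_zero h0).symm hadj.ne
      · exact h1
    have hdrop : T.dist a c ≤ (w'.dropUntil a hmem).length := dist_le _
    omega

lemma mem_support_or (hc : T.Connected) (ha : T.IsAcyclic) {p q m y : X}
    (hm : T.dist p m + T.dist m q = T.dist p q) :
    T.dist y m + T.dist m p ≤ T.dist y p ∨ T.dist y m + T.dist m q ≤ T.dist y q := by
  classical
  obtain ⟨wpm, hwpm⟩ := (hc p m).exists_walk_length_eq_dist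
  obtain ⟨wmq, hwmq⟩ := (hc m q).exists_walk_length_eq_dist
  set F : T.Walk p q := wpm.append wmq with hF
  have hFlen : F.length = T.dist p q := by rw [hF, Walk.length_append, hwpm, hwmq, hm]
  have hFpath : F.IsPath := isPath_of_length_eq_dist F hFlen
  obtain ⟨wyp, hwyp⟩ := (hc y p).exists_walk_length_eq_dist
  obtain ⟨wyq, hwyq⟩ := (hc y q).exists_walk_length_eq_dist
  have hA : wyp.bypass.IsPath := Walk.bypass_isPath wyp
  have hAlen : wyp.bypass.length = T.dist y p :=
    le_antisymm (le_trans (Walk.length_bypass_le wyp) (le_of_eq hwyp)) (dist_le _)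
  have hB : wyq.bypass.IsPath := Walk.bypass_isPath wyq
  have hBlen : wyq.bypass.length = T.dist y q :=
    le_antisymm (le_trans (Walk.length_bypass_le wyq) (le_of_eq hwyq)) (dist_le _)
  set A := wyp.bypass
  set B := wyq.bypass
  set C : T.Walk p q := A.reverse.append B with hC
  have heq := ha.path_unique (⟨F, hFpath⟩ : T.Path p q) ⟨C.bypass, Walk.bypass_isPath C⟩
  have hmF : m ∈ F.support := by
    rw [hF, Walk.mem_support_append_iff]
    exact Or.inl (Walk.end_mem_support wpm)
  have hmC : m ∈ C.support := by
    have : m ∈ C.bypass.support := by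
      have hval := congrArg (fun p : T.Path p q => p.val) heq
      simp only at hval
      rw [← hval]
      exact hmF
    exact Walk.support_bypass_subset C this
  have hmAB : m ∈ A.support ∨ m ∈ B.support := by
    rw [hC, Walk.mem_support_append_iff] at hmC
    rcases hmC with h | h
    · left; rwa [Walk.support_reverse, List.mem_reverse] at h
    · right; exact h
  rcases hmAB with h | h
  · left
    have hsplit := A.take_spec h
    have hlen2 : (A.takeUntil m h).length + (A.dropUntil m h).length = A.length := by
      rw [← Walk.length_append, hsplit]
    have h1 : T.dist y m ≤ (A.takeUntil m h).length := dist_le _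
    have h2 : T.dist m p ≤ (A.dropUntil m h).length := dist_le _
    omega
  · right
    have hsplit := B.take_spec h
    have hlen2 : (B.takeUntil m h).length + (B.dropUntil m h).length = B.length := by
      rw [← Walk.length_append, hsplit]
    have h1 : T.dist y m ≤ (B.takeUntil m h).length := dist_le _
    have h2 : T.dist m q ≤ (B.dropUntil m h).length := dist_le _
    omega

lemma tree_gain (hc : T.Connected) (ha : T.IsAcyclic) {p q m y : X}
    (hm : T.dist p m + T.dist m q = T.dist p q) :
    T.dist m y + min (T.dist m p) (T.dist m q) ≤ max (T.dist p y) (T.dist q y) := by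
  have h1 := mem_support_or hc ha hm (y := y)
  have e1 : T.dist y m = T.dist m y := dist_comm
  have e2 : T.dist y p = T.dist p y := dist_comm
  have e3 : T.dist y q = T.dist q y := dist_comm
  rcases h1 with h | h
  · calc T.dist m y + min (T.dist m p) (T.dist m q) ≤ T.dist m y + T.dist m p :=
        Nat.add_le_add_left (min_le_left _ _) _
      _ ≤ T.dist p y := by omega
      _ ≤ _ := le_max_left _ _
  · calc T.dist m y + min (T.dist m p) (T.dist m q) ≤ T.dist m y + T.dist m q :=
        Nat.add_le_add_left (min_le_right _ _) _
      _ ≤ T.dist q y := by omega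
      _ ≤ _ := le_max_right _ _

end TDev



namespace ADev

variable {Γ : Type*} [Group Γ] (S : Set Γ)

/-- real-valued word distance -/
noncomputable def ρ (x y : Γ) : ℝ := (wordDist S x y : ℝ)

def bdd (R : ℝ) (F : Set (Set Γ)) : Prop :=
  ∀ U ∈ F, ∀ x ∈ U, ∀ y ∈ U, ρ S x y ≤ R

def sep (d : ℝ) (F : Set (Set Γ)) : Prop :=
  ∀ U ∈ F, ∀ V ∈ F, U ≠ V → ∀ x ∈ U, ∀ y ∈ V, d ≤ ρ S x y

def covers {n : ℕ} (𝔘 : Fin (n+1) → Set (Set Γ)) (A : Set Γ) : Prop :=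
  ∀ z ∈ A, ∃ i, ∃ U ∈ 𝔘 i, z ∈ U

def ADN (n : ℕ) (A : Set Γ) : Prop :=
  ∀ d : ℝ, 0 < d → ∃ (R : ℝ) (𝔘 : Fin (n+1) → Set (Set Γ)),
    0 ≤ R ∧ (∀ i, bdd S R (𝔘 i) ∧ sep S d (𝔘 i)) ∧ covers 𝔘 A

variable {S}

lemma ADN_mono {n : ℕ} {A B : Set Γ} (hAB : A ⊆ B) (h : ADN S n B) : ADN S n A := by
  intro d hd
  obtain ⟨R, 𝔘, hR, h1, h2⟩ := h d hd
  exact ⟨R, 𝔘, hR, h1, fun z hz => h2 z (hAB hz)⟩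

lemma ADN_empty {n : ℕ} : ADN S n (∅ : Set Γ) := by
  intro d hd
  refine ⟨0, fun _ => ∅, le_refl _, fun i => ⟨?_, ?_⟩, ?_⟩ <;> simp [bdd, sep, covers]


section RhoLemmas
variable {n : ℕ}

lemma ρ_self (a : Γ) : ρ S a a = 0 := by
  unfold ρ; rw [WDev.wordDist_self]; simp

lemma ρ_nonneg (a b : Γ) : 0 ≤ ρ S a b := by unfold ρ; positivity

lemma ρ_left (k a b : Γ) : ρ S (k * a) (k * b) = ρ S a b := by
  unfold ρ; rw [WDev.wordDist_left]

section
variable (hgen : Subgroup.closure S = ⊤) (hsym : ∀ s ∈ S, s⁻¹ ∈ S)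
include hgen hsym

lemma ρ_triangle (a b c : Γ) : ρ S a c ≤ ρ S a b + ρ S b c := by
  unfold ρ
  exact_mod_cast WDev.wordDist_triangle hgen hsym a b c

lemma ρ_comm (a b : Γ) : ρ S a b = ρ S b a := by
  unfold ρ
  rw [WDev.wordDist_comm hgen hsym a b]

lemma ρ_mul_right (a b u : Γ) : ρ S (a * u) (b * u) ≤ ρ S a b + 2 * (WDev.gN S u : ℝ) := by
  unfold ρ
  have h1 : wordDist S (a * u) (b * u) = WDev.gN S ((a*u)⁻¹ * (b*u)) := WDev.wordDist_eq_gN _ _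
  have h2 : (a*u)⁻¹ * (b*u) = u⁻¹ * ((a⁻¹ * b) * u) := by group
  have h3 : WDev.gN S ((a*u)⁻¹ * (b*u)) ≤ WDev.gN S u⁻¹ + (WDev.gN S (a⁻¹*b) + WDev.gN S u) := by
    rw [h2]
    exact le_trans (WDev.gN_mul_le hgen hsym _ _)
      (by exact Nat.add_le_add_left (WDev.gN_mul_le hgen hsym _ _) _)
  rw [WDev.gN_inv_eq hgen hsym] at h3
  have h4 : wordDist S a b = WDev.gN S (a⁻¹ * b) := WDev.wordDist_eq_gN _ _
  rw [h1, h4]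
  have h5 : WDev.gN S ((a*u)⁻¹ * (b*u)) ≤ WDev.gN S (a⁻¹*b) + 2 * WDev.gN S u := by omega
  exact_mod_cast h5

end
end RhoLemmas

section Translates
variable {n : ℕ}

lemma ADN_smul {A : Set Γ} (g : Γ) (h : ADN S n A) : ADN S n ((g * ·) '' A) := by
  intro d hd
  obtain ⟨R, 𝔘, hR, h1, h2⟩ := h d hd
  refine ⟨R, fun i => (Set.image (g * ·)) '' 𝔘 i, hR, fun i => ⟨?_, ?_⟩, ?_⟩
  · rintro W ⟨U, hU, rfl⟩ x ⟨x₀, hx₀, rfl⟩ y ⟨y₀, hy₀, rfl⟩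
    rw [ρ_left]
    exact (h1 i).1 U hU x₀ hx₀ y₀ hy₀
  · rintro W ⟨U, hU, rfl⟩ W' ⟨V, hV, rfl⟩ hne x ⟨x₀, hx₀, rfl⟩ y ⟨y₀, hy₀, rfl⟩
    rw [ρ_left]
    have hUV : U ≠ V := by
      rintro rfl; exact hne rfl
    exact (h1 i).2 U hU V hV hUV x₀ hx₀ y₀ hy₀
  · rintro z ⟨a, ha, rfl⟩
    obtain ⟨i, U, hU, haU⟩ := h2 a ha
    exact ⟨i, (g * ·) '' U, ⟨U, hU, rfl⟩, ⟨a, haU, rfl⟩⟩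

variable (hgen : Subgroup.closure S = ⊤) (hsym : ∀ s ∈ S, s⁻¹ ∈ S)
include hgen hsym

lemma ADN_mul_right {A : Set Γ} (u : Γ) (h : ADN S n A) : ADN S n ((· * u) '' A) := by
  intro d hd
  have hNu : (0:ℝ) ≤ 2 * (WDev.gN S u : ℝ) := by positivity
  obtain ⟨R, 𝔘, hR, h1, h2⟩ := h (d + 2 * (WDev.gN S u : ℝ)) (by linarith)
  refine ⟨R + 2 * (WDev.gN S u : ℝ), fun i => (Set.image (· * u)) '' 𝔘 i, by linarith,
    fun i => ⟨?_, ?_⟩, ?_⟩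
  · rintro W ⟨U, hU, rfl⟩ x ⟨x₀, hx₀, rfl⟩ y ⟨y₀, hy₀, rfl⟩
    have := (h1 i).1 U hU x₀ hx₀ y₀ hy₀
    have h3 := ρ_mul_right hgen hsym x₀ y₀ u
    linarith
  · rintro W ⟨U, hU, rfl⟩ W' ⟨V, hV, rfl⟩ hne x ⟨x₀, hx₀, rfl⟩ y ⟨y₀, hy₀, rfl⟩
    have hUV : U ≠ V := by rintro rfl; exact hne rfl
    have hs := (h1 i).2 U hU V hV hUV x₀ hx₀ y₀ hy₀
    -- ρ x₀ y₀ ≤ ρ (x₀ u) (y₀ u) + 2 gN u  (since (x₀ u) u⁻¹ = x₀)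
    have h4 : ρ S x₀ y₀ ≤ ρ S (x₀ * u) (y₀ * u) + 2 * (WDev.gN S u⁻¹ : ℝ) := by
      have := ρ_mul_right hgen hsym (x₀ * u) (y₀ * u) u⁻¹
      simpa using this
    rw [WDev.gN_inv_eq hgen hsym] at h4
    linarith
  · rintro z ⟨a, ha, rfl⟩
    obtain ⟨i, U, hU, haU⟩ := h2 a ha
    exact ⟨i, (· * u) '' U, ⟨U, hU, rfl⟩, ⟨a, haU, rfl⟩⟩

end Translates

section Union
variable {n : ℕ} (hgen : Subgroup.closure S = ⊤) (hsym : ∀ s ∈ S, s⁻¹ ∈ S)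
include hgen hsym

theorem ADN_iUnion {I : Type*} (A : I → Set Γ)
    (huni : ∃ RFun : ℝ → ℝ, ∀ d : ℝ, 0 < d → (0 ≤ RFun d ∧ ∀ α : I,
      ∃ 𝔘 : Fin (n+1) → Set (Set Γ),
      (∀ i, bdd S (RFun d) (𝔘 i) ∧ sep S d (𝔘 i)) ∧ covers 𝔘 (A α)))
    (hY : ∀ r : ℝ, 0 < r → ∃ Y : Set Γ, ADN S n Y ∧
      ∀ α β, α ≠ β → ∀ a ∈ A α \ Y, ∀ b ∈ A β \ Y, r ≤ ρ S a b) :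
    ADN S n (⋃ α, A α) := by
  classical
  obtain ⟨RFun, huni⟩ := huni
  intro d hd
  obtain ⟨hRu0, hu⟩ := huni d hd
  set Ru := RFun d with hRudef
  obtain ⟨Y, hYA, hYsep⟩ := hY d hd
  choose 𝔄 h𝔄1 h𝔄2 using hu
  have tri : ∀ a b c : Γ, ρ S a c ≤ ρ S a b + ρ S b c := ρ_triangle hgen hsym
  have comm : ∀ a b : Γ, ρ S a b = ρ S b a := ρ_comm hgen hsym
  set pool : Fin (n+1) → Set (Set Γ) :=
    fun i => {U' | ∃ α, ∃ U ∈ 𝔄 α i, U' = U ∩ (A α \ Y)} with hpool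
  have poolbdd : ∀ i, ∀ U' ∈ pool i, ∀ x ∈ U', ∀ y ∈ U', ρ S x y ≤ Ru := by
    rintro i U' ⟨α, U, hU, rfl⟩ x hx y hy
    exact (h𝔄1 α i).1 U hU x hx.1 y hy.1
  have poolsep : ∀ i, ∀ U' ∈ pool i, ∀ V' ∈ pool i, U' ≠ V' →
      ∀ x ∈ U', ∀ y ∈ V', d ≤ ρ S x y := by
    rintro i U' ⟨α, U, hU, rfl⟩ V' ⟨β, V, hV, rfl⟩ hne x hx y hy
    by_cases hab : α = β
    · subst hab
      have hUV : U ≠ V := by rintro rfl; exact hne rfl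
      exact (h𝔄1 α i).2 U hU V hV hUV x hx.1 y hy.1
    · exact hYsep α β hab x hx.2 y hy.2
  obtain ⟨RB, 𝔅, hRB0, h𝔅, h𝔅cov⟩ := hYA (2*d + Ru + 1) (by linarith)
  set close : Set Γ → Set Γ → Prop := fun U V => ∃ x ∈ U, ∃ y ∈ V, ρ S x y < d with hclose
  have uniq : ∀ i, ∀ U' ∈ pool i, ∀ V₁ ∈ 𝔅 i, ∀ V₂ ∈ 𝔅 i,
      close U' V₁ → close U' V₂ → V₁ = V₂ := by
    rintro i U' hU' V₁ hV₁ V₂ hV₂ ⟨x₁, hx₁, y₁, hy₁, h1⟩ ⟨x₂, hx₂, y₂, hy₂, h2⟩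
    by_contra hne
    have hsep := (h𝔅 i).2 V₁ hV₁ V₂ hV₂ hne y₁ hy₁ y₂ hy₂
    have t1 : ρ S y₁ y₂ ≤ ρ S y₁ x₁ + ρ S x₁ x₂ + ρ S x₂ y₂ :=
      le_trans (tri y₁ x₁ y₂) (by linarith [tri x₁ x₂ y₂])
    have hxx : ρ S x₁ x₂ ≤ Ru := poolbdd i U' hU' x₁ hx₁ x₂ hx₂
    rw [comm y₁ x₁] at t1
    linarith
  set Sat : Fin (n+1) → Set Γ → Set Γ :=
    fun i V => V ∪ ⋃₀ {U' | U' ∈ pool i ∧ close U' V} with hSat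
  have memSat : ∀ (i : Fin (n+1)) (V : Set Γ) (x : Γ), x ∈ Sat i V →
      x ∈ V ∨ ∃ U', U' ∈ pool i ∧ close U' V ∧ x ∈ U' := by
    intro i V x hx
    rcases hx with h | h
    · exact Or.inl h
    · rcases h with ⟨U', ⟨h1, h2⟩, h3⟩
      exact Or.inr ⟨U', h1, h2, h3⟩
  set 𝔘 : Fin (n+1) → Set (Set Γ) := fun i =>
    ((Sat i) '' (𝔅 i)) ∪ {U' | U' ∈ pool i ∧ ∀ V ∈ 𝔅 i, ¬ close U' V} with h𝔘
  refine ⟨RB + 2*(d + Ru), 𝔘, by linarith, fun i => ⟨?_, ?_⟩, ?_⟩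
  · -- bounded
    rintro W hW x hx y hy
    rcases hW with ⟨V, hV, rfl⟩ | ⟨hU₀, hnc⟩
    · have near : ∀ z ∈ Sat i V, ∃ v ∈ V, ρ S z v ≤ Ru + d := by
        intro z hz
        rcases memSat i V z hz with hzv | ⟨U', hU'p, ⟨x', hx', v, hv, hlt⟩, hzU'⟩
        · exact ⟨z, hzv, by rw [ρ_self]; linarith⟩
        · refine ⟨v, hv, ?_⟩
          have h1 := tri z x' v
          have h2 := poolbdd i U' hU'p z hzU' x' hx'
          linarith
      obtain ⟨vx, hvx, hx1⟩ := near x hx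
      obtain ⟨vy, hvy, hy1⟩ := near y hy
      have h3 : ρ S vx vy ≤ RB := (h𝔅 i).1 V hV vx hvx vy hvy
      have h4 := tri x vx vy
      have h5 := tri x vy y
      rw [comm vy y] at h5
      linarith [tri x vx vy, tri x vy y]
    · have := poolbdd i W hU₀ x hx y hy
      linarith
  · -- separated
    rintro W₁ hW₁ W₂ hW₂ hne x hx y hy
    by_contra hcon
    push_neg at hcon
    rcases hW₁ with ⟨V₁, hV₁, rfl⟩ | ⟨hU₁p, hU₁nc⟩
    · rcases hW₂ with ⟨V₂, hV₂, rfl⟩ | ⟨hU₂p, hU₂nc⟩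
      · -- sat vs sat
        have hVne : V₁ ≠ V₂ := by rintro rfl; exact hne rfl
        rcases memSat i V₁ x hx with hxV | ⟨U₁, hU₁p, hU₁c, hxU₁⟩ <;>
          rcases memSat i V₂ y hy with hyV | ⟨U₂, hU₂p, hU₂c, hyU₂⟩
        · have hsep := (h𝔅 i).2 V₁ hV₁ V₂ hV₂ hVne x hxV y hyV
          linarith
        · have hcl : close U₂ V₁ := ⟨y, hyU₂, x, hxV, by rw [comm]; exact hcon⟩
          exact hVne (uniq i U₂ hU₂p V₁ hV₁ V₂ hV₂ hcl hU₂c)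
        · have hcl : close U₁ V₂ := ⟨x, hxU₁, y, hyV, hcon⟩
          exact hVne (uniq i U₁ hU₁p V₁ hV₁ V₂ hV₂ hU₁c hcl)
        · by_cases hUU : U₁ = U₂
          · subst hUU
            exact hVne (uniq i U₁ hU₁p V₁ hV₁ V₂ hV₂ hU₁c hU₂c)
          · have := poolsep i U₁ hU₁p U₂ hU₂p hUU x hxU₁ y hyU₂
            linarith
      · -- sat vs leftover
        rcases memSat i V₁ x hx with hxV | ⟨U₁, hU₁p, hU₁c, hxU₁⟩
        · exact hU₂nc V₁ hV₁ ⟨y, hy, x, hxV, by rw [comm]; exact hcon⟩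
        · by_cases hUU : U₁ = W₂
          · subst hUU
            exact hU₂nc V₁ hV₁ hU₁c
          · have := poolsep i U₁ hU₁p W₂ hU₂p hUU x hxU₁ y hy
            linarith
    · rcases hW₂ with ⟨V₂, hV₂, rfl⟩ | ⟨hU₂p, hU₂nc⟩
      · -- leftover vs sat
        rcases memSat i V₂ y hy with hyV | ⟨U₂, hU₂p, hU₂c, hyU₂⟩
        · exact hU₁nc V₂ hV₂ ⟨x, hx, y, hyV, hcon⟩
        · by_cases hUU : W₁ = U₂
          · subst hUU
            exact hU₁nc V₂ hV₂ hU₂c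
          · have := poolsep i W₁ hU₁p U₂ hU₂p hUU x hx y hyU₂
            linarith
      · -- leftover vs leftover
        have := poolsep i W₁ hU₁p W₂ hU₂p hne x hx y hy
        linarith
  · -- covers
    intro z hz
    rcases Set.mem_iUnion.mp hz with ⟨α, hzα⟩
    by_cases hzY : z ∈ Y
    · obtain ⟨i, V, hV, hzV⟩ := h𝔅cov z hzY
      exact ⟨i, Sat i V, Or.inl ⟨V, hV, rfl⟩, Or.inl hzV⟩
    · obtain ⟨i, U, hU, hzU⟩ := h𝔄2 α z hzα
      have hU'p : (U ∩ (A α \ Y)) ∈ pool i := ⟨α, U, hU, rfl⟩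
      have hzU' : z ∈ U ∩ (A α \ Y) := ⟨hzU, hzα, hzY⟩
      by_cases hcl : ∃ V ∈ 𝔅 i, close (U ∩ (A α \ Y)) V
      · obtain ⟨V, hV, hclV⟩ := hcl
        exact ⟨i, Sat i V, Or.inl ⟨V, hV, rfl⟩,
          Or.inr (Set.mem_sUnion.mpr ⟨_, ⟨hU'p, hclV⟩, hzU'⟩)⟩
      · push_neg at hcl
        exact ⟨i, _, Or.inr ⟨hU'p, hcl⟩, hzU'⟩

end Union

section UnionCor
variable {n : ℕ} (hgen : Subgroup.closure S = ⊤) (hsym : ∀ s ∈ S, s⁻¹ ∈ S)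
include hgen hsym

lemma ADN_union {A B : Set Γ} (hA : ADN S n A) (hB : ADN S n B) : ADN S n (A ∪ B) := by
  classical
  have hU : (A ∪ B) = ⋃ (b : Bool), (bif b then A else B) := by
    ext x
    simp only [Set.mem_iUnion, Set.mem_union]
    constructor
    · rintro (h | h)
      exacts [⟨true, h⟩, ⟨false, h⟩]
    · rintro ⟨b, h⟩
      cases b
      exacts [Or.inr h, Or.inl h]
  rw [hU]
  have hA' := hA
  have hB' := hB
  choose RA 𝔄f hRA0 h𝔄 hcovA using hA'
  choose RB 𝔅f hRB0 h𝔅 hcovB using hB'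
  apply ADN_iUnion hgen hsym
  · refine ⟨fun d => if h : 0 < d then max (RA d h) (RB d h) else 0, ?_⟩
    intro d hd
    simp only [dif_pos hd]
    refine ⟨le_trans (hRA0 d hd) (le_max_left _ _), ?_⟩
    intro b
    cases b
    · refine ⟨𝔅f d hd, fun i => ⟨?_, (h𝔅 d hd i).2⟩, hcovB d hd⟩
      intro U hU x hx y hy
      exact le_trans ((h𝔅 d hd i).1 U hU x hx y hy) (le_max_right _ _)
    · refine ⟨𝔄f d hd, fun i => ⟨?_, (h𝔄 d hd i).2⟩, hcovA d hd⟩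
      intro U hU x hx y hy
      exact le_trans ((h𝔄 d hd i).1 U hU x hx y hy) (le_max_left _ _)
  · intro r hr
    refine ⟨B, hB, ?_⟩
    intro α β hne a ha b hb
    cases α <;> cases β
    · exact absurd rfl hne
    · exact absurd ha.1 ha.2
    · exact absurd hb.1 hb.2
    · exact absurd rfl hne

lemma ADN_biUnion {ι : Type*} {s : Set ι} (hs : s.Finite) {f : ι → Set Γ} :
    (∀ i ∈ s, ADN S n (f i)) → ADN S n (⋃ i ∈ s, f i) := by
  classical
  refine Set.Finite.induction_on (motive := fun s _ => (∀ i ∈ s, ADN S n (f i)) → ADN S n (⋃ i ∈ s, f i))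
    s hs (fun _ => by simpa using (ADN_empty : ADN S n (∅ : Set Γ))) ?_
  intro a s' ha hs' ih h
  rw [Set.biUnion_insert]
  exact ADN_union hgen hsym (h _ (Set.mem_insert _ _)) (ih fun i hi => h i (Set.mem_insert_iff.mpr (Or.inr hi)))

end UnionCor

section Geo
variable {X : Type*} {T : SimpleGraph X} [MulAction Γ X]

lemma dist_smul (hc : T.Connected) (hiso : ∀ (g : Γ) (u v : X), T.Adj u v ↔ T.Adj (g • u) (g • v))
    (g : Γ) (u v : X) : T.dist (g • u) (g • v) = T.dist u v := by
  have key : ∀ (k : Γ) (a b : X), T.dist (k • a) (k • b) ≤ T.dist a b := by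
    intro k a b
    obtain ⟨w, hw⟩ := (hc a b).exists_walk_length_eq_dist
    let f : T →g T := ⟨fun z => k • z, fun h => (hiso k _ _).mp h⟩
    have h1 : T.dist (f a) (f b) ≤ (w.map f).length := SimpleGraph.dist_le _
    have h2 : (w.map f).length = w.length := SimpleGraph.Walk.length_map _ _
    have h3 : T.dist (f a) (f b) ≤ T.dist a b := by rw [← hw]; omega
    exact h3
  refine le_antisymm (key g u v) ?_
  have := key g⁻¹ (g • u) (g • v)
  simpa using this

lemma adj_smul (hiso : ∀ (g : Γ) (u v : X), T.Adj u v ↔ T.Adj (g • u) (g • v))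
    (g : Γ) {u v : X} (h : T.Adj u v) : T.Adj (g • u) (g • v) := (hiso g u v).mp h

lemma edge_sep (hc : T.Connected) (ha : T.IsAcyclic) {a₁ a₂ b₁ b₂ : X}
    (h1 : T.Adj a₁ a₂) (h2 : T.Adj b₁ b₂) (hne : ({a₁, a₂} : Set X) ≠ {b₁, b₂}) :
    ∃ p ∈ ({a₁, a₂} : Set X), ∃ q ∈ ({b₁, b₂} : Set X), 2 ≤ T.dist p q := by
  by_contra hcon
  push_neg at hcon
  -- all cross distances ≤ 1
  have hdist : ∀ p ∈ ({a₁, a₂} : Set X), ∀ q ∈ ({b₁, b₂} : Set X), T.dist p q ≤ 1 := by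
    intro p hp q hq
    have := hcon p hp q hq
    omega
  have hb : ∃ b ∈ ({b₁, b₂} : Set X), b ∉ ({a₁, a₂} : Set X) := by
    by_contra hsub
    push_neg at hsub
    apply hne
    have hb1 := hsub b₁ (by simp)
    have hb2 := hsub b₂ (by simp)
    simp only [Set.mem_insert_iff, Set.mem_singleton_iff] at hb1 hb2
    rcases hb1 with h | h <;> rcases hb2 with h' | h'
    · exact absurd (h.trans h'.symm) h2.ne
    · rw [h, h']
    · rw [h, h', Set.pair_comm]
    · exact absurd (h.trans h'.symm) h2.ne
  obtain ⟨b, hb1, hb2⟩ := hb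
  have hba1 : b ≠ a₁ := fun h => hb2 (by simp [h])
  have hba2 : b ≠ a₂ := fun h => hb2 (by simp [h])
  have d1 : T.dist a₁ b = 1 := by
    have h1' := hdist a₁ (by simp) b hb1
    have h0 : T.dist a₁ b ≠ 0 := fun h => hba1 ((TDev.dist_eq_zero_iff hc).mp h).symm
    omega
  have d2 : T.dist a₂ b = 1 := by
    have h1' := hdist a₂ (by simp) b hb1
    have h0 : T.dist a₂ b ≠ 0 := fun h => hba2 ((TDev.dist_eq_zero_iff hc).mp h).symm
    omega
  exact TDev.no_triangle ha h1 (TDev.adj_of_dist_eq_one d2) (TDev.adj_of_dist_eq_one d1).symm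

end Geo

section Convert
variable {n : ℕ}

lemma ADN_of_subtype (A : Set Γ)
    (h : ASDimLEdist (fun a b : A => (wordDist S (a : Γ) (b : Γ) : ℝ)) n) : ADN S n A := by
  intro d hd
  obtain ⟨𝔙, h1, h2⟩ := h d hd
  choose Rf hRf using fun i => (h1 i).1
  refine ⟨max 0 ((Finset.univ : Finset (Fin (n+1))).sup' ⟨0, Finset.mem_univ 0⟩ Rf),
    fun i => (Set.image (Subtype.val)) '' 𝔙 i, le_max_left _ _, fun i => ⟨?_, ?_⟩, ?_⟩
  · rintro W ⟨U, hU, rfl⟩ x ⟨x₀, hx₀, rfl⟩ y ⟨y₀, hy₀, rfl⟩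
    refine le_trans (hRf i U hU x₀ hx₀ y₀ hy₀) (le_trans ?_ (le_max_right _ _))
    exact Finset.le_sup' Rf (Finset.mem_univ i)
  · rintro W ⟨U, hU, rfl⟩ W' ⟨V, hV, rfl⟩ hne x ⟨x₀, hx₀, rfl⟩ y ⟨y₀, hy₀, rfl⟩
    have hUV : U ≠ V := by rintro rfl; exact hne rfl
    exact (h1 i).2 U hU V hV hUV x₀ hx₀ y₀ hy₀
  · intro z hz
    obtain ⟨i, U, hU, hzU⟩ := h2 ⟨z, hz⟩
    exact ⟨i, _, ⟨U, hU, rfl⟩, ⟨⟨z, hz⟩, hzU, rfl⟩⟩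

lemma subtype_of_ADN (A : Set Γ) (h : ADN S n A) :
    ASDimLEdist (fun a b : A => (wordDist S (a : Γ) (b : Γ) : ℝ)) n := by
  intro d hd
  obtain ⟨R, 𝔙, hR0, h1, h2⟩ := h d hd
  refine ⟨fun i => (fun U => (Subtype.val ⁻¹' U : Set A)) '' 𝔙 i, fun i => ⟨⟨R, ?_⟩, ?_⟩, ?_⟩
  · rintro W ⟨U, hU, rfl⟩ x hx y hy
    exact (h1 i).1 U hU x hx y hy
  · rintro W ⟨U, hU, rfl⟩ W' ⟨V, hV, rfl⟩ hne x hx y hy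
    have hUV : U ≠ V := by rintro rfl; exact hne rfl
    exact (h1 i).2 U hU V hV hUV x hx y hy
  · intro z
    obtain ⟨i, U, hU, hz⟩ := h2 z z.2
    exact ⟨i, _, ⟨U, hU, rfl⟩, hz⟩

end Convert

section Main
variable {X : Type*} {T : SimpleGraph X} [MulAction Γ X] {n : ℕ}
variable (hgen : Subgroup.closure S = ⊤) (hsym : ∀ s ∈ S, s⁻¹ ∈ S)
variable (hfin : ∀ N : ℕ, {g : Γ | WDev.gN S g ≤ N}.Finite)
variable (hc : T.Connected) (ha : T.IsAcyclic)
variable (hiso : ∀ (g : Γ) (u v : X), T.Adj u v ↔ T.Adj (g • u) (g • v))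
variable (hstabSet : ∀ x : X, ADN S n ((MulAction.stabilizer Γ x : Subgroup Γ) : Set Γ))

include hstabSet in
lemma ADN_fiber (x y : X) : ADN S n {g : Γ | g • x = y} := by
  rcases Set.eq_empty_or_nonempty {g : Γ | g • x = y} with he | ⟨g₀, hg₀⟩
  · rw [he]; exact ADN_empty
  · simp only [Set.mem_setOf_eq] at hg₀
    have heq : {g : Γ | g • x = y}
        = (g₀ * ·) '' ((MulAction.stabilizer Γ x : Subgroup Γ) : Set Γ) := by
      ext g
      simp only [Set.mem_setOf_eq, Set.mem_image, SetLike.mem_coe,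
        MulAction.mem_stabilizer_iff]
      constructor
      · intro hg
        refine ⟨g₀⁻¹ * g, ?_, by group⟩
        rw [mul_smul, hg, ← hg₀]
        simp
      · rintro ⟨s, hs, rfl⟩
        rw [mul_smul, hs]
        exact hg₀
    rw [heq]
    exact ADN_smul g₀ (hstabSet x)

include hc ha hiso in
lemma twoPoint (R : ℕ) (ih : ∀ x y : X, ADN S n {g : Γ | T.dist (g • x) y ≤ R})
    (p q y : X) (hpq : 2 ≤ T.dist p q) :
    ADN S n {g : Γ | T.dist (g • p) y ≤ R + 1 ∧ T.dist (g • q) y ≤ R + 1} := by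
  obtain ⟨m, hm1, hm2⟩ := TDev.exists_mid hc p q (k := T.dist p q / 2) (Nat.div_le_self _ _)
  have hk1 : 1 ≤ T.dist p m := by omega
  have hk2 : 1 ≤ T.dist m q := by omega
  apply ADN_mono _ (ih m y)
  rintro g ⟨hg1, hg2⟩
  have hmg : T.dist (g • p) (g • m) + T.dist (g • m) (g • q) = T.dist (g • p) (g • q) := by
    rw [dist_smul hc hiso, dist_smul hc hiso, dist_smul hc hiso]; exact hm2
  have hgain := TDev.tree_gain hc ha hmg (y := y)
  rw [dist_smul hc hiso g m p, dist_smul hc hiso g m q] at hgain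
  have hminp : 1 ≤ T.dist m p := by rw [SimpleGraph.dist_comm]; exact hk1
  have hmax : max (T.dist (g • p) y) (T.dist (g • q) y) ≤ R + 1 := max_le hg1 hg2
  have h6 : T.dist (g • m) y + 1 ≤ R + 1 :=
    le_trans (le_trans (Nat.add_le_add_left (le_min hminp hk2) _) hgain) hmax
  simp only [Set.mem_setOf_eq]
  omega

include hgen hsym hfin hc ha hiso hstabSet in
theorem main_induction : ∀ (R : ℕ) (x y : X), ADN S n {g : Γ | T.dist (g • x) y ≤ R} := by
  intro R
  induction R with
  | zero =>
    intro x y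
    have hset : {g : Γ | T.dist (g • x) y ≤ 0} = {g : Γ | g • x = y} := by
      ext g
      simp only [Set.mem_setOf_eq, Nat.le_zero]
      exact TDev.dist_eq_zero_iff hc
    rw [hset]
    exact ADN_fiber hstabSet x y
  | succ R ih =>
    intro x y
    classical
    -- Z_u sets have ADN
    have hZu : ∀ u : Γ, u • x ≠ x →
        ADN S n {g : Γ | T.dist (g • x) y ≤ R + 1 ∧ T.dist ((g * u) • x) y ≤ R + 1} := by
      intro u hux
      have hset : {g : Γ | T.dist (g • x) y ≤ R + 1 ∧ T.dist ((g * u) • x) y ≤ R + 1}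
          = {g : Γ | T.dist (g • x) y ≤ R + 1 ∧ T.dist (g • (u • x)) y ≤ R + 1} := by
        ext g; simp only [Set.mem_setOf_eq, mul_smul]
      rw [hset]
      have hℓ1 : 1 ≤ T.dist x (u • x) := by
        rcases Nat.eq_zero_or_pos (T.dist x (u • x)) with h0 | h1
        · exact absurd ((TDev.dist_eq_zero_iff hc).mp h0).symm hux
        · exact h1
      rcases Nat.lt_or_ge (T.dist x (u • x)) 2 with hℓ2 | hℓ2
      · -- distance one case
        have hadj : T.Adj x (u • x) := TDev.adj_of_dist_eq_one (by omega)
        rcases Nat.eq_zero_or_pos R with hR0 | hR1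
        · subst hR0
          apply ADN_mono _ (ADN_union hgen hsym (ADN_fiber hstabSet x y)
            (ADN_fiber hstabSet (u • x) y))
          rintro g ⟨hg1, hg2⟩
          simp only [Set.mem_union, Set.mem_setOf_eq]
          by_contra hcon
          push_neg at hcon
          obtain ⟨hc1, hc2⟩ := hcon
          have d1 : T.dist (g • x) y = 1 := by
            have h0 : T.dist (g • x) y ≠ 0 := fun h => hc1 ((TDev.dist_eq_zero_iff hc).mp h)
            omega
          have d2 : T.dist (g • (u • x)) y = 1 := by
            have h0 : T.dist (g • (u • x)) y ≠ 0 :=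
              fun h => hc2 ((TDev.dist_eq_zero_iff hc).mp h)
            omega
          exact TDev.no_triangle ha (adj_smul hiso g hadj) (TDev.adj_of_dist_eq_one d2)
            (TDev.adj_of_dist_eq_one (by rw [SimpleGraph.dist_comm]; exact d1))
        · -- R ≥ 1 : decompose along unordered edges
          set B : Set X → Set Γ := fun E =>
            {g : Γ | (T.dist (g • x) y ≤ R + 1 ∧ T.dist (g • (u • x)) y ≤ R + 1) ∧
              ({g • x, g • (u • x)} : Set X) = E} with hB
          have hsetB : {g : Γ | T.dist (g • x) y ≤ R + 1 ∧ T.dist (g • (u • x)) y ≤ R + 1}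
              = ⋃ E, B E := by
            ext g
            simp only [Set.mem_iUnion, hB, Set.mem_setOf_eq]
            constructor
            · intro h; exact ⟨{g • x, g • (u • x)}, h, rfl⟩
            · rintro ⟨E, h, _⟩; exact h
          rw [hsetB]
          have hM : ADN S n {h : Γ | T.dist (h • x) x ≤ R} := ih x x
          apply ADN_iUnion hgen hsym
          · -- uniform covers of the pieces B E
            have hM' := hM
            choose RM 𝔐 hRM0 h𝔐 hcov𝔐 using hM'
            refine ⟨fun d => if h : 0 < d then RM d h else 0, ?_⟩
            intro d hd
            simp only [dif_pos hd]
            refine ⟨hRM0 d hd, ?_⟩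
            intro E
            rcases Set.eq_empty_or_nonempty (B E) with he | ⟨g₀, hg₀⟩
            · refine ⟨fun _ => ∅, fun i => ⟨?_, ?_⟩, ?_⟩
              · intro U hU; exact absurd hU (Set.notMem_empty U)
              · intro U hU; exact absurd hU (Set.notMem_empty U)
              · intro z hz; rw [he] at hz; exact absurd hz (Set.notMem_empty z)
            · refine ⟨fun i => (Set.image (g₀ * ·)) '' 𝔐 d hd i, fun i => ⟨?_, ?_⟩, ?_⟩
              · rintro W ⟨U, hU, rfl⟩ x' ⟨x₀, hx₀, rfl⟩ y' ⟨y₀, hy₀, rfl⟩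
                rw [ρ_left]
                exact (h𝔐 d hd i).1 U hU x₀ hx₀ y₀ hy₀
              · rintro W ⟨U, hU, rfl⟩ W' ⟨V, hV, rfl⟩ hne x' ⟨x₀, hx₀, rfl⟩ y' ⟨y₀, hy₀, rfl⟩
                rw [ρ_left]
                have hUV : U ≠ V := by rintro rfl; exact hne rfl
                exact (h𝔐 d hd i).2 U hU V hV hUV x₀ hx₀ y₀ hy₀
              · intro z hz
                have hzx : z • x ∈ ({g₀ • x, g₀ • (u • x)} : Set X) := by
                  have h1 : ({z • x, z • (u • x)} : Set X) = E := hz.2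
                  have h2 : ({g₀ • x, g₀ • (u • x)} : Set X) = E := hg₀.2
                  rw [← h2] at h1
                  have : z • x ∈ ({z • x, z • (u • x)} : Set X) := by simp
                  rwa [h1] at this
                have hzM : (g₀⁻¹ * z) ∈ {h : Γ | T.dist (h • x) x ≤ R} := by
                  simp only [Set.mem_setOf_eq, mul_smul]
                  rcases hzx with h | h
                  · rw [h]
                    simp [SimpleGraph.dist_self]
                  · simp only [Set.mem_singleton_iff] at h
                    rw [h]
                    have : g₀⁻¹ • g₀ • (u • x) = u • x := by simp
                    rw [this]
                    have hcm : T.dist (u • x) x = T.dist x (u • x) := SimpleGraph.dist_comm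
                    omega
                obtain ⟨i, U, hU, hmem⟩ := hcov𝔐 d hd (g₀⁻¹ * z) hzM
                exact ⟨i, _, ⟨U, hU, rfl⟩, ⟨g₀⁻¹ * z, hmem, by group⟩⟩
          · -- the Y_r part for the inner union
            intro r hr
            set N := ⌈r⌉₊ with hN
            set Ball : Set Γ := {u' : Γ | WDev.gN S u' ≤ N ∧
              ({u' • x, (u' * u) • x} : Set X) ≠ {x, u • x}} with hBall
            have hBallFin : Ball.Finite := (hfin N).subset (fun u' hu' => hu'.1)
            set Zu' : Γ → Set Γ := fun u' => {g : Γ | T.dist (g • x) y ≤ R + 1 ∧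
              T.dist (g • (u • x)) y ≤ R + 1 ∧ T.dist (g • (u' • x)) y ≤ R + 1 ∧
              T.dist (g • ((u' * u) • x)) y ≤ R + 1} with hZu'
            refine ⟨⋃ u' ∈ Ball, Zu' u', ?_, ?_⟩
            · apply ADN_biUnion hgen hsym hBallFin
              intro u' hu'
              have hadj2 : T.Adj (u' • x) ((u' * u) • x) := by
                rw [mul_smul]
                exact adj_smul hiso u' hadj
              obtain ⟨p, hp, q, hq, hpq⟩ := edge_sep hc ha hadj hadj2 (Ne.symm hu'.2)
              apply ADN_mono _ (twoPoint hc ha hiso R ih p q y hpq)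
              rintro g ⟨hg1, hg2, hg3, hg4⟩
              simp only [Set.mem_setOf_eq]
              constructor
              · rcases hp with h | h
                · rw [h]; exact hg1
                · simp only [Set.mem_singleton_iff] at h; rw [h]; exact hg2
              · rcases hq with h | h
                · rw [h]; exact hg3
                · simp only [Set.mem_singleton_iff] at h; rw [h]; exact hg4
            · -- separation
              intro E E' hEE' a haE b hbE
              by_contra hcon
              push_neg at hcon
              have hgNu : WDev.gN S (a⁻¹ * b) ≤ N := by
                have he1 : (WDev.gN S (a⁻¹ * b) : ℝ) = ρ S a b := by
                  rw [WDev.gN_eq_wordDist]; rfl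
                have hlt : (WDev.gN S (a⁻¹ * b) : ℝ) < (N : ℝ) :=
                  lt_of_lt_of_le (he1 ▸ hcon) (Nat.le_ceil r)
                exact le_of_lt (by exact_mod_cast hlt)
              have habx : ∀ z : X, a • ((a⁻¹ * b) • z) = b • z := by
                intro z; rw [mul_smul]; simp
              have hpairne : ({(a⁻¹ * b) • x, ((a⁻¹ * b) * u) • x} : Set X) ≠ {x, u • x} := by
                intro hpeq
                have himg := congrArg (fun (E : Set X) => (a • ·) '' E) hpeq
                simp only [Set.image_insert_eq, Set.image_singleton] at himg
                rw [habx x] at himg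
                have h2 : a • (((a⁻¹ * b) * u) • x) = b • (u • x) := by
                  rw [mul_smul ((a⁻¹*b)) u x, habx (u • x)]
                rw [h2] at himg
                -- himg : {b • x, b • (u•x)} = {a • x, a • (u•x)} i.e. E' = E
                have hE' : ({b • x, b • (u • x)} : Set X) = E' := hbE.1.2
                have hE : ({a • x, a • (u • x)} : Set X) = E := haE.1.2
                rw [hE', hE] at himg
                exact hEE' (himg.symm)
              have haZ : a ∈ Zu' (a⁻¹ * b) := by
                refine ⟨haE.1.1.1, haE.1.1.2, ?_, ?_⟩
                · rw [habx x]
                  exact hbE.1.1.1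
                · rw [mul_smul (a⁻¹*b) u x, habx (u • x)]
                  exact hbE.1.1.2
              exact haE.2 (Set.mem_biUnion ⟨hgNu, hpairne⟩ haZ)
      · -- distance at least two
        exact ADN_mono (fun g hg => hg) (twoPoint hc ha hiso R ih x (u • x) y hℓ2)
    -- main decomposition of the (R+1)-set
    set A : X → Set Γ := fun w => {g : Γ | g • x = w ∧ T.dist (g • x) y ≤ R + 1} with hA
    have hZA : {g : Γ | T.dist (g • x) y ≤ R + 1} = ⋃ w, A w := by
      ext g
      simp only [Set.mem_iUnion, hA, Set.mem_setOf_eq]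
      constructor
      · intro h; exact ⟨g • x, rfl, h⟩
      · rintro ⟨w, _, h⟩; exact h
    rw [hZA]
    apply ADN_iUnion hgen hsym
    · -- uniform covers of the fibers
      have hS' := hstabSet x
      choose RS 𝔖 hRS0 h𝔖 hcov𝔖 using hS'
      refine ⟨fun d => if h : 0 < d then RS d h else 0, ?_⟩
      intro d hd
      simp only [dif_pos hd]
      refine ⟨hRS0 d hd, ?_⟩
      intro w
      rcases Set.eq_empty_or_nonempty (A w) with he | ⟨g₀, hg₀⟩
      · refine ⟨fun _ => ∅, fun i => ⟨?_, ?_⟩, ?_⟩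
        · intro U hU; exact absurd hU (Set.notMem_empty U)
        · intro U hU; exact absurd hU (Set.notMem_empty U)
        · intro z hz; rw [he] at hz; exact absurd hz (Set.notMem_empty z)
      · refine ⟨fun i => (Set.image (g₀ * ·)) '' 𝔖 d hd i, fun i => ⟨?_, ?_⟩, ?_⟩
        · rintro W ⟨U, hU, rfl⟩ x' ⟨x₀, hx₀, rfl⟩ y' ⟨y₀, hy₀, rfl⟩
          rw [ρ_left]
          exact (h𝔖 d hd i).1 U hU x₀ hx₀ y₀ hy₀
        · rintro W ⟨U, hU, rfl⟩ W' ⟨V, hV, rfl⟩ hne x' ⟨x₀, hx₀, rfl⟩ y' ⟨y₀, hy₀, rfl⟩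
          rw [ρ_left]
          have hUV : U ≠ V := by rintro rfl; exact hne rfl
          exact (h𝔖 d hd i).2 U hU V hV hUV x₀ hx₀ y₀ hy₀
        · intro z hz
          have hzs : (g₀⁻¹ * z) ∈ ((MulAction.stabilizer Γ x : Subgroup Γ) : Set Γ) := by
            simp only [SetLike.mem_coe, MulAction.mem_stabilizer_iff, mul_smul]
            rw [hz.1, ← hg₀.1]
            simp
          obtain ⟨i, U, hU, hmem⟩ := hcov𝔖 d hd (g₀⁻¹ * z) hzs
          exact ⟨i, _, ⟨U, hU, rfl⟩, ⟨g₀⁻¹ * z, hmem, by group⟩⟩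
    · -- Y_r for the outer union
      intro r hr
      set N := ⌈r⌉₊ with hN
      set Ball : Set Γ := {u : Γ | WDev.gN S u ≤ N ∧ u • x ≠ x} with hBall
      have hBallFin : Ball.Finite := (hfin N).subset (fun u hu => hu.1)
      refine ⟨⋃ u ∈ Ball, {g : Γ | T.dist (g • x) y ≤ R + 1 ∧
        T.dist ((g * u) • x) y ≤ R + 1}, ?_, ?_⟩
      · exact ADN_biUnion hgen hsym hBallFin (fun u hu => hZu u hu.2)
      · intro w w' hww' a haw b hbw
        by_contra hcon
        push_neg at hcon
        have hgNu : WDev.gN S (a⁻¹ * b) ≤ N := by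
          have he1 : (WDev.gN S (a⁻¹ * b) : ℝ) = ρ S a b := by
            rw [WDev.gN_eq_wordDist]; rfl
          have hlt : (WDev.gN S (a⁻¹ * b) : ℝ) < (N : ℝ) :=
            lt_of_lt_of_le (he1 ▸ hcon) (Nat.le_ceil r)
          exact le_of_lt (by exact_mod_cast hlt)
        have hux : (a⁻¹ * b) • x ≠ x := by
          intro h
          have : a • ((a⁻¹ * b) • x) = a • x := by rw [h]
          rw [mul_smul] at this
          simp only [smul_inv_smul] at this
          -- this : b • x = a • x
          rw [haw.1.1, hbw.1.1] at this
          exact hww' (this.symm)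
        have haZ : a ∈ {g : Γ | T.dist (g • x) y ≤ R + 1 ∧
            T.dist ((g * (a⁻¹ * b)) • x) y ≤ R + 1} := by
          refine ⟨haw.1.2, ?_⟩
          have : a * (a⁻¹ * b) = b := by group
          rw [this]
          exact hbw.1.2
        exact haw.2 (Set.mem_biUnion ⟨hgNu, hux⟩ haZ)

end Main

end ADev

/-- Let a (finitely generated) group `Γ` act on a tree with compact (finite) quotient and
finitely generated vertex stabilizers `Γ_x` satisfying `asdim Γ_x ≤ n` (in the word
metric restricted from `Γ`) for all vertices `x`. Then for every `R > 0` and base vertex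
`x₀`, the `R`-stabilizer `W_R(x₀) = {g : d(g • x₀, x₀) ≤ R}`, with the restricted word
metric, satisfies `asdim W_R(x₀) ≤ n`. -/
theorem asdim_R_stabilizer_le {Γ : Type*} [Group Γ] (S : Finset Γ)
    (hgen : Subgroup.closure (S : Set Γ) = ⊤) (hsym : ∀ s ∈ S, s⁻¹ ∈ S)
    {X : Type*} (T : SimpleGraph X) (hT : T.IsTree)
    [MulAction Γ X]
    (hiso : ∀ (g : Γ) (u v : X), T.Adj u v ↔ T.Adj (g • u) (g • v))
    (hcompact : Finite (Quotient (MulAction.orbitRel Γ X)))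
    (n : ℕ)
    (hfg : ∀ x : X, Group.FG (MulAction.stabilizer Γ x))
    (hstab : ∀ x : X, ASDimLEdist
      (fun a b : MulAction.stabilizer Γ x =>
        (wordDist (S : Set Γ) (a : Γ) (b : Γ) : ℝ)) n) :
    ∀ (x₀ : X) (R : ℕ), 0 < R →
      ASDimLEdist
        (fun a b : {g : Γ // T.dist (g • x₀) x₀ ≤ R} =>
          (wordDist (S : Set Γ) a.1 b.1 : ℝ)) n := by
  intro x₀ R _
  classical
  have hsymS : ∀ s ∈ (S : Set Γ), s⁻¹ ∈ (S : Set Γ) := by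
    intro s hs
    exact_mod_cast hsym s (by exact_mod_cast hs)
  have hfin : ∀ N : ℕ, {g : Γ | WDev.gN (S : Set Γ) g ≤ N}.Finite :=
    WDev.ball_finite S hgen hsymS
  have hstabSet : ∀ x : X,
      ADev.ADN (S : Set Γ) n ((MulAction.stabilizer Γ x : Subgroup Γ) : Set Γ) :=
    fun x => ADev.ADN_of_subtype _ (hstab x)
  have hmain := ADev.main_induction hgen hsymS hfin hT.isConnected hT.IsAcyclic hiso
    hstabSet R x₀ x₀
  exact ADev.subtype_of_ADN _ hmain
end

section
/- Let A = B = C = Z and let the inclusions C → A and C → B both be multiplication by 2. Then asdim(A ∗_C B) = 2; in particular the bound asdim ≤ max{asdim vertex groups} + 1 for amalgamated products is sharp. -/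
open Set Monoid

/-- The amalgamated free product `A ∗_C B`. -/
def AmalgamatedProduct {A B C : Type*} [Group A] [Group B] [Group C]
    (ja : C →* A) (jb : C →* B) : Type _ :=
  Coprod A B ⧸ Subgroup.normalClosure
    {x : Coprod A B | ∃ c : C, x = Coprod.inl (ja c) * (Coprod.inr (jb c))⁻¹}

instance {A B C : Type*} [Group A] [Group B] [Group C] (ja : C →* A) (jb : C →* B) :
    Group (AmalgamatedProduct ja jb) := by
  unfold AmalgamatedProduct; infer_instance

/-- The inclusion `ℤ → ℤ` (written multiplicatively) given by multiplication by 2. -/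
noncomputable def mulTwo : Multiplicative ℤ →* Multiplicative ℤ :=
  zpowersHom (Multiplicative ℤ) (Multiplicative.ofAdd (2 : ℤ))


section AuxZ2
open Finset
/-- ℓ¹ distance on ℤ². -/
def dist2 (p q : ℤ × ℤ) : ℝ := ((|p.1 - q.1| + |p.2 - q.2| : ℤ) : ℝ)

namespace Bricks

variable (M : ℤ)

/-- the brick containing a point, at scale `L = 2M`. -/
def brick (p : ℤ × ℤ) : ℤ × ℤ :=
  (p.2 / (2 * M), (p.1 - M * (p.2 / (2 * M))) / (2 * M))

lemma brick_decomp (hM : 0 < M) (p : ℤ × ℤ) :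
    ∃ rx ry : ℤ, p.1 = M * (brick M p).1 + 2 * M * (brick M p).2 + rx ∧
      p.2 = 2 * M * (brick M p).1 + ry ∧
      0 ≤ rx ∧ rx < 2 * M ∧ 0 ≤ ry ∧ ry < 2 * M := by
  have hL : (0:ℤ) < 2 * M := by omega
  refine ⟨(p.1 - M * (p.2 / (2*M))) % (2*M), p.2 % (2*M), ?_, ?_, ?_, ?_, ?_, ?_⟩
  · have h1 := Int.mul_ediv_add_emod (p.1 - M * (p.2 / (2*M))) (2*M)
    simp only [brick]; omega
  · have h2 := Int.mul_ediv_add_emod p.2 (2*M)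
    simp only [brick]; omega
  · exact Int.emod_nonneg _ hL.ne'
  · exact Int.emod_lt_of_pos _ hL
  · exact Int.emod_nonneg _ hL.ne'
  · exact Int.emod_lt_of_pos _ hL

lemma brick_eq_of_decomp (hM : 0 < M) {x y j k rx ry : ℤ}
    (hx : x = M * j + 2 * M * k + rx) (hy : y = 2 * M * j + ry)
    (h1 : 0 ≤ rx) (h2 : rx < 2*M) (h3 : 0 ≤ ry) (h4 : ry < 2*M) :
    brick M (x, y) = (j, k) := by
  have hL : (0:ℤ) < 2 * M := by omega
  have hj : y / (2*M) = j := ((Int.ediv_emod_unique hL).mpr ⟨by omega, h3, h4⟩).1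
  have hk : (x - M * j) / (2*M) = k := ((Int.ediv_emod_unique hL).mpr ⟨by omega, h1, h2⟩).1
  simp only [brick, hj, hk]

/-- key geometric fact: same color + close ⇒ same brick.  Asymmetric auxiliary case. -/
lemma aux_case (hM : 0 < M) {j k rx ry j' k' rx' ry' x y x' y' : ℤ}
    (hx : x = M * j + 2*M*k + rx) (hy : y = 2*M*j + ry)
    (hx' : x' = M * j' + 2*M*k' + rx') (hy' : y' = 2*M*j' + ry')
    (h1 : 0 ≤ rx) (h2 : rx < 2*M) (h3 : 0 ≤ ry) (h4 : ry < 2*M)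
    (h1' : 0 ≤ rx') (h2' : rx' < 2*M) (h3' : 0 ≤ ry') (h4' : ry' < 2*M)
    (hcol : (3:ℤ) ∣ (j + 2*k) - (j' + 2*k'))
    (hclose : |x - x'| + |y - y'| < M) (hu : j' = j + 1) : False := by
  subst hu
  have hw : k' - k ≥ 1 ∨ k' - k ≤ -2 := by omega
  have hax : |x - x'| < M := by
    have := abs_nonneg (y - y'); linarith
  have hax1 := abs_lt.mp hax
  rcases hw with hw | hw
  · have h5 : 2*M ≤ 2*M*(k'-k) := le_mul_of_one_le_right (by omega) hw
    have h6 : x' - x = M + 2*M*(k'-k) + (rx' - rx) := by rw [hx, hx']; ring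
    linarith
  · have h5 : 2*M*(k'-k) ≤ 2*M*(-2) := mul_le_mul_of_nonneg_left hw (by omega)
    have h6 : x' - x = M + 2*M*(k'-k) + (rx' - rx) := by rw [hx, hx']; ring
    linarith

lemma same_brick (hM : 0 < M) {p q : ℤ × ℤ}
    (hcol : (3:ℤ) ∣ ((brick M p).1 + 2*(brick M p).2) - ((brick M q).1 + 2*(brick M q).2))
    (hclose : |p.1 - q.1| + |p.2 - q.2| < M) : brick M p = brick M q := by
  obtain ⟨rx, ry, hx, hy, h1, h2, h3, h4⟩ := brick_decomp M hM p
  obtain ⟨rx', ry', hx', hy', h1', h2', h3', h4'⟩ := brick_decomp M hM q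
  set j := (brick M p).1 with hjdef; set k := (brick M p).2 with hkdef
  set j' := (brick M q).1 with hjdef'; set k' := (brick M q).2 with hkdef'
  have hay : |p.2 - q.2| < M := by have := abs_nonneg (p.1 - q.1); linarith
  have hyl := abs_lt.mp hay
  have hj : -1 ≤ j' - j ∧ j' - j ≤ 1 := by
    constructor <;> nlinarith [hyl.1, hyl.2]
  rcases (by omega : j' = j + 1 ∨ j' = j - 1 ∨ j' = j) with hu | hu | hu
  · exact (aux_case M hM hx hy hx' hy' h1 h2 h3 h4 h1' h2' h3' h4' hcol hclose hu).elim
  · have hcol' : (3:ℤ) ∣ (j' + 2*k') - (j + 2*k) := by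
      obtain ⟨c, hc⟩ := hcol; exact ⟨-c, by linarith⟩
    have hclose' : |q.1 - p.1| + |q.2 - p.2| < M := by
      rwa [abs_sub_comm, abs_sub_comm q.2]
    exact (aux_case M hM hx' hy' hx hy h1' h2' h3' h4' h1 h2 h3 h4 hcol' hclose' (by omega)).elim
  · -- same row
    have hax : |p.1 - q.1| < M := by have := abs_nonneg (p.2 - q.2); linarith
    have hxl := abs_lt.mp hax
    have hv : -1 ≤ k' - k ∧ k' - k ≤ 1 := by
      constructor <;> nlinarith [hxl.1, hxl.2, hyl.1, hyl.2]
    have hk : k' = k := by omega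
    have e1 : brick M p = (j, k) := by rw [hjdef, hkdef]
    have e2 : brick M q = (j', k') := by rw [hjdef', hkdef']
    rw [e1, e2, hu, hk]

end Bricks

lemma asdim_Z2_le_two : ASDimLEdist dist2 2 := by
  intro d hd
  set M : ℤ := ⌈d⌉ with hMdef
  have hM : 0 < M := Int.ceil_pos.mpr hd
  have hdM : d ≤ (M : ℝ) := Int.le_ceil d
  refine ⟨fun i => {U | ∃ b : ℤ × ℤ, (b.1 + 2*b.2) % 3 = (i : ℤ) ∧
      U = {p | Bricks.brick M p = b}}, fun i => ⟨⟨((4*M : ℤ) : ℝ), ?_⟩, ?_⟩, ?_⟩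
  · rintro U ⟨b, -, rfl⟩ x hx y hy
    simp only [mem_setOf_eq] at hx hy
    obtain ⟨rx, ry, hx1, hy1, h1, h2, h3, h4⟩ := Bricks.brick_decomp M hM x
    obtain ⟨rx', ry', hx1', hy1', h1', h2', h3', h4'⟩ := Bricks.brick_decomp M hM y
    rw [hx, hy] at *
    have : |x.1 - y.1| + |x.2 - y.2| ≤ 4*M := by
      rw [hx] at hx1 hy1
      have e1 : x.1 - y.1 = rx - rx' := by omega
      have e2 : x.2 - y.2 = ry - ry' := by omega
      rw [e1, e2]
      have := abs_lt.mpr (show -(2*M) < rx - rx' ∧ rx - rx' < 2*M by omega)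
      have := abs_lt.mpr (show -(2*M) < ry - ry' ∧ ry - ry' < 2*M by omega)
      omega
    unfold dist2
    exact_mod_cast this
  · rintro U ⟨b, hb, rfl⟩ V ⟨b', hb', rfl⟩ hUV x hx y hy
    simp only [mem_setOf_eq] at hx hy
    have hbb' : b ≠ b' := by rintro rfl; exact hUV rfl
    have hcol : (3:ℤ) ∣ (b.1 + 2*b.2) - (b'.1 + 2*b'.2) := by
      have : (b.1 + 2*b.2) % 3 = (b'.1 + 2*b'.2) % 3 := by rw [hb, hb']
      omega
    have : ¬ (|x.1 - y.1| + |x.2 - y.2| < M) := by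
      intro hclose
      apply hbb'
      rw [← hx, ← hy]
      exact Bricks.same_brick M hM (by rw [hx, hy]; exact hcol) hclose
    have hge : (M:ℝ) ≤ dist2 x y := by unfold dist2; exact_mod_cast not_lt.mp this
    linarith
  · intro p
    set c : ℤ := ((Bricks.brick M p).1 + 2*(Bricks.brick M p).2) % 3 with hc
    have hc0 : 0 ≤ c := Int.emod_nonneg _ (by norm_num)
    have hc3 : c < 3 := Int.emod_lt_of_pos _ (by norm_num)
    refine ⟨⟨c.toNat, by omega⟩, {q | Bricks.brick M q = Bricks.brick M p}, ⟨Bricks.brick M p, ?_, rfl⟩, rfl⟩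
    simp only [Fin.val_mk]
    omega



namespace Sperner

def n01 (a b : Fin 3) : ZMod 2 := if (a = 0 ∧ b = 1) ∨ (a = 1 ∧ b = 0) then 1 else 0
def mm (a : Fin 3) : ZMod 2 := if a = 1 then 1 else 0

lemma zm3 : ∀ a b c : ZMod 2, a + b + (b + c) = a + c := by decide

lemma tele (f : ℕ → ZMod 2) : ∀ N, ∑ j ∈ Finset.range N, (f j + f (j+1)) = f 0 + f N
  | 0 => by simpa using (by decide : ∀ a : ZMod 2, 0 = a + a) (f 0)
  | N+1 => by rw [Finset.sum_range_succ, tele f N, zm3]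

lemma n01_id : ∀ a b c : Fin 3,
    (n01 a b + n01 b c + n01 a c) = if a ≠ b ∧ b ≠ c ∧ a ≠ c then 1 else 0 := by decide

lemma n01_no1 : ∀ a b : Fin 3, a ≠ 1 → b ≠ 1 → n01 a b = 0 := by decide
lemma n01_no0 : ∀ a b : Fin 3, a ≠ 0 → b ≠ 0 → n01 a b = 0 := by decide
lemma n01_mm : ∀ a b : Fin 3, a ≠ 2 → b ≠ 2 → n01 a b = mm a + mm b := by decide
lemma mm_one : ∀ a : Fin 3, a ≠ 0 → a ≠ 2 → mm a = 1 := by decide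
lemma mm_zero : ∀ a : Fin 3, a ≠ 1 → mm a = 0 := by decide
lemma cellsum : ∀ h1 h2 v1 v2 dd : ZMod 2,
    (h1 + v2 + dd) + (v1 + h2 + dd) = (h1 + h2) + (v1 + v2) := by decide

theorem grid_rainbow (N : ℕ) (lab : ℤ → ℤ → Fin 3)
    (hb : ∀ x : ℤ, 0 ≤ x → x ≤ N → lab x 0 ≠ 1)
    (hl : ∀ y : ℤ, 0 ≤ y → y ≤ N → lab 0 y ≠ 0)
    (ht : ∀ x : ℤ, 0 ≤ x → x ≤ N → lab x N ≠ 2)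
    (hr : ∀ y : ℤ, 0 ≤ y → y ≤ N → lab N y ≠ 2) :
    ∃ i j : ℕ, i < N ∧ j < N ∧
      ((lab i j ≠ lab (i+1) j ∧ lab (i+1) j ≠ lab (i+1) (j+1) ∧ lab i j ≠ lab (i+1) (j+1)) ∨
       (lab i j ≠ lab i (j+1) ∧ lab i (j+1) ≠ lab (i+1) (j+1) ∧ lab i j ≠ lab (i+1) (j+1))) := by
  by_contra hno
  push_neg at hno
  set H : ℕ → ℕ → ZMod 2 := fun i j => n01 (lab i j) (lab ((i:ℤ)+1) j) with hH
  set V : ℕ → ℕ → ZMod 2 := fun i j => n01 (lab i j) (lab i ((j:ℤ)+1)) with hV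
  set D : ℕ → ℕ → ZMod 2 := fun i j => n01 (lab i j) (lab ((i:ℤ)+1) ((j:ℤ)+1)) with hD
  -- value of each cell
  have hcellzero : ∀ i j : ℕ, i < N → j < N →
      (H i j + V (i+1) j + D i j) + (V i j + H i (j+1) + D i j) = 0 := by
    intro i j hi hj
    obtain ⟨hA, hB⟩ := hno i j hi hj
    have e1 : H i j + V (i+1) j + D i j = 0 := by
      simp only [hH, hV, hD]
      push_cast
      rw [n01_id, if_neg]
      rintro ⟨a, b, c⟩; exact c (hA a b)
    have e2 : V i j + H i (j+1) + D i j = 0 := by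
      simp only [hH, hV, hD]
      push_cast
      rw [n01_id, if_neg]
      rintro ⟨a, b, c⟩; exact c (hB a b)
    rw [e1, e2, add_zero]
  set S : ZMod 2 := ∑ i ∈ range N, ∑ j ∈ range N,
      ((H i j + V (i+1) j + D i j) + (V i j + H i (j+1) + D i j)) with hS
  have hS0 : S = 0 := by
    rw [hS]
    apply Finset.sum_eq_zero; intro i hi
    apply Finset.sum_eq_zero; intro j hj
    exact hcellzero i j (mem_range.mp hi) (mem_range.mp hj)
  have hS1 : S = 1 := by
    have hsplit : S = (∑ i ∈ range N, (H i 0 + H i N)) + (∑ j ∈ range N, (V 0 j + V N j)) := by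
      rw [hS]
      have step : ∀ i ∈ range N, ∑ j ∈ range N,
          ((H i j + V (i+1) j + D i j) + (V i j + H i (j+1) + D i j)) =
          (H i 0 + H i N) + ∑ j ∈ range N, (V i j + V (i+1) j) := by
        intro i _
        have : ∀ j ∈ range N,
            ((H i j + V (i+1) j + D i j) + (V i j + H i (j+1) + D i j)) =
            ((H i j + H i (j+1)) + (V i j + V (i+1) j)) := by
          intro j _; exact cellsum _ _ _ _ _
        rw [Finset.sum_congr rfl this, Finset.sum_add_distrib, tele (fun j => H i j) N]
      rw [Finset.sum_congr rfl step, Finset.sum_add_distrib, Finset.sum_comm]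
      congr 1
      apply Finset.sum_congr rfl
      intro j _
      exact tele (fun i => V i j) N
    have hHbot : ∀ i : ℕ, i < N → H i 0 = 0 := by
      intro i hi
      simp only [hH]; push_cast
      exact n01_no1 _ _ (hb i (by positivity) (by exact_mod_cast hi.le))
        (hb ((i:ℤ)+1) (by positivity) (by exact_mod_cast hi))
    have hVleft : ∀ j : ℕ, j < N → V 0 j = 0 := by
      intro j hj
      simp only [hV]; push_cast
      exact n01_no0 _ _ (hl j (by positivity) (by exact_mod_cast hj.le))
        (hl ((j:ℤ)+1) (by positivity) (by exact_mod_cast hj))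
    have hHtop : ∀ i : ℕ, i < N → H i N = mm (lab i N) + mm (lab ((i:ℤ)+1) N) := by
      intro i hi
      simp only [hH]; push_cast
      exact n01_mm _ _ (ht i (by positivity) (by exact_mod_cast hi.le))
        (ht ((i:ℤ)+1) (by positivity) (by exact_mod_cast hi))
    have hVright : ∀ j : ℕ, j < N → V N j = mm (lab N j) + mm (lab N ((j:ℤ)+1)) := by
      intro j hj
      simp only [hV]; push_cast
      exact n01_mm _ _ (hr j (by positivity) (by exact_mod_cast hj.le))
        (hr ((j:ℤ)+1) (by positivity) (by exact_mod_cast hj))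
    have e1 : ∑ i ∈ range N, (H i 0 + H i N) = mm (lab 0 N) + mm (lab N N) := by
      have step : ∀ i ∈ range N, H i 0 + H i N =
          (fun i : ℕ => mm (lab i N)) i + (fun i : ℕ => mm (lab i N)) (i+1) := by
        intro i hi
        rw [hHbot i (mem_range.mp hi), hHtop i (mem_range.mp hi), zero_add]
        simp only []
        push_cast
        rfl
      rw [Finset.sum_congr rfl step, tele (fun i => mm (lab i N)) N]
      norm_num
    have e2 : ∑ j ∈ range N, (V 0 j + V N j) = mm (lab N 0) + mm (lab N N) := by
      have step : ∀ j ∈ range N, V 0 j + V N j =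
          (fun j : ℕ => mm (lab N j)) j + (fun j : ℕ => mm (lab N j)) (j+1) := by
        intro j hj
        rw [hVleft j (mem_range.mp hj), hVright j (mem_range.mp hj), zero_add]
        simp only []
        push_cast
        rfl
      rw [Finset.sum_congr rfl step, tele (fun j => mm (lab N j)) N]
      norm_num
    rw [hsplit, e1, e2]
    have v1 : mm (lab 0 N) = 1 :=
      mm_one _ (hl N (by positivity) le_rfl) (ht 0 (by norm_num) (by positivity))
    have v2 : mm (lab N 0) = 0 := mm_zero _ (hb N (by positivity) le_rfl)
    rw [v1, v2]
    generalize mm (lab N N) = w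
    revert w; decide
  rw [hS0] at hS1
  exact absurd hS1 (by decide)

end Sperner

lemma not_asdim_Z2_le_one : ¬ ASDimLEdist dist2 1 := by
  classical
  intro h
  obtain ⟨𝔘, h1, h2⟩ := h 3 (by norm_num)
  obtain ⟨R0, hR0⟩ := (h1 0).1
  obtain ⟨R1, hR1⟩ := (h1 1).1
  set Rm : ℝ := max R0 R1 with hRm
  have hbound : ∀ i : Fin 2, ∀ U ∈ 𝔘 i, ∀ x ∈ U, ∀ y ∈ U, dist2 x y ≤ Rm := by
    intro i
    fin_cases i
    · exact fun U hU x hx y hy => le_trans (hR0 U hU x hx y hy) (le_max_left _ _)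
    · exact fun U hU x hx y hy => le_trans (hR1 U hU x hx y hy) (le_max_right _ _)
  set N : ℕ := ⌈Rm⌉₊ + 1 with hNdef
  have hN : Rm < (N : ℝ) := lt_of_le_of_lt (Nat.le_ceil Rm) (by exact_mod_cast Nat.lt_succ_self _)
  -- choice of covering set for each point
  have hch : ∀ p : ℤ × ℤ, ∃ iU : Fin 2 × Set (ℤ × ℤ), iU.2 ∈ 𝔘 iU.1 ∧ p ∈ iU.2 := by
    intro p
    obtain ⟨i, U, hU, hp⟩ := h2 p
    exact ⟨(i, U), hU, hp⟩
  set fi : ℤ × ℤ → Fin 2 := fun p => ((hch p).choose).1 with hfi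
  set Up : ℤ × ℤ → Set (ℤ × ℤ) := fun p => ((hch p).choose).2 with hUp
  have hUmem : ∀ p, Up p ∈ 𝔘 (fi p) := fun p => ((hch p).choose_spec).1
  have hpmem : ∀ p, p ∈ Up p := fun p => ((hch p).choose_spec).2
  -- labels
  set labP : ℤ × ℤ → Fin 3 := fun p =>
    if (∀ q ∈ Up p, q.1 ≠ 0) then 0 else if (∀ q ∈ Up p, q.2 ≠ 0) then 1 else 2 with hlabP
  set lab : ℤ → ℤ → Fin 3 := fun x y => labP (x, y) with hlab
  -- label facts
  have hfac : ∀ p q : ℤ × ℤ, labP p ≠ labP q → Up p ≠ Up q := by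
    intro p q hne hUV
    apply hne
    simp only [hlabP, hUV]
  have lab1ne0 : ∀ p : ℤ × ℤ, p.1 = 0 → labP p ≠ 0 := by
    intro p hp hl0
    simp only [hlabP] at hl0
    split_ifs at hl0 with hc1 hc2
    · exact hc1 p (hpmem p) hp
    · exact absurd hl0 (by decide)
    · exact absurd hl0 (by decide)
  have lab2ne1 : ∀ p : ℤ × ℤ, p.2 = 0 → labP p ≠ 1 := by
    intro p hp hl0
    simp only [hlabP] at hl0
    split_ifs at hl0 with hc1 hc2
    · exact absurd hl0 (by decide)
    · exact hc2 p (hpmem p) hp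
    · exact absurd hl0 (by decide)
  have labne2 : ∀ p : ℤ × ℤ, ((N:ℤ) ≤ |p.1| ∨ (N:ℤ) ≤ |p.2|) → labP p ≠ 2 := by
    intro p hp hl0
    simp only [hlabP] at hl0
    split_ifs at hl0 with hc1 hc2
    · exact absurd hl0 (by decide)
    · exact absurd hl0 (by decide)
    · push_neg at hc1 hc2
      obtain ⟨q1, hq1m, hq1⟩ := hc1
      obtain ⟨q2, hq2m, hq2⟩ := hc2
      rcases hp with hp | hp
      · have hb1 := hbound (fi p) (Up p) (hUmem p) q1 hq1m p (hpmem p)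
        have : (N : ℝ) ≤ dist2 q1 p := by
          unfold dist2
          have h1 : (N:ℤ) ≤ |q1.1 - p.1| + |q1.2 - p.2| := by
            have : |p.1| = |q1.1 - p.1| := by rw [hq1]; rw [abs_sub_comm]; simp
            have h2 := abs_nonneg (q1.2 - p.2)
            omega
          exact_mod_cast h1
        linarith
      · have hb1 := hbound (fi p) (Up p) (hUmem p) q2 hq2m p (hpmem p)
        have : (N : ℝ) ≤ dist2 q2 p := by
          unfold dist2
          have h1 : (N:ℤ) ≤ |q2.1 - p.1| + |q2.2 - p.2| := by
            have : |p.2| = |q2.2 - p.2| := by rw [hq2]; rw [abs_sub_comm]; simp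
            have h2 := abs_nonneg (q2.1 - p.1)
            omega
          exact_mod_cast h1
        linarith
  -- separation helper (same family)
  have hpair : ∀ u v : ℤ × ℤ, fi u = fi v → labP u ≠ labP v → (3:ℝ) ≤ dist2 u v := by
    intro u v hfe hlne
    exact (h1 (fi u)).2 (Up u) (hUmem u) (Up v) (by rw [hfe]; exact hUmem v)
      (hfac u v hlne) u (hpmem u) v (hpmem v)
  have tri : ∀ a b c : Fin 2, a = b ∨ b = c ∨ a = c := by decide
  -- boundary conditions for the labeling
  have hb : ∀ x : ℤ, 0 ≤ x → x ≤ (N:ℤ) → lab x 0 ≠ 1 := fun x _ _ => lab2ne1 (x, 0) rfl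
  have hl : ∀ y : ℤ, 0 ≤ y → y ≤ (N:ℤ) → lab 0 y ≠ 0 := fun y _ _ => lab1ne0 (0, y) rfl
  have ht : ∀ x : ℤ, 0 ≤ x → x ≤ (N:ℤ) → lab x N ≠ 2 := fun x _ _ =>
    labne2 (x, (N:ℤ)) (Or.inr (by simp))
  have hr : ∀ y : ℤ, 0 ≤ y → y ≤ (N:ℤ) → lab N y ≠ 2 := fun y _ _ =>
    labne2 ((N:ℤ), y) (Or.inl (by simp))
  obtain ⟨i, j, hi, hj, hcase⟩ := Sperner.grid_rainbow N lab hb hl ht hr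
  have key : ∀ u v w : ℤ × ℤ, labP u ≠ labP v → labP v ≠ labP w → labP u ≠ labP w →
      dist2 u v ≤ 2 → dist2 v w ≤ 2 → dist2 u w ≤ 2 → False := by
    intro u v w l1 l2 l3 d1 d2 d3
    rcases tri (fi u) (fi v) (fi w) with he | he | he
    · linarith [hpair u v he l1]
    · linarith [hpair v w he l2]
    · linarith [hpair u w he l3]
  have dcomp : ∀ a b a' b' : ℤ, |a - a'| + |b - b'| ≤ 2 → dist2 (a,b) (a',b') ≤ 2 := by
    intro a b a' b' hab
    unfold dist2
    exact_mod_cast hab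
  rcases hcase with ⟨l1, l2, l3⟩ | ⟨l1, l2, l3⟩
  · exact key ((i:ℤ), (j:ℤ)) ((i:ℤ)+1, (j:ℤ)) ((i:ℤ)+1, (j:ℤ)+1) l1 l2 l3
      (dcomp _ _ _ _ (by simp)) (dcomp _ _ _ _ (by simp)) (dcomp _ _ _ _ (by simp))
  · exact key ((i:ℤ), (j:ℤ)) ((i:ℤ), (j:ℤ)+1) ((i:ℤ)+1, (j:ℤ)+1) l1 l2 l3
      (dcomp _ _ _ _ (by simp)) (dcomp _ _ _ _ (by simp)) (dcomp _ _ _ _ (by simp))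

lemma asdim_pullback {Z W : Type*} (ρZ : Z → Z → ℝ) (ρW : W → W → ℝ) (f : Z → W) (C L : ℝ)
    (hC : 0 < C) (hL : 0 ≤ L)
    (h1 : ∀ x y, ρZ x y ≤ L * ρW (f x) (f y))
    (h2 : ∀ x y, ρW (f x) (f y) ≤ C * ρZ x y)
    (n : ℕ) (h : ASDimLEdist ρW n) : ASDimLEdist ρZ n := by
  intro d hd
  obtain ⟨𝔘, hfam, hcov⟩ := h (C * d) (by positivity)
  refine ⟨fun i => (fun U => f ⁻¹' U) '' 𝔘 i, fun i => ⟨?_, ?_⟩, ?_⟩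
  · obtain ⟨R, hR⟩ := (hfam i).1
    refine ⟨L * R, ?_⟩
    rintro U ⟨U', hU', rfl⟩ x hx y hy
    calc ρZ x y ≤ L * ρW (f x) (f y) := h1 x y
      _ ≤ L * R := mul_le_mul_of_nonneg_left (hR U' hU' _ hx _ hy) hL
  · rintro U ⟨U', hU', rfl⟩ V ⟨V', hV', rfl⟩ hUV x hx y hy
    have hne : U' ≠ V' := by rintro rfl; exact hUV rfl
    have hsep := (hfam i).2 U' hU' V' hV' hne (f x) hx (f y) hy
    have h3 := le_trans hsep (h2 x y)
    exact le_of_mul_le_mul_left h3 hC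
  · intro z
    obtain ⟨i, U, hU, hz⟩ := hcov (f z)
    exact ⟨i, f ⁻¹' U, ⟨U, hU, rfl⟩, hz⟩

end AuxZ2

namespace KB

abbrev A : Type := Multiplicative ℤ

def u : A := Multiplicative.ofAdd 1

/-- inversion as automorphism -/
def ι : MulAut A := MulEquiv.inv A

/-- action of `ℤ` on `ℤ` by inversion-powers -/
noncomputable def ract : A →* MulAut A := zpowersHom (MulAut A) ι

noncomputable abbrev G : Type := SemidirectProduct A A ract

noncomputable def xG : G := SemidirectProduct.inr u
noncomputable def yG : G := SemidirectProduct.inl u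

lemma ract_cases : ∀ (g z : A), ract g z = z ∨ ract g z = z⁻¹ := by
  have base : ∀ z : A, ι z = z⁻¹ := fun z => rfl
  have inv_base : ∀ z : A, ι⁻¹ z = z⁻¹ := by
    intro z
    have h1 : ι (ι⁻¹ z) = z := ι.apply_symm_apply z
    have h2 : ι (z⁻¹) = z := by rw [base]; group
    exact ι.injective (by rw [h1, h2])
  have main : ∀ k : ℤ, ∀ z : A, (ι ^ k) z = z ∨ (ι ^ k) z = z⁻¹ := by
    intro k
    induction k using Int.induction_on with
    | zero => intro z; left; rfl
    | succ n ih =>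
        intro z
        have : (ι ^ ((n : ℤ) + 1)) z = (ι ^ (n:ℤ)) (ι z) := by
          rw [zpow_add_one]
          rfl
        rw [this, base]
        rcases ih z⁻¹ with h | h
        · right; exact h
        · left; rw [h]; group
    | pred n ih =>
        intro z
        have : (ι ^ (-(n : ℤ) - 1)) z = (ι ^ (-(n:ℤ))) (ι⁻¹ z) := by
          rw [sub_eq_add_neg, zpow_add, zpow_neg_one]
          rfl
        rw [this, inv_base]
        rcases ih z⁻¹ with h | h
        · right; exact h
        · left; rw [h]; group
  intro g z
  have : ract g = ι ^ (Multiplicative.toAdd g) := by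
    simp [ract, zpowersHom_apply]
  rw [this]
  exact main _ z

lemma ract_natAbs (g z : A) :
    (Multiplicative.toAdd (ract g z)).natAbs = (Multiplicative.toAdd z).natAbs := by
  rcases ract_cases g z with h | h <;> rw [h] <;> simp

lemma ract_u (z : A) : ract u z = z⁻¹ := by
  have : ract u = ι ^ (1:ℤ) := by simp [ract, u, zpowersHom_apply]
  rw [this, zpow_one]
  rfl

lemma sq_eq : (yG * xG) ^ 2 = xG ^ 2 := by
  have hx : xG * xG = SemidirectProduct.inr (u * u) := by simp [xG]
  ext
  · show ((yG * xG) * (yG * xG)).left = (xG * xG).left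
    simp [SemidirectProduct.mul_left, SemidirectProduct.mul_right, xG, yG, ract_u]
  · show ((yG * xG) * (yG * xG)).right = (xG * xG).right
    simp [SemidirectProduct.mul_left, SemidirectProduct.mul_right, xG, yG]

noncomputable abbrev K : Type := AmalgamatedProduct mulTwo mulTwo

def NN : Subgroup (Coprod A A) := Subgroup.normalClosure
  {x : Coprod A A | ∃ c : A, x = Coprod.inl (mulTwo c) * (Coprod.inr (mulTwo c))⁻¹}

instance : NN.Normal := Subgroup.normalClosure_normal

noncomputable def π : Coprod A A →* K := QuotientGroup.mk' NN

noncomputable def aK : K := π (Coprod.inl u)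
noncomputable def bK : K := π (Coprod.inr u)

lemma mulTwo_apply (c : A) : mulTwo c = Multiplicative.ofAdd (2 : ℤ) ^ (Multiplicative.toAdd c) := by
  simp [mulTwo, zpowersHom_apply]

lemma mulTwo_u : mulTwo u = u * u := by
  rw [mulTwo_apply]
  simp [u, ← ofAdd_add]

lemma relsq : aK ^ 2 = bK ^ 2 := by
  have hmem : Coprod.inl (mulTwo u) * (Coprod.inr (mulTwo u))⁻¹ ∈ NN :=
    Subgroup.subset_normalClosure ⟨u, rfl⟩
  have h1 : π (Coprod.inl (mulTwo u) * (Coprod.inr (mulTwo u))⁻¹) = 1 :=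
    (QuotientGroup.eq_one_iff _).mpr hmem
  have h2 : π (Coprod.inl (mulTwo u)) = π (Coprod.inr (mulTwo u)) := by
    rw [map_mul, map_inv] at h1
    exact mul_inv_eq_one.mp h1
  rw [mulTwo_u] at h2
  simp only [map_mul] at h2
  rw [pow_two, pow_two]
  exact h2

noncomputable def preφ : Coprod A A →* G :=
  Coprod.lift (zpowersHom G (yG * xG)) (zpowersHom G xG)

lemma preφ_ker : NN ≤ preφ.ker := by
  apply Subgroup.normalClosure_le_normal
  rintro x ⟨c, rfl⟩
  have h1 : preφ (Coprod.inl (mulTwo c) * (Coprod.inr (mulTwo c))⁻¹) =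
      (yG * xG) ^ (Multiplicative.toAdd (mulTwo c)) *
        (xG ^ (Multiplicative.toAdd (mulTwo c)))⁻¹ := by
    simp [preφ, zpowersHom_apply]
  have h2 : Multiplicative.toAdd (mulTwo c) = 2 * (Multiplicative.toAdd c) := by
    rw [mulTwo_apply]
    simp [mul_comm]
  have h3 : (yG * xG) ^ (2 * (Multiplicative.toAdd c)) = xG ^ (2 * (Multiplicative.toAdd c)) := by
    rw [zpow_mul, zpow_mul]
    norm_cast
  simp only [MonoidHom.mem_ker, SetLike.mem_coe]
  rw [h1, h2, h3]
  exact mul_inv_cancel _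

noncomputable def φ : K →* G := QuotientGroup.lift NN preφ preφ_ker

lemma φ_π_inl (z : A) : φ (π (Coprod.inl z)) = (yG * xG) ^ (Multiplicative.toAdd z) := by
  show QuotientGroup.lift NN preφ preφ_ker ((QuotientGroup.mk' NN) (Coprod.inl z)) = _
  rw [QuotientGroup.mk'_apply, QuotientGroup.lift_mk']
  simp [preφ, zpowersHom_apply]

lemma φ_π_inr (z : A) : φ (π (Coprod.inr z)) = xG ^ (Multiplicative.toAdd z) := by
  show QuotientGroup.lift NN preφ preφ_ker ((QuotientGroup.mk' NN) (Coprod.inr z)) = _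
  rw [QuotientGroup.mk'_apply, QuotientGroup.lift_mk']
  simp [preφ, zpowersHom_apply]

lemma φ_aK : φ aK = yG * xG := by
  rw [aK, φ_π_inl]
  simp [u]

lemma φ_bK : φ bK = xG := by
  rw [bK, φ_π_inr]
  simp [u]

noncomputable def abK : K := aK * bK⁻¹

lemma conj_abK : bK * abK * bK⁻¹ = abK⁻¹ := by
  have h1 : bK * abK * bK⁻¹ = bK * aK * (bK ^ 2)⁻¹ := by
    rw [abK]; group
  rw [h1, ← relsq]
  rw [abK]; group

lemma conj_abK' : bK⁻¹ * abK * (bK⁻¹)⁻¹ = abK⁻¹ := by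
  have h1 : bK⁻¹ * abK⁻¹ * bK = abK := by
    have h2 : abK⁻¹ = bK * abK * bK⁻¹ := conj_abK.symm
    rw [h2]; group
  have := congrArg (·⁻¹) h1
  simp only [mul_inv_rev, inv_inv] at this
  rw [← this]; group

lemma iota_succ (k : ℤ) : (ι ^ (k+1)) u = ((ι ^ k) u)⁻¹ := by
  rw [zpow_add_one, MulAut.mul_apply]
  show (ι ^ k) (u⁻¹) = _
  exact map_inv _ _

lemma iota_pred (k : ℤ) : (ι ^ (k-1)) u = ((ι ^ k) u)⁻¹ := by
  have hinv : ∀ z : A, ι⁻¹ z = z⁻¹ := by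
    intro z
    have h1 : ι (ι⁻¹ z) = z := ι.apply_symm_apply z
    have h2 : ι (z⁻¹) = z := by show (z⁻¹)⁻¹ = z; group
    exact ι.injective (by rw [h1, h2])
  rw [sub_eq_add_neg, zpow_add, zpow_neg_one, MulAut.mul_apply, hinv u]
  exact map_inv _ _

lemma conj_zpow_abK : ∀ k : ℤ, bK ^ k * abK * (bK ^ k)⁻¹ =
    abK ^ (Multiplicative.toAdd ((ι ^ k) u)) := by
  intro k
  induction k using Int.induction_on with
  | zero => simp [u]
  | succ n ih =>
      have e1 : bK ^ ((n:ℤ)+1) * abK * (bK ^ ((n:ℤ)+1))⁻¹ =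
          bK * (bK ^ (n:ℤ) * abK * (bK ^ (n:ℤ))⁻¹) * bK⁻¹ := by group
      rw [e1, ih, ← conj_zpow, conj_abK, inv_zpow, ← zpow_neg, iota_succ]
      simp
  | pred n ih =>
      have e1 : bK ^ (-(n:ℤ)-1) * abK * (bK ^ (-(n:ℤ)-1))⁻¹ =
          bK⁻¹ * (bK ^ (-(n:ℤ)) * abK * (bK ^ (-(n:ℤ)))⁻¹) * (bK⁻¹)⁻¹ := by group
      rw [e1, ih, ← conj_zpow, conj_abK', inv_zpow, ← zpow_neg, iota_pred]
      simp

noncomputable def σ : G →* K :=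
  SemidirectProduct.lift (zpowersHom K abK) (zpowersHom K bK) (by
    intro g
    apply MonoidHom.ext_mint
    simp only [MonoidHom.comp_apply, MulEquiv.coe_toMonoidHom, zpowersHom_apply, MulAut.conj_apply]
    have hract : (ract g) (Multiplicative.ofAdd 1) = (ι ^ (Multiplicative.toAdd g)) u := by
      have : ract g = ι ^ (Multiplicative.toAdd g) := by simp [ract, zpowersHom_apply]
      rw [this]; rfl
    rw [hract, ← conj_zpow_abK]
    norm_num)

lemma σ_inl (z : A) : σ (SemidirectProduct.inl z) = abK ^ (Multiplicative.toAdd z) := by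
  rw [σ, SemidirectProduct.lift_inl]
  simp [zpowersHom_apply]

lemma σ_inr (z : A) : σ (SemidirectProduct.inr z) = bK ^ (Multiplicative.toAdd z) := by
  rw [σ, SemidirectProduct.lift_inr]
  simp [zpowersHom_apply]

lemma σ_φ_aK : σ (φ aK) = aK := by
  rw [φ_aK, map_mul]
  show σ (SemidirectProduct.inl u) * σ (SemidirectProduct.inr u) = aK
  rw [σ_inl, σ_inr]
  simp [u, abK]

lemma σ_φ_bK : σ (φ bK) = bK := by
  rw [φ_bK]
  show σ (SemidirectProduct.inr u) = bK
  rw [σ_inr]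
  simp [u]

lemma σ_φ_π : ∀ w : Coprod A A, σ (φ (π w)) = π w := by
  intro w
  induction w using Coprod.induction_on with
  | inl m =>
      rw [φ_π_inl, map_zpow, map_mul]
      show (σ (SemidirectProduct.inl u) * σ (SemidirectProduct.inr u)) ^ _ = _
      rw [σ_inl, σ_inr]
      simp only [u, toAdd_ofAdd, zpow_one, abK]
      rw [inv_mul_cancel_right]
      show aK ^ (Multiplicative.toAdd m) = π (Coprod.inl m)
      rw [aK, ← map_zpow, ← map_zpow]
      have hu : u ^ (Multiplicative.toAdd m) = m := by
        rw [show u = Multiplicative.ofAdd (1:ℤ) from rfl, ← ofAdd_zsmul]; simp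
      rw [hu]
  | inr m =>
      rw [φ_π_inr, map_zpow, show xG = SemidirectProduct.inr u from rfl, σ_inr]
      show bK ^ (Multiplicative.toAdd m) = π (Coprod.inr m)
      rw [bK, ← map_zpow, ← map_zpow]
      have hu : u ^ (Multiplicative.toAdd m) = m := by
        rw [show u = Multiplicative.ofAdd (1:ℤ) from rfl, ← ofAdd_zsmul]; simp
      rw [hu]
  | mul x y hx hy =>
      rw [map_mul, map_mul, map_mul, hx, hy]

lemma σ_φ (g : K) : σ (φ g) = g := by
  obtain ⟨w, rfl⟩ := QuotientGroup.mk'_surjective NN g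
  exact σ_φ_π w

lemma φ_injective : Function.Injective φ :=
  Function.LeftInverse.injective σ_φ

/-- integer coordinates on `K` -/
noncomputable def coords (g : K) : ℤ × ℤ :=
  (Multiplicative.toAdd (φ g).left, Multiplicative.toAdd (φ g).right)

noncomputable def invK (p : ℤ × ℤ) : K := abK ^ p.1 * bK ^ p.2

lemma φ_abK : φ abK = SemidirectProduct.inl u := by
  rw [abK, map_mul, map_inv, φ_aK, φ_bK]
  rw [mul_inv_cancel_right]
  rfl

lemma φ_invK (p : ℤ × ℤ) :
    φ (invK p) = SemidirectProduct.inl (Multiplicative.ofAdd p.1) *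
      SemidirectProduct.inr (Multiplicative.ofAdd p.2) := by
  rw [invK, map_mul, map_zpow, map_zpow, φ_abK, φ_bK, xG, ← map_zpow, ← map_zpow]
  congr 2 <;> · rw [show u = Multiplicative.ofAdd (1:ℤ) from rfl, ← ofAdd_zsmul]; simp

lemma left_inl_inr (z w : A) :
    (SemidirectProduct.inl (φ := ract) z * SemidirectProduct.inr w).left = z ∧
    (SemidirectProduct.inl (φ := ract) z * SemidirectProduct.inr w).right = w := by
  constructor
  · rw [SemidirectProduct.mul_left]
    simp
  · rw [SemidirectProduct.mul_right]
    simp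

lemma coords_invK (p : ℤ × ℤ) : coords (invK p) = p := by
  rw [coords, φ_invK]
  rw [(left_inl_inr _ _).1, (left_inl_inr _ _).2]
  simp

lemma invK_coords (g : K) : invK (coords g) = g := by
  apply φ_injective
  rw [φ_invK]
  simp only [coords, ofAdd_toAdd]
  exact SemidirectProduct.inl_left_mul_inr_right (φ g)

lemma coords_one : coords 1 = (0, 0) := by
  unfold coords
  rw [map_one]
  rfl

/-- the ℓ¹ size of the coordinates -/
noncomputable def N1 (g : K) : ℕ := (coords g).1.natAbs + (coords g).2.natAbs

lemma N1_one : N1 1 = 0 := by rw [N1, coords_one]; rfl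

lemma N1_mul (g h : K) : N1 (g * h) ≤ N1 g + N1 h := by
  have h2 : (coords (g*h)).2 = (coords g).2 + (coords h).2 := by
    unfold coords
    rw [map_mul, SemidirectProduct.mul_right, toAdd_mul]
  have h1 : (coords (g*h)).1 = (coords g).1 +
      Multiplicative.toAdd ((ract (φ g).right) (φ h).left) := by
    unfold coords
    rw [map_mul, SemidirectProduct.mul_left, toAdd_mul]
  rw [N1, N1, N1, h1, h2]
  have e1 := Int.natAbs_add_le (coords g).1 (Multiplicative.toAdd ((ract (φ g).right) (φ h).left))
  have e2 := Int.natAbs_add_le (coords g).2 (coords h).2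
  have e3 : (Multiplicative.toAdd ((ract (φ g).right) (φ h).left)).natAbs
      = (coords h).1.natAbs := ract_natAbs _ _
  omega

lemma dist_coords (g h : K) :
    |(coords g).1 - (coords h).1| + |(coords g).2 - (coords h).2| = (N1 (g⁻¹ * h) : ℤ) := by
  set z := g⁻¹ * h with hz
  have hgh : h = g * z := by rw [hz, mul_inv_cancel_left]
  have h2 : (coords h).2 = (coords g).2 + (coords z).2 := by
    rw [hgh]; unfold coords
    rw [map_mul, SemidirectProduct.mul_right, toAdd_mul]
  obtain ⟨t, ht, habs⟩ : ∃ t : ℤ, (coords h).1 = (coords g).1 + t ∧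
      t.natAbs = (coords z).1.natAbs := by
    refine ⟨Multiplicative.toAdd ((ract (φ g).right) (φ z).left), ?_, ract_natAbs _ _⟩
    rw [hgh]; unfold coords
    rw [map_mul, SemidirectProduct.mul_left, toAdd_mul]
  rw [N1, ht, h2,
    show (coords g).1 - ((coords g).1 + t) = -t by ring,
    show (coords g).2 - ((coords g).2 + (coords z).2) = -(coords z).2 by ring,
    abs_neg, abs_neg, Int.abs_eq_natAbs, Int.abs_eq_natAbs, habs]
  push_cast
  ring

section Word

variable (S : Finset K)

noncomputable def len (g : K) : ℕ := wordDist (S : Set K) 1 g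

lemma len_eq (g : K) : len S g =
    sInf {n : ℕ | ∃ l : List K, l.length = n ∧ (∀ s ∈ l, s ∈ (S:Set K)) ∧ l.prod = g} := by
  unfold len wordDist
  simp only [inv_one, one_mul]

lemma wordDist_len (g h : K) : wordDist (S:Set K) g h = len S (g⁻¹ * h) := by
  rw [len_eq]
  unfold wordDist
  rfl

variable (hgen : Subgroup.closure (S : Set K) = ⊤) (hsym : ∀ s ∈ S, s⁻¹ ∈ S)

include hgen hsym

lemma exists_word (g : K) : ∃ l : List K, (∀ s ∈ l, s ∈ (S : Set K)) ∧ l.prod = g := by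
  have hW : ∀ g ∈ Subgroup.closure (S : Set K),
      ∃ l : List K, (∀ s ∈ l, s ∈ (S : Set K)) ∧ l.prod = g := by
    intro g hg
    induction hg using Subgroup.closure_induction with
    | mem s hs =>
        refine ⟨[s], ?_, by simp⟩
        intro t ht
        rw [List.mem_singleton] at ht
        subst ht
        exact hs
    | one => exact ⟨[], by simp⟩
    | mul x y hx hy ihx ihy =>
        obtain ⟨l1, hm1, hp1⟩ := ihx
        obtain ⟨l2, hm2, hp2⟩ := ihy
        exact ⟨l1 ++ l2, by
          constructor
          · intro s hs
            rcases List.mem_append.mp hs with h | h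
            · exact hm1 s h
            · exact hm2 s h
          · rw [List.prod_append, hp1, hp2]⟩
    | inv x hx ihx =>
        obtain ⟨l, hm, hp⟩ := ihx
        refine ⟨(l.map (fun a => a⁻¹)).reverse, ?_, ?_⟩
        · intro s hs
          rw [List.mem_reverse, List.mem_map] at hs
          obtain ⟨a, ha, rfl⟩ := hs
          exact hsym a (hm a ha)
        · rw [← List.prod_inv_reverse, hp]
  exact hW g (by rw [hgen]; trivial)

lemma len_set_nonempty (g : K) :
    {n : ℕ | ∃ l : List K, l.length = n ∧ (∀ s ∈ l, s ∈ (S:Set K)) ∧ l.prod = g}.Nonempty := by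
  obtain ⟨l, hm, hp⟩ := exists_word S hgen hsym g
  exact ⟨l.length, l, rfl, hm, hp⟩

lemma len_spec (g : K) : ∃ l : List K, l.length = len S g ∧
    (∀ s ∈ l, s ∈ (S:Set K)) ∧ l.prod = g := by
  rw [len_eq]
  exact Nat.sInf_mem (len_set_nonempty S hgen hsym g)

omit hgen hsym in
lemma len_le (g : K) (l : List K) (hm : ∀ s ∈ l, s ∈ (S:Set K)) (hp : l.prod = g) :
    len S g ≤ l.length := by
  rw [len_eq]
  exact Nat.sInf_le ⟨l, rfl, hm, hp⟩

lemma len_mul (g h : K) : len S (g * h) ≤ len S g + len S h := by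
  obtain ⟨l1, hl1, hm1, hp1⟩ := len_spec S hgen hsym g
  obtain ⟨l2, hl2, hm2, hp2⟩ := len_spec S hgen hsym h
  have := len_le S (g*h) (l1 ++ l2) (by
    intro s hs
    rcases List.mem_append.mp hs with h | h
    · exact hm1 s h
    · exact hm2 s h) (by rw [List.prod_append, hp1, hp2])
  rwa [List.length_append, hl1, hl2] at this

lemma len_inv (g : K) : len S g⁻¹ ≤ len S g := by
  obtain ⟨l, hl, hm, hp⟩ := len_spec S hgen hsym g
  have := len_le S g⁻¹ ((l.map (fun a => a⁻¹)).reverse) (by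
    intro s hs
    rw [List.mem_reverse, List.mem_map] at hs
    obtain ⟨a, ha, rfl⟩ := hs
    exact hsym a (hm a ha)) (by rw [← List.prod_inv_reverse, hp])
  simpa [hl] using this

lemma len_pow (g : K) (n : ℕ) : len S (g ^ n) ≤ n * len S g := by
  induction n with
  | zero =>
      simp only [pow_zero, Nat.zero_mul, Nat.le_zero]
      have := len_le S 1 [] (by simp) (by simp)
      simpa using this
  | succ n ih =>
      rw [pow_succ]
      calc len S (g^n * g) ≤ len S (g^n) + len S g := len_mul S hgen hsym _ _
        _ ≤ n * len S g + len S g := by omega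
        _ = (n+1) * len S g := by ring

lemma len_zpow (g : K) (k : ℤ) : len S (g ^ k) ≤ k.natAbs * len S g := by
  rcases Int.natAbs_eq k with hk | hk
  · conv_lhs => rw [hk, zpow_natCast]
    exact len_pow S hgen hsym g _
  · conv_lhs => rw [hk, zpow_neg, zpow_natCast]
    exact le_trans (len_inv S hgen hsym _) (len_pow S hgen hsym g _)

/-- constant for the upper Lipschitz bound -/
noncomputable def L0 : ℕ := len S abK + len S bK

lemma Q2 (g : K) : len S g ≤ L0 S * N1 g := by
  conv_lhs => rw [← invK_coords g]
  rw [invK]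
  calc len S (abK ^ (coords g).1 * bK ^ (coords g).2)
      ≤ len S (abK ^ (coords g).1) + len S (bK ^ (coords g).2) := len_mul S hgen hsym _ _
    _ ≤ (coords g).1.natAbs * len S abK + (coords g).2.natAbs * len S bK :=
        Nat.add_le_add (len_zpow S hgen hsym abK (coords g).1)
          (len_zpow S hgen hsym bK (coords g).2)
    _ ≤ L0 S * N1 g := by
        rw [L0, N1]
        have e1 : (coords g).1.natAbs * len S abK ≤
            ((coords g).1.natAbs + (coords g).2.natAbs) * len S abK :=
          Nat.mul_le_mul_right _ (by omega)
        have e2 : (coords g).2.natAbs * len S bK ≤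
            ((coords g).1.natAbs + (coords g).2.natAbs) * len S bK :=
          Nat.mul_le_mul_right _ (by omega)
        calc (coords g).1.natAbs * len S abK + (coords g).2.natAbs * len S bK
            ≤ ((coords g).1.natAbs + (coords g).2.natAbs) * len S abK +
              ((coords g).1.natAbs + (coords g).2.natAbs) * len S bK := Nat.add_le_add e1 e2
          _ = (len S abK + len S bK) * ((coords g).1.natAbs + (coords g).2.natAbs) := by ring

/-- constant for the lower Lipschitz bound -/
noncomputable def C0 : ℕ := S.sup N1

omit hgen hsym in
lemma N1_prod (l : List K) (hm : ∀ s ∈ l, s ∈ (S : Set K)) :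
    N1 l.prod ≤ l.length * C0 S := by
  induction l with
  | nil => simp [N1_one]
  | cons a l ih =>
      rw [List.prod_cons]
      have h1 : N1 a ≤ C0 S := Finset.le_sup (hm a List.mem_cons_self)
      have h2 := ih (fun s hs => hm s (List.mem_cons_of_mem a hs))
      calc N1 (a * l.prod) ≤ N1 a + N1 l.prod := N1_mul a l.prod
        _ ≤ C0 S + l.length * C0 S := by omega
        _ = (a :: l).length * C0 S := by rw [List.length_cons]; ring

lemma Q1 (g : K) : N1 g ≤ C0 S * len S g := by
  obtain ⟨l, hl, hm, hp⟩ := len_spec S hgen hsym g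
  have h1 : N1 g = N1 l.prod := by rw [hp]
  rw [h1]
  calc N1 l.prod ≤ l.length * C0 S := N1_prod S l hm
    _ = C0 S * len S g := by rw [hl]; ring

end Word

end KB

/-- Let `A = B = C = ℤ` and let both inclusions `C → A` and `C → B` be multiplication
by 2. Then `asdim (A ∗_C B) = 2` (for any word metric): `asdim ≤ 2` but not `≤ 1`.
In particular the bound `asdim ≤ max {asdim of the vertex groups} + 1` for amalgamated
products is sharp. -/
theorem asdim_klein_bottle_group_eq_two :
    ∀ S : Finset (AmalgamatedProduct mulTwo mulTwo),
      Subgroup.closure (S : Set (AmalgamatedProduct mulTwo mulTwo)) = ⊤ →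
      (∀ s ∈ S, s⁻¹ ∈ S) →
      ASDimLEdist
        (fun a b : AmalgamatedProduct mulTwo mulTwo =>
          (wordDist (S : Set (AmalgamatedProduct mulTwo mulTwo)) a b : ℝ)) 2 ∧
      ¬ ASDimLEdist
        (fun a b : AmalgamatedProduct mulTwo mulTwo =>
          (wordDist (S : Set (AmalgamatedProduct mulTwo mulTwo)) a b : ℝ)) 1 := by
  intro S hgen hsym
  have hQ1 : ∀ g h : AmalgamatedProduct mulTwo mulTwo,
      dist2 (KB.coords g) (KB.coords h) ≤ ((KB.C0 S + 1 : ℕ) : ℝ) *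
        (wordDist (S : Set (AmalgamatedProduct mulTwo mulTwo)) g h : ℝ) := by
    intro g h
    have e : dist2 (KB.coords g) (KB.coords h) = ((KB.N1 (g⁻¹ * h) : ℕ) : ℝ) := by
      unfold dist2
      rw [KB.dist_coords]
      push_cast
      ring
    rw [e, KB.wordDist_len S g h]
    have hq := KB.Q1 S hgen hsym (g⁻¹ * h)
    have hq2 : KB.N1 (g⁻¹ * h) ≤ (KB.C0 S + 1) * KB.len S (g⁻¹ * h) :=
      le_trans hq (Nat.mul_le_mul_right _ (Nat.le_succ _))
    exact_mod_cast hq2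
  have hQ2 : ∀ g h : AmalgamatedProduct mulTwo mulTwo,
      (wordDist (S : Set (AmalgamatedProduct mulTwo mulTwo)) g h : ℝ) ≤
        ((KB.L0 S + 1 : ℕ) : ℝ) * dist2 (KB.coords g) (KB.coords h) := by
    intro g h
    have e : dist2 (KB.coords g) (KB.coords h) = ((KB.N1 (g⁻¹ * h) : ℕ) : ℝ) := by
      unfold dist2
      rw [KB.dist_coords]
      push_cast
      ring
    rw [e, KB.wordDist_len S g h]
    have hq := KB.Q2 S hgen hsym (g⁻¹ * h)
    have hq2 : KB.len S (g⁻¹ * h) ≤ (KB.L0 S + 1) * KB.N1 (g⁻¹ * h) :=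
      le_trans hq (Nat.mul_le_mul_right _ (Nat.le_succ _))
    exact_mod_cast hq2
  have hCpos : (0:ℝ) < ((KB.C0 S + 1 : ℕ) : ℝ) := by positivity
  have hLpos : (0:ℝ) < ((KB.L0 S + 1 : ℕ) : ℝ) := by positivity
  constructor
  · exact asdim_pullback _ dist2 KB.coords ((KB.C0 S + 1 : ℕ) : ℝ) ((KB.L0 S + 1 : ℕ) : ℝ)
      hCpos hLpos.le hQ2 hQ1 2 asdim_Z2_le_two
  · intro hcon
    apply not_asdim_Z2_le_one
    refine asdim_pullback dist2 _ KB.invK ((KB.L0 S + 1 : ℕ) : ℝ) ((KB.C0 S + 1 : ℕ) : ℝ)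
      hLpos hCpos.le ?_ ?_ 1 hcon
    · intro p q
      have h := hQ1 (KB.invK p) (KB.invK q)
      rwa [KB.coords_invK, KB.coords_invK] at h
    · intro p q
      have h := hQ2 (KB.invK p) (KB.invK q)
      rwa [KB.coords_invK, KB.coords_invK] at h
end
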